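/- arXiv:2412.02584 — 4 statements merged into one kernel-verified Lean document; each statement's English description precedes it below -/
import Mathlib

section
/- Let π = a₁a₂…a_n be a permutation of [n]. Suppose that for some indices 1 ≤ i < j ≤ n we have {a_{i+1},…,a_{j−1}} ∩ ]m,M[ = ∅, where m = min(a_i, a_j) and M = max(a_i, a_j), and that there exists a permutation π′ of [n] with π′ ≡ π in which a_j appears to the left of a_i. Then the fence f(m, M, L) belongs to 𝓕, where L = {a₁,…,a_{i−1}} ∩ ]m,M[. -/
/-!
Lattice congruences of the weak order on `S_n`, encoded via fences.

Permutations of `[n] = {1, …, n}` are modeled as lists of natural numbers (sequences of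
values) that enumerate `Finset.Icc 1 n` without repetition.
-/

/-- A fence, encoded by its defining triple `(a, b, L)`. -/
structure Fence where
  a : ℕ
  b : ℕ
  L : Finset ℕ

/-- The triple `(a, b, L)` is a valid fence datum for `[n]`:
`1 ≤ a < b ≤ n` and `L ⊆ ]a,b[`. -/
def Fence.Valid (n : ℕ) (f : Fence) : Prop :=
  1 ≤ f.a ∧ f.a < f.b ∧ f.b ≤ n ∧ f.L ⊆ Finset.Ioo f.a f.b

/-- The forcing order on fences: `f' ⪯ f` iff `f'.a ≤ f.a < f.b ≤ f'.b` and
`f'.L ∩ ]f.a, f.b[ = f.L`. -/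
def Fence.Forces (f' f : Fence) : Prop :=
  f'.a ≤ f.a ∧ f.b ≤ f'.b ∧ f'.L ∩ Finset.Ioo f.a f.b = f.L

/-- `𝓕` is a downset of the forcing order on valid fences for `[n]`. -/
def IsFenceDownset (n : ℕ) (𝓕 : Set Fence) : Prop :=
  (∀ f ∈ 𝓕, f.Valid n) ∧
  ∀ f ∈ 𝓕, ∀ f' : Fence, f'.Valid n → f'.Forces f → f' ∈ 𝓕

/-- The unordered pair `{π₁, π₂}` belongs to the fence `f = f(a, b, L)`: `π₂` is obtained
from `π₁` by transposing two adjacent entries equal to `a` and `b`, every element of `L`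
occurs to the left of those entries, and every element of `]a,b[ ∖ L` occurs to their
right. -/
def FenceRel (f : Fence) (π₁ π₂ : List ℕ) : Prop :=
  ∃ u w : List ℕ,
    ((π₁ = u ++ f.a :: f.b :: w ∧ π₂ = u ++ f.b :: f.a :: w) ∨
     (π₁ = u ++ f.b :: f.a :: w ∧ π₂ = u ++ f.a :: f.b :: w)) ∧
    (∀ x ∈ f.L, x ∈ u) ∧
    (∀ x ∈ Finset.Ioo f.a f.b, x ∉ f.L → x ∈ w)

/-- The equivalence relation `≡` on permutations generated by the pairs belonging to some
fence in `𝓕`. -/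
def PermEquiv (𝓕 : Set Fence) : List ℕ → List ℕ → Prop :=
  Relation.EqvGen (fun π₁ π₂ => ∃ f ∈ 𝓕, FenceRel f π₁ π₂)

/-- `l` is (the list of values of) a permutation of `[n]`. -/
def IsPermList (n : ℕ) (l : List ℕ) : Prop :=
  l.Nodup ∧ ∀ x : ℕ, x ∈ l ↔ x ∈ Finset.Icc 1 n

/-- The restriction `≡*` of `≡` to permutations of `[n−1]`:
`σ ≡* π` iff `σ·n ≡ π·n`. -/
def PermEquivStar (n : ℕ) (𝓕 : Set Fence) (σ π : List ℕ) : Prop :=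
  PermEquiv 𝓕 (σ ++ [n]) (π ++ [n])

/-- `P` is an ordered set partition with ground set `S`: a list of nonempty pairwise
disjoint finsets whose union is `S`. -/
def IsOSP (S : Finset ℕ) (P : List (Finset ℕ)) : Prop :=
  (∀ B ∈ P, B.Nonempty) ∧ P.Pairwise Disjoint ∧ ∀ x : ℕ, x ∈ S ↔ ∃ B ∈ P, x ∈ B

/-- `l` is one of the permutations identified with the ordered set partition `P`: a
concatenation of enumerations of the blocks of `P`, in order. -/
def Linearizes (l : List ℕ) (P : List (Finset ℕ)) : Prop :=
  ∃ ls : List (List ℕ), l = ls.flatten ∧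
    List.Forall₂ (fun (xs : List ℕ) (B : Finset ℕ) => xs.Nodup ∧ ∀ x : ℕ, x ∈ xs ↔ x ∈ B)
      ls P

/-- Equivalence of ordered set partitions relative to an equivalence `E` on permutations:
every permutation in one is `E`-equivalent to some permutation in the other, and vice
versa. -/
def OSPEquivRel (E : List ℕ → List ℕ → Prop) (P Q : List (Finset ℕ)) : Prop :=
  (∀ l, Linearizes l P → ∃ m, Linearizes m Q ∧ E l m) ∧
  (∀ m, Linearizes m Q → ∃ l, Linearizes l P ∧ E l m)

/-- Equivalence of ordered set partitions of `[n]` under `≡`. -/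
def OSPEquiv (𝓕 : Set Fence) : List (Finset ℕ) → List (Finset ℕ) → Prop :=
  OSPEquivRel (PermEquiv 𝓕)

/-- Equivalence of ordered set partitions of `[n−1]` under the restriction `≡*`. -/
def OSPEquivStar (n : ℕ) (𝓕 : Set Fence) : List (Finset ℕ) → List (Finset ℕ) → Prop :=
  OSPEquivRel (PermEquivStar n 𝓕)

/-- `P` is stable (w.r.t. the ground set `S` and the congruence `≡` given by `𝓕`):
every ordered set partition of `S` equivalent to `P` has at most as many blocks. -/
def StableOSP (𝓕 : Set Fence) (S : Finset ℕ) (P : List (Finset ℕ)) : Prop :=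
  ∀ Q, IsOSP S Q → OSPEquiv 𝓕 P Q → Q.length ≤ P.length

/-- `P` is stable under the restriction `≡*` (as an ordered set partition of `[n−1]`). -/
def StableOSPStar (n : ℕ) (𝓕 : Set Fence) (P : List (Finset ℕ)) : Prop :=
  ∀ Q, IsOSP (Finset.Icc 1 (n - 1)) Q → OSPEquivStar n 𝓕 P Q → Q.length ≤ P.length

/-- The union of a list of blocks. -/
def blocksUnion (L : List (Finset ℕ)) : Finset ℕ := L.foldr (· ∪ ·) ∅


private lemma split_three {α : Type*} (s : List α) (e : α) (t : List α) :
    ∀ (s' : List α) (e' : α) (t' : List α), s ++ e :: t = s' ++ e' :: t' →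
    (s = s' ∧ e = e' ∧ t = t') ∨ (∃ mid, s' = s ++ e :: mid ∧ t = mid ++ e' :: t') ∨
      (∃ mid, s = s' ++ e' :: mid ∧ t' = mid ++ e :: t) := by
  induction s with
  | nil =>
    intro s' e' t' h
    cases s' with
    | nil => simp only [List.nil_append, List.cons.injEq] at h; exact Or.inl ⟨rfl, h.1, h.2⟩
    | cons b s' =>
      simp only [List.nil_append, List.cons_append, List.cons.injEq] at h
      exact Or.inr (Or.inl ⟨s', by simp [h.1], h.2⟩)
  | cons a s ih =>
    intro s' e' t' h
    cases s' with
    | nil =>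
      simp only [List.cons_append, List.nil_append, List.cons.injEq] at h
      exact Or.inr (Or.inr ⟨s, by simp [h.1], h.2.symm⟩)
    | cons b s' =>
      simp only [List.cons_append, List.cons.injEq] at h
      obtain ⟨hab, h2⟩ := h
      rcases ih s' e' t' h2 with ⟨h1, h3, h4⟩ | ⟨mid, hm1, hm2⟩ | ⟨mid, hm1, hm2⟩
      · exact Or.inl ⟨by rw [hab, h1], h3, h4⟩
      · exact Or.inr (Or.inl ⟨mid, by rw [hab, hm1]; simp, hm2⟩)
      · exact Or.inr (Or.inr ⟨mid, by rw [hab, hm1]; simp, hm2⟩)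

private lemma not_before_before {l : List ℕ} (hnd : l.Nodup) {a b : ℕ}
    {s t s' t' : List ℕ} (h1 : l = s ++ a :: t) (hb : b ∈ t)
    (h2 : l = s' ++ b :: t') (ha : a ∈ t') : False := by
  subst h1
  rcases split_three s a t s' b t' h2 with ⟨_, rfl, rfl⟩ | ⟨mid, _, rfl⟩ | ⟨mid, rfl, rfl⟩
  · have : a ∉ t := (List.nodup_cons.mp (List.nodup_append.mp hnd).2.1).1
    exact this hb
  · have : a ∉ mid ++ b :: t' := (List.nodup_cons.mp (List.nodup_append.mp hnd).2.1).1
    exact this (by simp [ha])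
  · have hnd' : (s' ++ b :: (mid ++ a :: t)).Nodup := by simpa [List.append_assoc] using hnd
    exact (List.nodup_cons.mp (List.nodup_append.mp hnd').2.1).1
      (List.mem_append_right _ (List.mem_cons_of_mem _ hb))

private lemma endgame (n : ℕ) (𝓕 : Set Fence) (hdown : IsFenceDownset n 𝓕)
    (f : Fence) (hf : f ∈ 𝓕) (m M : ℕ) (u : List ℕ) (L₀ : Finset ℕ)
    (hm1 : 1 ≤ m) (hmM : m < M) (hMn : M ≤ n)
    (hL : u.toFinset ∩ Finset.Ioo m M = L₀)
    (ha : m ≤ f.a) (hb : f.b ≤ M)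
    (hset : u.toFinset ∩ Finset.Ioo f.a f.b = f.L) :
    (⟨m, M, L₀⟩ : Fence) ∈ 𝓕 := by
  apply hdown.2 f hf
  · exact ⟨hm1, hmM, hMn, hL ▸ Finset.inter_subset_right⟩
  · refine ⟨ha, hb, ?_⟩
    show L₀ ∩ Finset.Ioo f.a f.b = f.L
    rw [← hL, ← hset]
    ext s
    simp only [Finset.mem_inter, Finset.mem_Ioo, List.mem_toFinset]
    constructor
    · rintro ⟨⟨hsu, _⟩, h2⟩; exact ⟨hsu, h2⟩
    · rintro ⟨hsu, h2⟩
      exact ⟨⟨hsu, lt_of_le_of_lt ha h2.1, lt_of_lt_of_le h2.2 hb⟩, h2⟩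

private lemma toFinset_swap_inter (p mid : List ℕ) (c d : ℕ) (S : Finset ℕ) :
    ((p ++ d :: c :: mid).toFinset : Finset ℕ) ∩ S = (p ++ c :: d :: mid).toFinset ∩ S := by
  ext s; simp only [Finset.mem_inter, List.mem_toFinset, List.mem_append, List.mem_cons]
  tauto

private lemma toFinset_drop_inter {t : ℕ} {S : Finset ℕ} (ht : t ∉ S) (u : List ℕ) :
    ((u ++ [t]).toFinset : Finset ℕ) ∩ S = u.toFinset ∩ S := by
  ext s
  simp only [Finset.mem_inter, List.mem_toFinset, List.mem_append, List.mem_singleton]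
  constructor
  · rintro ⟨h | rfl, hs⟩
    · exact ⟨h, hs⟩
    · exact absurd hs ht
  · rintro ⟨h, hs⟩; exact ⟨Or.inl h, hs⟩


private lemma step_case (n : ℕ) (𝓕 : Set Fence) (hdown : IsFenceDownset n 𝓕)
    (x y : ℕ) (hm1 : 1 ≤ min x y) (hmM : min x y < max x y) (hMn : max x y ≤ n)
    (f : Fence) (hf : f ∈ 𝓕)
    (p q : List ℕ) (c d : ℕ)
    (hcd : (c = f.a ∧ d = f.b) ∨ (c = f.b ∧ d = f.a))
    (hfLmem : ∀ s ∈ f.L, s ∈ p)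
    (hfRmem : ∀ s ∈ Finset.Ioo f.a f.b, s ∉ f.L → s ∈ q)
    (u w z : List ℕ) (L₀ : Finset ℕ)
    (hdec : p ++ c :: d :: q = u ++ x :: (w ++ y :: z))
    (hnd : (u ++ x :: (w ++ y :: z)).Nodup)
    (hgap : ∀ t ∈ w, t ∉ Finset.Ioo (min x y) (max x y))
    (hL : u.toFinset ∩ Finset.Ioo (min x y) (max x y) = L₀)
    (ih : ∀ (u' w' z' : List ℕ) (L' : Finset ℕ),
        p ++ d :: c :: q = u' ++ x :: (w' ++ y :: z') →
        (∀ t ∈ w', t ∉ Finset.Ioo (min x y) (max x y)) →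
        u'.toFinset ∩ Finset.Ioo (min x y) (max x y) = L' →
        (⟨min x y, max x y, L'⟩ : Fence) ∈ 𝓕) :
    (⟨min x y, max x y, L₀⟩ : Fence) ∈ 𝓕 := by
  have hfval : f.Valid n := hdown.1 f hf
  have hfLIoo : f.L ⊆ Finset.Ioo f.a f.b := hfval.2.2.2
  have hxm : min x y ≤ x := min_le_left x y
  have hxM : x ≤ max x y := le_max_left x y
  have hym : min x y ≤ y := min_le_right x y
  have hyM : y ≤ max x y := le_max_right x y
  have hxIoo : x ∉ Finset.Ioo (min x y) (max x y) := by
    simp only [Finset.mem_Ioo]; omega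
  have hyIoo : y ∉ Finset.Ioo (min x y) (max x y) := by
    simp only [Finset.mem_Ioo]; omega
  have hdisj : u.Disjoint (x :: (w ++ y :: z)) := List.disjoint_of_nodup_append hnd
  rcases split_three u x (w ++ y :: z) p c (d :: q) hdec.symm with
    ⟨rfl, rfl, h3⟩ | ⟨mid, h1, h2⟩ | ⟨mid, h1, h2⟩
  · -- u = p, x = c
    cases w with
    | nil =>
      -- pair (x, y): case A
      simp only [List.nil_append, List.cons.injEq] at h3
      obtain ⟨rfl, rfl⟩ := h3
      apply endgame n 𝓕 hdown f hf _ _ u L₀ hm1 hmM hMn hL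
      · rcases hcd with ⟨h1, h2⟩ | ⟨h1, h2⟩ <;> omega
      · rcases hcd with ⟨h1, h2⟩ | ⟨h1, h2⟩ <;> omega
      · ext s
        simp only [Finset.mem_inter, List.mem_toFinset]
        constructor
        · rintro ⟨hsu, hsIoo⟩
          by_contra hsL
          exact hdisj hsu (by simpa using Or.inr (Or.inr (hfRmem s hsIoo hsL)))
        · intro hsL
          exact ⟨hfLmem s hsL, hfLIoo hsL⟩
    | cons t w' =>
      -- pair (x, t), t ∈ w, so t ∉ Ioo: IH
      simp only [List.cons_append, List.cons.injEq] at h3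
      obtain ⟨rfl, rfl⟩ := h3
      exact ih (u ++ [t]) w' z L₀ (by simp) (fun s hs => hgap s (List.mem_cons_of_mem _ hs))
        (by rw [toFinset_drop_inter (hgap t List.mem_cons_self) u, hL])
  · -- p = u ++ x :: mid, pair inside w ++ y :: z
    rcases split_three w y z mid c (d :: q) h2 with
      ⟨rfl, rfl, h4⟩ | ⟨mid2, g1, g2⟩ | ⟨mid2, g1, g2⟩
    · -- pair (y, d), z = d :: q
      subst h1 h4
      by_cases hdIoo : d ∈ Finset.Ioo (min x y) (max x y)
      · -- endgame B2
        have hdm : min x y < d ∧ d < max x y := Finset.mem_Ioo.mp hdIoo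
        apply endgame n 𝓕 hdown f hf _ _ u L₀ hm1 hmM hMn hL
        · rcases hcd with ⟨h1', h2'⟩ | ⟨h1', h2'⟩ <;> omega
        · rcases hcd with ⟨h1', h2'⟩ | ⟨h1', h2'⟩ <;> omega
        · have haIoo : min x y ≤ f.a ∧ f.b ≤ max x y := by
            rcases hcd with ⟨h1', h2'⟩ | ⟨h1', h2'⟩ <;> omega
          ext s
          simp only [Finset.mem_inter, List.mem_toFinset]
          constructor
          · rintro ⟨hsu, hsIoo⟩
            by_contra hsL
            exact hdisj hsu (by simpa using Or.inr (Or.inr (Or.inr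
              (List.mem_cons_of_mem _ (hfRmem s hsIoo hsL)))))
          · intro hsL
            have hsIoo := hfLIoo hsL
            have hsmM : s ∈ Finset.Ioo (min x y) (max x y) := by
              simp only [Finset.mem_Ioo] at hsIoo ⊢
              omega
            have hsp := hfLmem s hsL
            simp only [List.mem_append, List.mem_cons] at hsp
            rcases hsp with h | h | h
            · exact ⟨h, hsIoo⟩
            · exact absurd (h ▸ hsmM) hxIoo
            · exact absurd hsmM (hgap s h)
      · -- IH with w ++ [d]
        exact ih u (w ++ [d]) q L₀ (by simp)
          (by
            intro s hs
            rcases List.mem_append.mp hs with h | h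
            · exact hgap s h
            · rwa [List.mem_singleton.mp h])
          hL
    · -- pair inside z
      subst g1 g2 h1
      exact ih u w (mid2 ++ d :: c :: q) L₀ (by simp) hgap hL
    · -- pair inside w (or (w.last, y))
      cases mid2 with
      | nil =>
        -- pair (c, y): c ∈ w
        simp only [List.nil_append, List.cons.injEq] at g2
        obtain ⟨rfl, rfl⟩ := g2
        subst g1 h1
        exact ih u mid (c :: q) L₀ (by simp)
          (fun s hs => hgap s (List.mem_append_left _ hs)) hL
      | cons e mid3 =>
        simp only [List.cons_append, List.cons.injEq] at g2
        obtain ⟨rfl, rfl⟩ := g2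
        subst g1 h1
        exact ih u (mid ++ d :: c :: mid3) z L₀ (by simp)
          (by
            intro s hs
            apply hgap s
            simp only [List.mem_append, List.mem_cons] at hs ⊢
            tauto)
          hL
  · -- u = p ++ c :: mid
    cases mid with
    | nil =>
      -- pair (c, x): u = p ++ [c]
      simp only [List.nil_append, List.cons.injEq] at h2
      obtain ⟨rfl, rfl⟩ := h2
      subst h1
      by_cases hcIoo : c ∈ Finset.Ioo (min d y) (max d y)
      · -- endgame B1
        have hcm : min d y < c ∧ c < max d y := Finset.mem_Ioo.mp hcIoo
        apply endgame n 𝓕 hdown f hf _ _ (p ++ [c]) L₀ hm1 hmM hMn hL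
        · rcases hcd with ⟨h1', h2'⟩ | ⟨h1', h2'⟩ <;> omega
        · rcases hcd with ⟨h1', h2'⟩ | ⟨h1', h2'⟩ <;> omega
        · ext s
          simp only [Finset.mem_inter, List.mem_toFinset]
          constructor
          · rintro ⟨hsu, hsIoo⟩
            by_contra hsL
            exact hdisj hsu (List.mem_cons_of_mem _ (hfRmem s hsIoo hsL))
          · intro hsL
            exact ⟨List.mem_append_left _ (hfLmem s hsL), hfLIoo hsL⟩
      · -- IH with u = p
        exact ih p (c :: w) z L₀ (by simp)
          (by
            intro s hs
            rcases List.mem_cons.mp hs with rfl | h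
            · exact hcIoo
            · exact hgap s h)
          (by rw [← hL]; exact (toFinset_drop_inter hcIoo p).symm)
    | cons e mid3 =>
      -- pair inside u
      simp only [List.cons_append, List.cons.injEq] at h2
      obtain ⟨rfl, rfl⟩ := h2
      subst h1
      exact ih (p ++ d :: c :: mid3) w z L₀ (by simp)
        hgap (by rw [toFinset_swap_inter, hL])


private lemma permEquiv_chain {𝓕 : Set Fence} {l l' : List ℕ} (h : PermEquiv 𝓕 l l') :
    Relation.ReflTransGen (fun π₁ π₂ => ∃ f ∈ 𝓕, FenceRel f π₁ π₂) l l' := by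
  have hsymm : Symmetric (fun π₁ π₂ : List ℕ => ∃ f ∈ 𝓕, FenceRel f π₁ π₂) := by
    rintro a b ⟨f, hf, u, w, hor, hLm, hRm⟩
    exact ⟨f, hf, u, w, by tauto, hLm, hRm⟩
  induction h with
  | rel _ _ h => exact Relation.ReflTransGen.single h
  | refl => exact Relation.ReflTransGen.refl
  | symm a b _ ih => exact (@Relation.ReflTransGen.stdSymm _ _ ⟨hsymm⟩).symm _ _ ih
  | trans _ _ _ _ _ ih1 ih2 => exact ih1.trans ih2

private lemma aux_chain (n : ℕ) (𝓕 : Set Fence) (hdown : IsFenceDownset n 𝓕)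
    (x y : ℕ) (hx1 : 1 ≤ x) (hxn : x ≤ n) (hy1 : 1 ≤ y) (hyn : y ≤ n) (hxy : x ≠ y)
    (π' : List ℕ) (hπ'nd : π'.Nodup)
    (hleft : ∃ u' w' : List ℕ, π' = u' ++ y :: w' ∧ x ∈ w') :
    ∀ π : List ℕ,
      Relation.ReflTransGen (fun π₁ π₂ => ∃ f ∈ 𝓕, FenceRel f π₁ π₂) π π' →
      π.Nodup →
      ∀ (u w z : List ℕ) (L₀ : Finset ℕ),
        π = u ++ x :: (w ++ y :: z) →
        (∀ t ∈ w, t ∉ Finset.Ioo (min x y) (max x y)) →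
        u.toFinset ∩ Finset.Ioo (min x y) (max x y) = L₀ →
        (⟨min x y, max x y, L₀⟩ : Fence) ∈ 𝓕 := by
  have hm1 : 1 ≤ min x y := le_min hx1 hy1
  have hmM : min x y < max x y := min_lt_max.mpr hxy
  have hMn : max x y ≤ n := max_le hxn hyn
  intro π hchain
  induction hchain using Relation.ReflTransGen.head_induction_on with
  | refl =>
    intro hnd u w z L₀ hdec hgap hL
    obtain ⟨u', w', hdec', hxw⟩ := hleft
    exact (not_before_before hπ'nd hdec (by simp) hdec' hxw).elim
  | head hstep hrest ih =>
    intro hnd u w z L₀ hdec hgap hL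
    obtain ⟨f, hf, p, q, hor, hLm, hRm⟩ := hstep
    subst hdec
    rcases hor with ⟨h1, h2⟩ | ⟨h1, h2⟩ <;> subst h2
    · have hσnd : (p ++ f.b :: f.a :: q).Nodup :=
        List.Perm.nodup (List.Perm.append_left p (List.Perm.swap f.b f.a q)) (h1 ▸ hnd)
      exact step_case n 𝓕 hdown x y hm1 hmM hMn f hf p q f.a f.b (Or.inl ⟨rfl, rfl⟩)
        hLm hRm u w z L₀ h1.symm hnd hgap hL
        (fun u' w' z' L' hd hg hl => ih hσnd u' w' z' L' hd hg hl)
    · have hσnd : (p ++ f.a :: f.b :: q).Nodup :=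
        List.Perm.nodup (List.Perm.append_left p (List.Perm.swap f.a f.b q)) (h1 ▸ hnd)
      exact step_case n 𝓕 hdown x y hm1 hmM hMn f hf p q f.b f.a (Or.inr ⟨rfl, rfl⟩)
        hLm hRm u w z L₀ h1.symm hnd hgap hL
        (fun u' w' z' L' hd hg hl => ih hσnd u' w' z' L' hd hg hl)


/-- Lemma: if `π = u ++ x :: (w ++ y :: z)` is a permutation of `[n]` (so `x = a_i`,
`y = a_j` with `i < j`, and `w` is the segment strictly between them), no entry of `w`
lies in the open interval `]min x y, max x y[`, and some permutation `π′ ≡ π` has `y` to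
the left of `x`, then the fence `f(min x y, max x y, {a₁,…,a_{i−1}} ∩ ]min x y, max x y[)`
belongs to `𝓕`. -/
theorem fence_of_inverted_pair (n : ℕ) (𝓕 : Set Fence) (hdown : IsFenceDownset n 𝓕)
    (π : List ℕ) (hπ : IsPermList n π)
    (u w z : List ℕ) (x y : ℕ) (hdecomp : π = u ++ x :: (w ++ y :: z))
    (hgap : ∀ t ∈ w, ¬ (min x y < t ∧ t < max x y))
    (π' : List ℕ) (hπ' : IsPermList n π') (hequiv : PermEquiv 𝓕 π π')
    (hleft : ∃ u' w' : List ℕ, π' = u' ++ y :: w' ∧ x ∈ w') :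
    (⟨min x y, max x y, u.toFinset ∩ Finset.Ioo (min x y) (max x y)⟩ : Fence) ∈ 𝓕 := by
  have hx : x ∈ π := by rw [hdecomp]; simp
  have hy : y ∈ π := by rw [hdecomp]; simp
  have hxI := Finset.mem_Icc.mp ((hπ.2 x).mp hx)
  have hyI := Finset.mem_Icc.mp ((hπ.2 y).mp hy)
  have hxy : x ≠ y := by
    rintro rfl
    have h := hπ.1
    rw [hdecomp] at h
    exact (List.nodup_cons.mp (List.nodup_append.mp h).2.1).1 (by simp)
  exact aux_chain n 𝓕 hdown x y hxI.1 hxI.2 hyI.1 hyI.2 hxy π' hπ'.1 hleft π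
    (permEquiv_chain hequiv) hπ.1 u w z _ hdecomp
    (by intro t ht; simpa [Finset.mem_Ioo] using hgap t ht) rfl
end

section
/- Let F = A₁|…|A_{n−d} be an ordered set partition of [n]. Then F is stable if and only if for every j ∈ [n−d] with |A_j| ≥ 2 and every pair of consecutive elements x < y of A_j, the fence f(x, y, ]x,y[ ∩ (A₁∪…∪A_{j−1})) does not belong to 𝓕. -/
/-- `p` occurs strictly before `q` in the list `π`. -/
def Before (π : List ℕ) (p q : ℕ) : Prop :=
  ∃ l₁ l₂ : List ℕ, π = l₁ ++ l₂ ∧ p ∈ l₁ ∧ q ∈ l₂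

lemma before_of_mem {l₁ l₂ : List ℕ} {p q : ℕ} (hp : p ∈ l₁) (hq : q ∈ l₂) :
    Before (l₁ ++ l₂) p q := ⟨l₁, l₂, rfl, hp, hq⟩

lemma Before.asymm {π : List ℕ} {p q : ℕ} (h : π.Nodup) (h1 : Before π p q)
    (h2 : Before π q p) : False := by
  obtain ⟨l₁, l₂, rfl, hp, hq⟩ := h1
  obtain ⟨m₁, m₂, he, hq', hp'⟩ := h2
  rcases List.append_eq_append_iff.1 he with ⟨a, ha1, ha2⟩ | ⟨c, hc1, hc2⟩
  · subst ha1; subst ha2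
    rw [← List.append_assoc] at h
    exact (List.disjoint_of_nodup_append h) (List.mem_append_left _ hp) hp'
  · subst hc1; subst hc2
    exact (List.disjoint_of_nodup_append h) (List.mem_append_left _ hq') hq

lemma before_cons {t : List ℕ} {c p q : ℕ} (h : Before t p q) : Before (c :: t) p q := by
  obtain ⟨l₁, l₂, rfl, hp, hq⟩ := h
  exact ⟨c :: l₁, l₂, rfl, List.mem_cons_of_mem _ hp, hq⟩

lemma before_total {π : List ℕ} {p q : ℕ} (hp : p ∈ π) (hq : q ∈ π) (hne : p ≠ q) :
    Before π p q ∨ Before π q p := by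
  induction π with
  | nil => cases hp
  | cons c t ih =>
    by_cases hpc : p = c
    · subst hpc
      left
      refine ⟨[p], t, rfl, List.mem_singleton_self _, ?_⟩
      rcases List.mem_cons.1 hq with h | h
      · exact absurd h.symm hne
      · exact h
    · by_cases hqc : q = c
      · subst hqc
        right
        refine ⟨[q], t, rfl, List.mem_singleton_self _, ?_⟩
        rcases List.mem_cons.1 hp with h | h
        · exact absurd h hpc
        · exact h
      · rcases List.mem_cons.1 hp with h | h
        · exact absurd h hpc
        · rcases List.mem_cons.1 hq with h' | h'
          · exact absurd h' hqc
          · exact (ih h h').imp before_cons before_cons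

lemma before_swap {u w : List ℕ} {a b p q : ℕ} (h1 : ¬(p = a ∧ q = b))
    (h : Before (u ++ a :: b :: w) p q) : Before (u ++ b :: a :: w) p q := by
  obtain ⟨l₁, l₂, he, hp, hq⟩ := h
  rcases List.append_eq_append_iff.1 he.symm with ⟨t, htu, hl₂⟩ | ⟨t, hl₁, hcd⟩
  · -- u = l₁ ++ t, l₂ = t ++ a :: b :: w   (split inside u)
    refine ⟨l₁, t ++ b :: a :: w, by rw [htu]; simp, hp, ?_⟩
    rw [hl₂] at hq
    simp only [List.mem_append, List.mem_cons] at hq ⊢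
    tauto
  · -- l₁ = u ++ t, a :: b :: w = t ++ l₂
    subst hl₁
    rcases t with _ | ⟨a₀, t₂⟩
    · simp only [List.nil_append] at hcd
      refine ⟨u, b :: a :: w, rfl, by simpa using hp, ?_⟩
      rw [← hcd] at hq
      simp only [List.mem_cons] at hq ⊢
      tauto
    · simp only [List.cons_append] at hcd
      injection hcd with ha hcd₂
      rcases t₂ with _ | ⟨b₀, t₃⟩
      · simp only [List.nil_append] at hcd₂
        rw [← ha] at hp
        rcases List.mem_cons.1 (hcd₂ ▸ hq) with rfl | hqw
        · have hpu : p ∈ u := by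
            rcases List.mem_append.1 hp with h | h
            · exact h
            · simp only [List.mem_singleton] at h
              exact absurd ⟨h, rfl⟩ h1
          exact ⟨u, q :: a :: w, rfl, hpu, List.mem_cons_self⟩
        · refine ⟨u ++ [b, a], w, by simp, ?_, hqw⟩
          simp only [List.mem_append, List.mem_singleton, List.mem_cons] at hp ⊢
          tauto
      · simp only [List.cons_append] at hcd₂
        injection hcd₂ with hb hw
        rw [← ha, ← hb] at hp
        refine ⟨u ++ b :: a :: t₃, l₂, by rw [hw]; simp, ?_, hq⟩
        simp only [List.mem_append, List.mem_cons] at hp ⊢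
        tauto
/-- The rigidity invariant for a pair `x < y` with middle-set `M`: every element `z`
strictly between `x` and `y` lies before both `x, y` if `z ∈ M`, after both otherwise. -/
def RigidInv (x y : ℕ) (M : Finset ℕ) (π : List ℕ) : Prop :=
  ∀ z ∈ Finset.Ioo x y,
    (z ∈ M → Before π z x ∧ Before π z y) ∧ (z ∉ M → Before π x z ∧ Before π y z)

lemma step_core {n : ℕ} {𝓕 : Set Fence} (hdown : IsFenceDownset n 𝓕)
    {x y : ℕ} {M : Finset ℕ}
    (hx1 : 1 ≤ x) (hxy : x < y) (hyn : y ≤ n) (hM : M ⊆ Finset.Ioo x y)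
    (hnot : (⟨x, y, M⟩ : Fence) ∉ 𝓕)
    {fa fb : ℕ} {fL : Finset ℕ} (hf : (⟨fa, fb, fL⟩ : Fence) ∈ 𝓕)
    {u w : List ℕ} {c d : ℕ}
    (hcd : (c = fa ∧ d = fb) ∨ (c = fb ∧ d = fa))
    (hLmem : ∀ z ∈ fL, z ∈ u)
    (hRmem : ∀ z ∈ Finset.Ioo fa fb, z ∉ fL → z ∈ w)
    (hperm : IsPermList n (u ++ c :: d :: w))
    (hinv : RigidInv x y M (u ++ c :: d :: w)) :
    RigidInv x y M (u ++ d :: c :: w) ∧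
      (Before (u ++ c :: d :: w) x y ↔ Before (u ++ d :: c :: w) x y) := by
  obtain ⟨hfa1', hfab', hfbn', hfL'⟩ := hdown.1 _ hf
  have hfa1 : 1 ≤ fa := hfa1'
  have hfab : fa < fb := hfab'
  have hfbn : fb ≤ n := hfbn'
  have hfL : fL ⊆ Finset.Ioo fa fb := hfL' 
  have hnd : (u ++ c :: d :: w).Nodup := hperm.1
  have hfa_cd : fa = c ∨ fa = d := by
    rcases hcd with ⟨h1, h2⟩ | ⟨h1, h2⟩
    · exact Or.inl h1.symm
    · exact Or.inr h2.symm
  have hfb_cd : fb = c ∨ fb = d := by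
    rcases hcd with ⟨h1, h2⟩ | ⟨h1, h2⟩
    · exact Or.inr h2.symm
    · exact Or.inl h1.symm
  have hbefore_left : ∀ z e, z ∈ u → (e = c ∨ e = d) →
      Before (u ++ c :: d :: w) z e := by
    intro z e hz he
    refine ⟨u, c :: d :: w, rfl, hz, ?_⟩
    simp only [List.mem_cons]
    tauto
  have hbefore_right : ∀ z e, z ∈ w → (e = c ∨ e = d) →
      Before (u ++ c :: d :: w) e z := by
    intro z e hz he
    refine ⟨u ++ [c, d], w, by simp, ?_, hz⟩
    simp only [List.mem_append, List.mem_cons]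
    tauto
  -- the three excluded configurations
  have hc1 : ¬(fa = x ∧ fb = y) := by
    rintro ⟨h1, h2⟩
    apply hnot
    have hx_cd : x = c ∨ x = d := h1 ▸ hfa_cd
    have hLM : fL = M := by
      apply Finset.ext
      intro z
      constructor
      · intro hz
        have hzI : z ∈ Finset.Ioo x y := by rw [← h1, ← h2]; exact hfL hz
        by_contra hzM
        exact Before.asymm hnd (hbefore_left z x (hLmem z hz) hx_cd)
          ((hinv z hzI).2 hzM).1 |>.elim
      · intro hz
        have hzI : z ∈ Finset.Ioo x y := hM hz
        by_contra hzL
        have hzw : z ∈ w := hRmem z (by rw [h1, h2]; exact hzI) hzL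
        exact Before.asymm hnd (hbefore_right z x hzw hx_cd)
          ((hinv z hzI).1 hz).1 |>.elim
    rw [← h1, ← h2, ← hLM]
    exact hf
  have hc2 : ¬(fa = x ∧ fb ∈ Finset.Ioo x y) := by
    rintro ⟨h1, h2⟩
    apply hnot
    have hx_cd : x = c ∨ x = d := h1 ▸ hfa_cd
    obtain ⟨hxfb, hfby⟩ := Finset.mem_Ioo.1 h2
    have hval : Fence.Valid n (⟨x, y, M⟩ : Fence) := ⟨hx1, hxy, hyn, hM⟩
    have hLeq : M ∩ Finset.Ioo fa fb = fL := by
      apply Finset.ext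
      intro z
      simp only [Finset.mem_inter]
      constructor
      · rintro ⟨hzM, hzI⟩
        obtain ⟨hfaz, hzfb⟩ := Finset.mem_Ioo.1 hzI
        have hzxy : z ∈ Finset.Ioo x y := Finset.mem_Ioo.2 ⟨by omega, by omega⟩
        by_contra hzL
        exact Before.asymm hnd (hbefore_right z x (hRmem z hzI hzL) hx_cd)
          ((hinv z hzxy).1 hzM).1 |>.elim
      · intro hz
        have hzI : z ∈ Finset.Ioo fa fb := hfL hz
        obtain ⟨hfaz, hzfb⟩ := Finset.mem_Ioo.1 hzI
        have hzxy : z ∈ Finset.Ioo x y := Finset.mem_Ioo.2 ⟨by omega, by omega⟩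
        refine ⟨?_, hzI⟩
        by_contra hzM
        exact Before.asymm hnd (hbefore_left z x (hLmem z hz) hx_cd)
          ((hinv z hzxy).2 hzM).1 |>.elim
    exact hdown.2 _ hf _ hval ⟨show x ≤ fa by omega, show fb ≤ y by omega, hLeq⟩
  have hc3 : ¬(fb = y ∧ fa ∈ Finset.Ioo x y) := by
    rintro ⟨h1, h2⟩
    apply hnot
    have hy_cd : y = c ∨ y = d := h1 ▸ hfb_cd
    obtain ⟨hxfa, hfay⟩ := Finset.mem_Ioo.1 h2
    have hval : Fence.Valid n (⟨x, y, M⟩ : Fence) := ⟨hx1, hxy, hyn, hM⟩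
    have hLeq : M ∩ Finset.Ioo fa fb = fL := by
      apply Finset.ext
      intro z
      simp only [Finset.mem_inter]
      constructor
      · rintro ⟨hzM, hzI⟩
        obtain ⟨hfaz, hzfb⟩ := Finset.mem_Ioo.1 hzI
        have hzxy : z ∈ Finset.Ioo x y := Finset.mem_Ioo.2 ⟨by omega, by omega⟩
        by_contra hzL
        exact Before.asymm hnd (hbefore_right z y (hRmem z hzI hzL) hy_cd)
          ((hinv z hzxy).1 hzM).2 |>.elim
      · intro hz
        have hzI : z ∈ Finset.Ioo fa fb := hfL hz
        obtain ⟨hfaz, hzfb⟩ := Finset.mem_Ioo.1 hzI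
        have hzxy : z ∈ Finset.Ioo x y := Finset.mem_Ioo.2 ⟨by omega, by omega⟩
        refine ⟨?_, hzI⟩
        by_contra hzM
        exact Before.asymm hnd (hbefore_left z y (hLmem z hz) hy_cd)
          ((hinv z hzxy).2 hzM).2 |>.elim
    exact hdown.2 _ hf _ hval ⟨show x ≤ fa by omega, show fb ≤ y by omega, hLeq⟩
  -- transfer of Before across the swap, for non-fence pairs
  have hswap2 : ∀ p q, ¬(p = fa ∧ q = fb) → ¬(p = fb ∧ q = fa) →
      (Before (u ++ c :: d :: w) p q ↔ Before (u ++ d :: c :: w) p q) := by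
    intro p q h1 h2
    have hA : ¬(p = c ∧ q = d) := by
      rintro ⟨r1, r2⟩
      rcases hcd with ⟨e1, e2⟩ | ⟨e1, e2⟩
      · exact h1 ⟨r1.trans e1, r2.trans e2⟩
      · exact h2 ⟨r1.trans e1, r2.trans e2⟩
    have hB : ¬(p = d ∧ q = c) := by
      rintro ⟨r1, r2⟩
      rcases hcd with ⟨e1, e2⟩ | ⟨e1, e2⟩
      · exact h2 ⟨r1.trans e2, r2.trans e1⟩
      · exact h1 ⟨r1.trans e2, r2.trans e1⟩
    exact ⟨before_swap hA, before_swap hB⟩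
  constructor
  · intro z hz
    obtain ⟨hxz, hzy⟩ := Finset.mem_Ioo.1 hz
    have hzx : Before (u ++ c :: d :: w) z x ↔ Before (u ++ d :: c :: w) z x := by
      apply hswap2
      · rintro ⟨e1, e2⟩; omega
      · rintro ⟨e1, e2⟩; exact hc2 ⟨e2.symm, e1 ▸ hz⟩
    have hxz' : Before (u ++ c :: d :: w) x z ↔ Before (u ++ d :: c :: w) x z := by
      apply hswap2
      · rintro ⟨e1, e2⟩; exact hc2 ⟨e1.symm, e2 ▸ hz⟩
      · rintro ⟨e1, e2⟩; omega
    have hzy' : Before (u ++ c :: d :: w) z y ↔ Before (u ++ d :: c :: w) z y := by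
      apply hswap2
      · rintro ⟨e1, e2⟩; exact hc3 ⟨e2.symm, e1 ▸ hz⟩
      · rintro ⟨e1, e2⟩; omega
    have hyz : Before (u ++ c :: d :: w) y z ↔ Before (u ++ d :: c :: w) y z := by
      apply hswap2
      · rintro ⟨e1, e2⟩; omega
      · rintro ⟨e1, e2⟩; exact hc3 ⟨e1.symm, e2 ▸ hz⟩
    refine ⟨fun hzM => ?_, fun hzM => ?_⟩
    · obtain ⟨b1, b2⟩ := (hinv z hz).1 hzM
      exact ⟨hzx.1 b1, hzy'.1 b2⟩
    · obtain ⟨b1, b2⟩ := (hinv z hz).2 hzM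
      exact ⟨hxz'.1 b1, hyz.1 b2⟩
  · apply hswap2
    · rintro ⟨e1, e2⟩; exact hc1 ⟨e1.symm, e2.symm⟩
    · rintro ⟨e1, e2⟩; omega
lemma fenceRel_symm {f : Fence} {π₁ π₂ : List ℕ} (h : FenceRel f π₁ π₂) : FenceRel f π₂ π₁ := by
  obtain ⟨u, w, hor, hL, hR⟩ := h
  rcases hor with ⟨h1, h2⟩ | ⟨h1, h2⟩
  · exact ⟨u, w, Or.inr ⟨h2, h1⟩, hL, hR⟩
  · exact ⟨u, w, Or.inl ⟨h2, h1⟩, hL, hR⟩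

lemma isPermList_swap {n : ℕ} {u w : List ℕ} {c d : ℕ}
    (h : IsPermList n (u ++ c :: d :: w)) : IsPermList n (u ++ d :: c :: w) := by
  have hp : (u ++ c :: d :: w).Perm (u ++ d :: c :: w) :=
    List.Perm.append_left u (List.Perm.swap d c w)
  exact ⟨hp.nodup_iff.1 h.1, fun z => (hp.symm.mem_iff).trans (h.2 z)⟩

lemma step_full {n : ℕ} {𝓕 : Set Fence} (hdown : IsFenceDownset n 𝓕)
    {x y : ℕ} {M : Finset ℕ}
    (hx1 : 1 ≤ x) (hxy : x < y) (hyn : y ≤ n) (hM : M ⊆ Finset.Ioo x y)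
    (hnot : (⟨x, y, M⟩ : Fence) ∉ 𝓕)
    {f : Fence} (hf : f ∈ 𝓕) {π π' : List ℕ} (hrel : FenceRel f π π')
    (hg : IsPermList n π ∧ RigidInv x y M π) :
    (IsPermList n π' ∧ RigidInv x y M π') ∧ (Before π x y ↔ Before π' x y) := by
  obtain ⟨u, w, hor, hL, hR⟩ := hrel
  have hf' : (⟨f.a, f.b, f.L⟩ : Fence) ∈ 𝓕 := hf
  rcases hor with ⟨h1, h2⟩ | ⟨h1, h2⟩ <;> subst h1 <;> subst h2
  · have hc := step_core hdown hx1 hxy hyn hM hnot hf' (Or.inl ⟨rfl, rfl⟩) hL hR hg.1 hg.2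
    exact ⟨⟨isPermList_swap hg.1, hc.1⟩, hc.2⟩
  · have hc := step_core hdown hx1 hxy hyn hM hnot hf' (Or.inr ⟨rfl, rfl⟩) hL hR hg.1 hg.2
    exact ⟨⟨isPermList_swap hg.1, hc.1⟩, hc.2⟩

lemma permEquiv_rigid {n : ℕ} {𝓕 : Set Fence} (hdown : IsFenceDownset n 𝓕)
    {x y : ℕ} {M : Finset ℕ}
    (hx1 : 1 ≤ x) (hxy : x < y) (hyn : y ≤ n) (hM : M ⊆ Finset.Ioo x y)
    (hnot : (⟨x, y, M⟩ : Fence) ∉ 𝓕)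
    {π π' : List ℕ} (h : PermEquiv 𝓕 π π') :
    ((IsPermList n π ∧ RigidInv x y M π) ↔ (IsPermList n π' ∧ RigidInv x y M π')) ∧
      ((IsPermList n π ∧ RigidInv x y M π) → (Before π x y ↔ Before π' x y)) := by
  induction h with
  | rel a b hab =>
    obtain ⟨f, hf, hr⟩ := hab
    have h1 := fun hg => step_full hdown hx1 hxy hyn hM hnot hf hr hg
    have h2 := fun hg => step_full hdown hx1 hxy hyn hM hnot hf (fenceRel_symm hr) hg
    exact ⟨⟨fun hg => (h1 hg).1, fun hg => (h2 hg).1⟩, fun hg => (h1 hg).2⟩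
  | refl a => exact ⟨Iff.rfl, fun _ => Iff.rfl⟩
  | symm a b _ ih => exact ⟨ih.1.symm, fun hg => (ih.2 (ih.1.mpr hg)).symm⟩
  | trans a b c _ _ ih1 ih2 =>
    exact ⟨ih1.1.trans ih2.1, fun hg => (ih1.2 hg).trans (ih2.2 (ih1.1.mp hg))⟩
lemma blocksUnion_cons (C : Finset ℕ) (L : List (Finset ℕ)) :
    blocksUnion (C :: L) = C ∪ blocksUnion L := rfl

lemma mem_blocksUnion {L : List (Finset ℕ)} {z : ℕ} :
    z ∈ blocksUnion L ↔ ∃ C ∈ L, z ∈ C := by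
  induction L with
  | nil => simp [blocksUnion]
  | cons C L ih => simp [blocksUnion_cons, ih]

lemma forall₂_mem_flatten {ls : List (List ℕ)} {P : List (Finset ℕ)}
    (h : List.Forall₂ (fun (xs : List ℕ) (B : Finset ℕ) =>
      xs.Nodup ∧ ∀ x : ℕ, x ∈ xs ↔ x ∈ B) ls P) {z : ℕ} :
    z ∈ ls.flatten ↔ ∃ C ∈ P, z ∈ C := by
  induction h with
  | nil => simp
  | cons h₁ h₂ ih => simp [List.flatten_cons, ih, h₁.2 z]

lemma forall₂_exists_of_mem {α β : Type*} {Rel : α → β → Prop} {l : List α} {u : List β}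
    (h : List.Forall₂ Rel l u) {a : α} (ha : a ∈ l) : ∃ b ∈ u, Rel a b := by
  induction h with
  | nil => cases ha
  | cons h₁ h₂ ih =>
    rcases List.mem_cons.1 ha with rfl | ha'
    · exact ⟨_, List.mem_cons_self, h₁⟩
    · obtain ⟨b, hb, hrel⟩ := ih ha'
      exact ⟨b, List.mem_cons_of_mem _ hb, hrel⟩

lemma linearizes_mem {l : List ℕ} {P : List (Finset ℕ)} (h : Linearizes l P) {z : ℕ} :
    z ∈ l ↔ ∃ C ∈ P, z ∈ C := by
  obtain ⟨ls, rfl, hF⟩ := h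
  exact forall₂_mem_flatten hF

lemma linearizes_append {P Q : List (Finset ℕ)} {μ : List ℕ} (h : Linearizes μ (P ++ Q)) :
    ∃ μ₁ μ₂, μ = μ₁ ++ μ₂ ∧ Linearizes μ₁ P ∧ Linearizes μ₂ Q := by
  obtain ⟨ls, rfl, hF⟩ := h
  refine ⟨(ls.take P.length).flatten, (ls.drop P.length).flatten, ?_,
    ⟨_, rfl, List.forall₂_take_append _ _ _ hF⟩,
    ⟨_, rfl, List.forall₂_drop_append _ _ _ hF⟩⟩
  rw [← List.flatten_append, List.take_append_drop]

lemma lin_before {Q₁ Q₂ : List (Finset ℕ)} {μ : List ℕ} (h : Linearizes μ (Q₁ ++ Q₂))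
    {p q : ℕ} (hp : p ∈ blocksUnion Q₁) (hq : q ∈ blocksUnion Q₂) : Before μ p q := by
  obtain ⟨μ₁, μ₂, rfl, h1, h2⟩ := linearizes_append h
  exact before_of_mem ((linearizes_mem h1).2 (mem_blocksUnion.1 hp))
    ((linearizes_mem h2).2 (mem_blocksUnion.1 hq))

lemma forall₂_pairwise_disjoint {ls : List (List ℕ)} {P : List (Finset ℕ)}
    (h : List.Forall₂ (fun (xs : List ℕ) (B : Finset ℕ) =>
      xs.Nodup ∧ ∀ x : ℕ, x ∈ xs ↔ x ∈ B) ls P)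
    (hp : P.Pairwise Disjoint) : ls.Pairwise List.Disjoint := by
  induction h with
  | nil => exact List.Pairwise.nil
  | cons h₁ h₂ ih =>
    rcases List.pairwise_cons.1 hp with ⟨hhead, htail⟩
    refine List.Pairwise.cons ?_ (ih htail)
    intro xs hxs z hz1 hz2
    obtain ⟨B', hB', hrel⟩ := forall₂_exists_of_mem h₂ hxs
    exact Finset.disjoint_left.1 (hhead B' hB') ((h₁.2 z).1 hz1) ((hrel.2 z).1 hz2)

lemma linearizes_isPermList {n : ℕ} {Q : List (Finset ℕ)} (hQ : IsOSP (Finset.Icc 1 n) Q)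
    {μ : List ℕ} (h : Linearizes μ Q) : IsPermList n μ := by
  obtain ⟨ls, rfl, hF⟩ := h
  constructor
  · rw [List.nodup_flatten]
    refine ⟨fun l hl => ?_, forall₂_pairwise_disjoint hF hQ.2.1⟩
    obtain ⟨B, _, hrel⟩ := forall₂_exists_of_mem hF hl
    exact hrel.1
  · intro z
    exact (forall₂_mem_flatten hF).trans ((hQ.2.2 z).symm)

/-- The increasing enumeration of a block. -/
def sortedOf (C : Finset ℕ) : List ℕ := Finset.sort C (· ≤ ·)

lemma blockRel_sorted (C : Finset ℕ) :
    (sortedOf C).Nodup ∧ ∀ x : ℕ, x ∈ sortedOf C ↔ x ∈ C :=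
  ⟨Finset.sort_nodup _ _, fun _ => Finset.mem_sort _⟩

lemma linearizes_map_sorted (L : List (Finset ℕ)) :
    Linearizes (L.map sortedOf).flatten L := by
  refine ⟨L.map sortedOf, rfl, ?_⟩
  rw [List.forall₂_map_left_iff]
  exact List.forall₂_same.2 fun C _ => blockRel_sorted C

lemma linearizes_parts {L R : List (Finset ℕ)} {B : Finset ℕ} {s : List ℕ}
    (hs : s.Nodup) (hsB : ∀ z : ℕ, z ∈ s ↔ z ∈ B) :
    Linearizes ((L.map sortedOf).flatten ++ (s ++ (R.map sortedOf).flatten))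
      (L ++ B :: R) := by
  refine ⟨L.map sortedOf ++ s :: R.map sortedOf, ?_, ?_⟩
  · rw [List.flatten_append, List.flatten_cons]
  · refine List.rel_append ?_ (List.Forall₂.cons ⟨hs, hsB⟩ ?_)
    · rw [List.forall₂_map_left_iff]
      exact List.forall₂_same.2 fun C _ => blockRel_sorted C
    · rw [List.forall₂_map_left_iff]
      exact List.forall₂_same.2 fun C _ => blockRel_sorted C

lemma rigidInv_of_linearizes {n : ℕ} {L R : List (Finset ℕ)} {B : Finset ℕ}
    (hP : IsOSP (Finset.Icc 1 n) (L ++ B :: R))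
    {x y : ℕ} (hx : x ∈ B) (hy : y ∈ B) (hxy : x < y)
    (hcons : ∀ z ∈ B, ¬(x < z ∧ z < y))
    {μL s μR : List ℕ} (hlinL : Linearizes μL L) (hlinR : Linearizes μR R)
    (hsB : ∀ z : ℕ, z ∈ s ↔ z ∈ B) :
    RigidInv x y (Finset.Ioo x y ∩ blocksUnion L) (μL ++ (s ++ μR)) := by
  intro z hz
  obtain ⟨hxz, hzy⟩ := Finset.mem_Ioo.1 hz
  have hzB : z ∉ B := fun h => hcons z h ⟨hxz, hzy⟩
  have hxs : x ∈ s := (hsB x).2 hx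
  have hys : y ∈ s := (hsB y).2 hy
  constructor
  · intro hzM
    have hzL : z ∈ μL :=
      (linearizes_mem hlinL).2 (mem_blocksUnion.1 (Finset.mem_inter.1 hzM).2)
    exact ⟨before_of_mem hzL (by simp [hxs]), before_of_mem hzL (by simp [hys])⟩
  · intro hzM
    have hxIcc : x ∈ Finset.Icc 1 n := (hP.2.2 x).2 ⟨B, by simp, hx⟩
    have hyIcc : y ∈ Finset.Icc 1 n := (hP.2.2 y).2 ⟨B, by simp, hy⟩
    have h1x := Finset.mem_Icc.1 hxIcc
    have h1y := Finset.mem_Icc.1 hyIcc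
    have hzIcc : z ∈ Finset.Icc 1 n := Finset.mem_Icc.2 ⟨by omega, by omega⟩
    obtain ⟨C, hC, hzC⟩ := (hP.2.2 z).1 hzIcc
    rcases List.mem_append.1 hC with hCL | hCBR
    · exact absurd (Finset.mem_inter.2 ⟨hz, mem_blocksUnion.2 ⟨C, hCL, hzC⟩⟩) hzM
    · rcases List.mem_cons.1 hCBR with rfl | hCR
      · exact absurd hzC hzB
      · have hzR : z ∈ μR := (linearizes_mem hlinR).2 ⟨C, hCR, hzC⟩
        exact ⟨⟨μL ++ s, μR, by simp, by simp [hxs], hzR⟩,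
          ⟨μL ++ s, μR, by simp, by simp [hys], hzR⟩⟩
lemma coBlock_of_consecutive {n : ℕ} {𝓕 : Set Fence} (hdown : IsFenceDownset n 𝓕)
    {L R : List (Finset ℕ)} {B : Finset ℕ}
    (hP : IsOSP (Finset.Icc 1 n) (L ++ B :: R))
    {x y : ℕ} (hx : x ∈ B) (hy : y ∈ B) (hxy : x < y)
    (hcons : ∀ z ∈ B, ¬(x < z ∧ z < y))
    (hnot : (⟨x, y, Finset.Ioo x y ∩ blocksUnion L⟩ : Fence) ∉ 𝓕)
    {Q : List (Finset ℕ)} (hQ : IsOSP (Finset.Icc 1 n) Q)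
    (hequiv : OSPEquiv 𝓕 (L ++ B :: R) Q) :
    ∃ C ∈ Q, x ∈ C ∧ y ∈ C := by
  have hxIcc : x ∈ Finset.Icc 1 n := (hP.2.2 x).2 ⟨B, by simp, hx⟩
  have hyIcc : y ∈ Finset.Icc 1 n := (hP.2.2 y).2 ⟨B, by simp, hy⟩
  have hx1 : 1 ≤ x := (Finset.mem_Icc.1 hxIcc).1
  have hyn : y ≤ n := (Finset.mem_Icc.1 hyIcc).2
  have hM : Finset.Ioo x y ∩ blocksUnion L ⊆ Finset.Ioo x y := Finset.inter_subset_left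
  have hsmem : ∀ a : ℕ, a ∈ B → ∀ z : ℕ, z ∈ a :: sortedOf (B.erase a) ↔ z ∈ B := by
    intro a ha z
    simp only [List.mem_cons, sortedOf, Finset.mem_sort, Finset.mem_erase]
    constructor
    · rintro (rfl | ⟨_, h⟩)
      · exact ha
      · exact h
    · intro h
      by_cases hza : z = a
      · exact Or.inl hza
      · exact Or.inr ⟨hza, h⟩
  have hsnodup : ∀ a : ℕ, (a :: sortedOf (B.erase a)).Nodup := by
    intro a
    refine List.Nodup.cons ?_ (Finset.sort_nodup _ _)
    simp [sortedOf, Finset.mem_sort]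
  -- for (a,b) = (x,y) or (y,x), find μ ∈ Lin(Q) nodup with a before b in μ
  have key : ∀ a b : ℕ, ((a = x ∧ b = y) ∨ (a = y ∧ b = x)) → a ∈ B → b ∈ B →
      ∃ μ, Linearizes μ Q ∧ IsPermList n μ ∧ Before μ a b := by
    intro a b hor ha hb
    have hab : a ≠ b := by rcases hor with ⟨e1, e2⟩ | ⟨e1, e2⟩ <;> omega
    set lam := (L.map sortedOf).flatten ++
      ((a :: sortedOf (B.erase a)) ++ (R.map sortedOf).flatten) with hlam
    have hlin : Linearizes lam (L ++ B :: R) :=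
      linearizes_parts (hsnodup a) (hsmem a ha)
    have hgood : IsPermList n lam ∧
        RigidInv x y (Finset.Ioo x y ∩ blocksUnion L) lam :=
      ⟨linearizes_isPermList hP hlin,
        rigidInv_of_linearizes hP hx hy hxy hcons (linearizes_map_sorted L)
          (linearizes_map_sorted R) (hsmem a ha)⟩
    have hbef : Before lam a b := by
      refine ⟨(L.map sortedOf).flatten ++ [a],
        sortedOf (B.erase a) ++ (R.map sortedOf).flatten, by simp [hlam], by simp, ?_⟩
      have hbmem : b ∈ sortedOf (B.erase a) := by
        simp only [sortedOf, Finset.mem_sort, Finset.mem_erase]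
        exact ⟨Ne.symm hab, hb⟩
      exact List.mem_append_left _ hbmem
    obtain ⟨μ, hlinμ, heq⟩ := hequiv.1 _ hlin
    have hr := permEquiv_rigid hdown hx1 hxy hyn hM hnot heq
    have hgoodμ := hr.1.mp hgood
    refine ⟨μ, hlinμ, hgoodμ.1, ?_⟩
    rcases hor with ⟨rfl, rfl⟩ | ⟨rfl, rfl⟩
    · exact (hr.2 hgood).1 hbef
    · -- a = y, b = x : use totality and transport of the (x,y)-order
      by_contra hnb
      have hxμ : b ∈ μ := (hgoodμ.1.2 b).2 hxIcc
      have hyμ : a ∈ μ := (hgoodμ.1.2 a).2 hyIcc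
      rcases before_total hyμ hxμ hab with h | h
      · exact hnb h
      · -- h : Before μ x y ; transport back
        have hxy_lam : Before lam b a := (hr.2 hgood).2 h
        exact Before.asymm hgood.1.1 hxy_lam hbef
  obtain ⟨μ₁, hlinμ₁, hperm₁, hbefμ₁⟩ := key x y (Or.inl ⟨rfl, rfl⟩) hx hy
  obtain ⟨μ₂, hlinμ₂, hperm₂, hbefμ₂⟩ := key y x (Or.inr ⟨rfl, rfl⟩) hy hx
  by_contra hco
  obtain ⟨C, hCQ, hxC⟩ := (hQ.2.2 x).1 hxIcc
  obtain ⟨Qa, Qb, hQeq⟩ := List.append_of_mem hCQ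
  obtain ⟨D, hDQ, hyD⟩ := (hQ.2.2 y).1 hyIcc
  have hyC : y ∉ C := by
    intro h
    exact hco ⟨C, hCQ, hxC, h⟩
  rw [hQeq] at hDQ
  rcases List.mem_append.1 hDQ with hDQa | hDCb
  · -- y in an earlier block : contradicts Before μ₁ x y
    have hb : Before μ₁ y x := by
      refine lin_before (hQeq ▸ hlinμ₁) (mem_blocksUnion.2 ⟨D, hDQa, hyD⟩)
        (mem_blocksUnion.2 ⟨C, List.mem_cons_self, hxC⟩)
    exact Before.asymm hperm₁.1 hbefμ₁ hb
  · rcases List.mem_cons.1 hDCb with rfl | hDQb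
    · exact absurd hyD hyC
    · -- y in a later block : contradicts Before μ₂ y x
      have hsplit : Qa ++ C :: Qb = (Qa ++ [C]) ++ Qb := by simp
      have hb : Before μ₂ x y := by
        refine lin_before (hsplit ▸ hQeq ▸ hlinμ₂) ?_ (mem_blocksUnion.2 ⟨D, hDQb, hyD⟩)
        refine mem_blocksUnion.2 ⟨C, by simp, hxC⟩
      exact Before.asymm hperm₂.1 hbefμ₂ hb
lemma block_eq_of_mem {Q : List (Finset ℕ)} (hQ : Q.Pairwise Disjoint)
    {C C' : Finset ℕ} (hC : C ∈ Q) (hC' : C' ∈ Q) {z : ℕ} (h1 : z ∈ C) (h2 : z ∈ C') :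
    C = C' := by
  induction Q with
  | nil => cases hC
  | cons D Q ih =>
    rcases List.pairwise_cons.1 hQ with ⟨hhead, htail⟩
    rcases List.mem_cons.1 hC with rfl | hC2
    · rcases List.mem_cons.1 hC' with rfl | hC'2
      · rfl
      · exact absurd h2 (Finset.disjoint_left.1 (hhead _ hC'2) h1)
    · rcases List.mem_cons.1 hC' with rfl | hC'2
      · exact absurd h1 (Finset.disjoint_left.1 (hhead _ hC2) h2)
      · exact ih htail hC2 hC'2

lemma coBlock_all {Q : List (Finset ℕ)} (hQp : Q.Pairwise Disjoint) {A : Finset ℕ}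
    (hconsp : ∀ x y : ℕ, x ∈ A → y ∈ A → x < y → (∀ z ∈ A, ¬(x < z ∧ z < y)) →
      ∃ C ∈ Q, x ∈ C ∧ y ∈ C)
    (hcov : ∀ a ∈ A, ∃ C ∈ Q, a ∈ C) :
    ∀ x y : ℕ, x ∈ A → y ∈ A → ∃ C ∈ Q, x ∈ C ∧ y ∈ C := by
  have main : ∀ d : ℕ, ∀ x y : ℕ, x ∈ A → y ∈ A → x ≤ y → y - x ≤ d →
      ∃ C ∈ Q, x ∈ C ∧ y ∈ C := by
    intro d
    induction d with
    | zero =>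
      intro x y hx hy hle hd
      have hxy : x = y := by omega
      subst hxy
      obtain ⟨C, hC, hxC⟩ := hcov x hx
      exact ⟨C, hC, hxC, hxC⟩
    | succ d ih =>
      intro x y hx hy hle hd
      by_cases hxy : x = y
      · subst hxy
        obtain ⟨C, hC, hxC⟩ := hcov x hx
        exact ⟨C, hC, hxC, hxC⟩
      · have hlt : x < y := by omega
        have hSne : (A.filter (fun z => x ≤ z ∧ z < y)).Nonempty :=
          ⟨x, Finset.mem_filter.2 ⟨hx, le_rfl, hlt⟩⟩
        set w := (A.filter (fun z => x ≤ z ∧ z < y)).max' hSne with hwdef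
        have hwS := Finset.max'_mem _ hSne
        have hwA : w ∈ A := (Finset.mem_filter.1 hwS).1
        obtain ⟨hxw, hwy⟩ := (Finset.mem_filter.1 hwS).2
        have hconsw : ∀ z ∈ A, ¬(w < z ∧ z < y) := by
          rintro z hz ⟨h1, h2⟩
          have hzS : z ∈ A.filter (fun z => x ≤ z ∧ z < y) :=
            Finset.mem_filter.2 ⟨hz, by omega, h2⟩
          exact absurd (Finset.le_max' _ z hzS) (by omega)
        obtain ⟨C₁, hC₁, hwC₁, hyC₁⟩ := hconsp w y hwA hy (by omega) hconsw
        by_cases hxweq : x = w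
        · exact ⟨C₁, hC₁, hxweq.symm ▸ hwC₁, hyC₁⟩
        · obtain ⟨C₂, hC₂, hxC₂, hwC₂⟩ := ih x w hx hwA (by omega) (by omega)
          have hCC : C₂ = C₁ := block_eq_of_mem hQp hC₂ hC₁ hwC₂ hwC₁
          exact ⟨C₁, hC₁, hCC ▸ hxC₂, hyC₁⟩
  intro x y hx hy
  rcases le_total x y with h | h
  · exact main (y - x) x y hx hy h le_rfl
  · obtain ⟨C, hC, h1, h2⟩ := main (x - y) y x hy hx h le_rfl
    exact ⟨C, hC, h2, h1⟩

lemma osp_length_le {n : ℕ} {P Q : List (Finset ℕ)}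
    (hP : IsOSP (Finset.Icc 1 n) P) (hQ : IsOSP (Finset.Icc 1 n) Q)
    (hmap : ∀ A ∈ P, ∀ x y : ℕ, x ∈ A → y ∈ A → ∃ C ∈ Q, x ∈ C ∧ y ∈ C) :
    Q.length ≤ P.length := by
  have hrep : ∀ j : Fin Q.length, ∃ i : Fin P.length, ∃ rr : ℕ,
      rr ∈ Q[(j : ℕ)] ∧ rr ∈ P[(i : ℕ)] := by
    intro j
    have hne : (Q[(j : ℕ)]).Nonempty := hQ.1 _ (List.getElem_mem _)
    obtain ⟨rr, hrr⟩ := hne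
    have hrIcc : rr ∈ Finset.Icc 1 n := (hQ.2.2 rr).2 ⟨Q[(j : ℕ)], List.getElem_mem _, hrr⟩
    obtain ⟨A, hA, hrA⟩ := (hP.2.2 rr).1 hrIcc
    obtain ⟨i, hi, hPi⟩ := List.getElem_of_mem hA
    exact ⟨⟨i, hi⟩, rr, hrr, by rw [hPi]; exact hrA⟩
  choose g rr hr1 hr2 using hrep
  have hinj : Function.Injective g := by
    intro j₁ j₂ hg
    by_contra hne
    have h1 : rr j₁ ∈ P[(g j₁ : ℕ)] := hr2 j₁
    have h2 : rr j₂ ∈ P[(g j₁ : ℕ)] := by simp only [hg]; exact hr2 j₂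
    obtain ⟨C, hCQ, hc1, hc2⟩ := hmap _ (List.getElem_mem _) _ _ h1 h2
    have e1 : C = Q[(j₁ : ℕ)] :=
      block_eq_of_mem hQ.2.1 hCQ (List.getElem_mem _) hc1 (hr1 j₁)
    have e2 : C = Q[(j₂ : ℕ)] :=
      block_eq_of_mem hQ.2.1 hCQ (List.getElem_mem _) hc2 (hr1 j₂)
    have hd : Disjoint (Q[(j₁ : ℕ)]) (Q[(j₂ : ℕ)]) := by
      have hpg := List.pairwise_iff_getElem.1 hQ.2.1
      have hnev : (j₁ : ℕ) ≠ (j₂ : ℕ) := fun h => hne (Fin.ext h)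
      rcases Nat.lt_or_ge (j₁ : ℕ) (j₂ : ℕ) with h | h
      · exact hpg _ _ j₁.2 j₂.2 h
      · exact (hpg _ _ j₂.2 j₁.2 (by omega)).symm
    exact absurd (e2 ▸ hc1) (Finset.disjoint_left.1 hd (hr1 j₁))
  calc Q.length = Fintype.card (Fin Q.length) := by simp
    _ ≤ Fintype.card (Fin P.length) := Fintype.card_le_of_injective g hinj
    _ = P.length := by simp
lemma swap_step {n : ℕ} {𝓕 : Set Fence} (hdown : IsFenceDownset n 𝓕)
    {x y : ℕ} {M₀ : Finset ℕ} (hM₀ : M₀ ⊆ Finset.Ioo x y)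
    (hf₀ : (⟨x, y, M₀⟩ : Fence) ∈ 𝓕)
    {pre suf : List ℕ} {uu vv : ℕ}
    (h1u : 1 ≤ uu) (hux : uu ≤ x) (hyv : y ≤ vv) (hvn : vv ≤ n) (hxy : x < y)
    (hpre : ∀ z ∈ Finset.Ioo x y, (z ∈ pre ↔ z ∈ M₀))
    (hfull : ∀ z : ℕ, z ∈ Finset.Icc 1 n → (z ∈ pre ∨ z = uu ∨ z = vv ∨ z ∈ suf)) :
    PermEquiv 𝓕 (pre ++ vv :: uu :: suf) (pre ++ uu :: vv :: suf) := by
  have huv : uu < vv := by omega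
  have hval : Fence.Valid n (⟨uu, vv, (Finset.Ioo uu vv).filter (· ∈ pre)⟩ : Fence) :=
    ⟨h1u, huv, hvn, Finset.filter_subset _ _⟩
  have hforce : Fence.Forces (⟨uu, vv, (Finset.Ioo uu vv).filter (· ∈ pre)⟩ : Fence)
      (⟨x, y, M₀⟩ : Fence) := by
    refine ⟨hux, hyv, ?_⟩
    apply Finset.ext
    intro z
    simp only [Finset.mem_inter, Finset.mem_filter, Finset.mem_Ioo]
    constructor
    · rintro ⟨⟨⟨hu1, hu2⟩, hzpre⟩, hzx, hzy⟩
      exact (hpre z (Finset.mem_Ioo.2 ⟨hzx, hzy⟩)).1 hzpre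
    · intro hzM
      obtain ⟨hzx, hzy⟩ := Finset.mem_Ioo.1 (hM₀ hzM)
      exact ⟨⟨⟨by omega, by omega⟩, (hpre z (Finset.mem_Ioo.2 ⟨hzx, hzy⟩)).2 hzM⟩, hzx, hzy⟩
  have hfmem : (⟨uu, vv, (Finset.Ioo uu vv).filter (· ∈ pre)⟩ : Fence) ∈ 𝓕 :=
    hdown.2 _ hf₀ _ hval hforce
  apply Relation.EqvGen.rel
  refine ⟨_, hfmem, pre, suf, Or.inr ⟨rfl, rfl⟩, ?_, ?_⟩
  · intro z hz
    exact (Finset.mem_filter.1 hz).2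
  · intro z hzI hzL
    have hzI2 : z ∈ Finset.Ioo uu vv := hzI
    obtain ⟨huz, hzv⟩ : uu < z ∧ z < vv := Finset.mem_Ioo.1 hzI2
    have hznpre : z ∉ pre := fun h => hzL (Finset.mem_filter.2 ⟨hzI2, h⟩)
    have hzIcc : z ∈ Finset.Icc 1 n := Finset.mem_Icc.2 ⟨by omega, by omega⟩
    rcases hfull z hzIcc with h | h | h | h
    · exact absurd h hznpre
    · omega
    · omega
    · exact h

lemma move_big {n : ℕ} {𝓕 : Set Fence} (hdown : IsFenceDownset n 𝓕)
    {x y : ℕ} {M₀ : Finset ℕ} (hM₀ : M₀ ⊆ Finset.Ioo x y) (hxy : x < y)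
    (hf₀ : (⟨x, y, M₀⟩ : Fence) ∈ 𝓕) :
    ∀ (t pre suf : List ℕ) (vv : ℕ),
    (∀ z ∈ t, 1 ≤ z ∧ z ≤ x) → (y ≤ vv ∧ vv ≤ n) →
    (∀ z ∈ Finset.Ioo x y, (z ∈ pre ↔ z ∈ M₀)) →
    (∀ z : ℕ, z ∈ Finset.Icc 1 n → (z ∈ pre ∨ z = vv ∨ z ∈ t ∨ z ∈ suf)) →
    PermEquiv 𝓕 (pre ++ vv :: (t ++ suf)) (pre ++ (t ++ vv :: suf)) := by
  intro t
  induction t with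
  | nil =>
    intro pre suf vv _ _ _ _
    simp only [List.nil_append]
    exact Relation.EqvGen.refl _
  | cons uu t' ih =>
    intro pre suf vv ht hv hpre hfull
    obtain ⟨h1u, hux⟩ := ht uu (List.mem_cons_self)
    have s1 : PermEquiv 𝓕 (pre ++ vv :: uu :: (t' ++ suf)) (pre ++ uu :: vv :: (t' ++ suf)) := by
      refine swap_step hdown hM₀ hf₀ h1u hux hv.1 hv.2 hxy hpre ?_
      intro z hz
      rcases hfull z hz with h | h | h | h
      · exact Or.inl h
      · exact Or.inr (Or.inr (Or.inl h))
      · rcases List.mem_cons.1 h with rfl | h'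
        · exact Or.inr (Or.inl rfl)
        · exact Or.inr (Or.inr (Or.inr (List.mem_append_left _ h')))
      · exact Or.inr (Or.inr (Or.inr (List.mem_append_right _ h)))
    have s2 : PermEquiv 𝓕 ((pre ++ [uu]) ++ vv :: (t' ++ suf))
        ((pre ++ [uu]) ++ (t' ++ vv :: suf)) := by
      refine ih (pre ++ [uu]) suf vv (fun z hz => ht z (List.mem_cons_of_mem _ hz)) hv ?_ ?_
      · intro z hz
        obtain ⟨hxz, hzy⟩ := Finset.mem_Ioo.1 hz
        have : z ≠ uu := by omega
        simp only [List.mem_append, List.mem_singleton, this, or_false]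
        exact hpre z hz
      · intro z hz
        rcases hfull z hz with h | h | h | h
        · exact Or.inl (List.mem_append_left _ h)
        · exact Or.inr (Or.inl h)
        · rcases List.mem_cons.1 h with rfl | h'
          · exact Or.inl (List.mem_append_right _ (List.mem_singleton_self _))
          · exact Or.inr (Or.inr (Or.inl h'))
        · exact Or.inr (Or.inr (Or.inr h))
    have s2' : PermEquiv 𝓕 (pre ++ uu :: vv :: (t' ++ suf)) (pre ++ (uu :: t' ++ vv :: suf)) := by
      simpa [List.append_assoc] using s2
    exact Relation.EqvGen.trans _ _ _ s1 s2'

lemma bubble {n : ℕ} {𝓕 : Set Fence} (hdown : IsFenceDownset n 𝓕)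
    {x y : ℕ} {M₀ : Finset ℕ} (hM₀ : M₀ ⊆ Finset.Ioo x y) (hxy : x < y)
    (hyn : y ≤ n) (hf₀ : (⟨x, y, M₀⟩ : Fence) ∈ 𝓕) :
    ∀ (s pre suf : List ℕ),
    (∀ z ∈ s, 1 ≤ z ∧ z ≤ n ∧ (z ≤ x ∨ y ≤ z)) →
    (∀ z ∈ Finset.Ioo x y, (z ∈ pre ↔ z ∈ M₀)) →
    (∀ z : ℕ, z ∈ Finset.Icc 1 n → (z ∈ pre ∨ z ∈ s ∨ z ∈ suf)) →
    PermEquiv 𝓕 (pre ++ (s ++ suf))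
      (pre ++ (s.filter (fun z => decide (z ≤ x)) ++
        (s.filter (fun z => decide (¬ z ≤ x)) ++ suf))) := by
  intro s
  induction s with
  | nil =>
    intro pre suf _ _ _
    simp only [List.filter_nil, List.nil_append]
    exact Relation.EqvGen.refl _
  | cons c s' ih =>
    intro pre suf hs hpre hfull
    obtain ⟨h1c, hcn, hcx⟩ := hs c (List.mem_cons_self)
    have hcI : c ∉ Finset.Ioo x y := by
      simp only [Finset.mem_Ioo]
      omega
    have hpre' : ∀ z ∈ Finset.Ioo x y, (z ∈ pre ++ [c] ↔ z ∈ M₀) := by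
      intro z hz
      have : z ≠ c := fun h => hcI (h ▸ hz)
      simp only [List.mem_append, List.mem_singleton, this, or_false]
      exact hpre z hz
    have hfull' : ∀ z : ℕ, z ∈ Finset.Icc 1 n → (z ∈ pre ++ [c] ∨ z ∈ s' ∨ z ∈ suf) := by
      intro z hz
      rcases hfull z hz with h | h | h
      · exact Or.inl (List.mem_append_left _ h)
      · rcases List.mem_cons.1 h with rfl | h'
        · exact Or.inl (List.mem_append_right _ (List.mem_singleton_self _))
        · exact Or.inr (Or.inl h')
      · exact Or.inr (Or.inr h)
    have hrec := ih (pre ++ [c]) suf (fun z hz => hs z (List.mem_cons_of_mem _ hz)) hpre' hfull'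
    by_cases hc : c ≤ x
    · -- c is small : it stays in front
      have hfil1 : (c :: s').filter (fun z => decide (z ≤ x)) =
          c :: s'.filter (fun z => decide (z ≤ x)) := by
        simp [List.filter_cons, hc]
      have hfil2 : (c :: s').filter (fun z => decide (¬ z ≤ x)) =
          s'.filter (fun z => decide (¬ z ≤ x)) := by
        simp [List.filter_cons, hc]
      rw [hfil1, hfil2]
      simpa [List.append_assoc] using hrec
    · -- c is big : sort the rest, then move c over the small part
      have hyc : y ≤ c := by omega
      have hfil1 : (c :: s').filter (fun z => decide (z ≤ x)) =
          s'.filter (fun z => decide (z ≤ x)) := by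
        simp [List.filter_cons, hc]
      have hfil2 : (c :: s').filter (fun z => decide (¬ z ≤ x)) =
          c :: s'.filter (fun z => decide (¬ z ≤ x)) := by
        simp [List.filter_cons, hc]
      rw [hfil1, hfil2]
      have e1 : PermEquiv 𝓕 (pre ++ (c :: s' ++ suf))
          (pre ++ c :: (s'.filter (fun z => decide (z ≤ x)) ++
            (s'.filter (fun z => decide (¬ z ≤ x)) ++ suf))) := by
        simpa [List.append_assoc] using hrec
      have e2 : PermEquiv 𝓕
          (pre ++ c :: (s'.filter (fun z => decide (z ≤ x)) ++
            (s'.filter (fun z => decide (¬ z ≤ x)) ++ suf)))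
          (pre ++ (s'.filter (fun z => decide (z ≤ x)) ++
            c :: (s'.filter (fun z => decide (¬ z ≤ x)) ++ suf))) := by
        refine move_big hdown hM₀ hxy hf₀ _ pre _ c ?_ ⟨hyc, hcn⟩ hpre ?_
        · intro z hz
          have hz' := List.mem_filter.1 hz
          obtain ⟨hz1, hz2, _⟩ := hs z (List.mem_cons_of_mem _ hz'.1)
          exact ⟨hz1, by simpa using hz'.2⟩
        · intro z hz
          rcases hfull z hz with h | h | h
          · exact Or.inl h
          · rcases List.mem_cons.1 h with rfl | h'
            · exact Or.inr (Or.inl rfl)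
            · by_cases hzx : z ≤ x
              · exact Or.inr (Or.inr (Or.inl (List.mem_filter.2 ⟨h', by simpa using hzx⟩)))
              · exact Or.inr (Or.inr (Or.inr (List.mem_append_left _
                  (List.mem_filter.2 ⟨h', by simpa using hzx⟩))))
          · exact Or.inr (Or.inr (Or.inr (List.mem_append_right _ h)))
      have e3 : PermEquiv 𝓕 (pre ++ (c :: s' ++ suf))
          (pre ++ (s'.filter (fun z => decide (z ≤ x)) ++
            c :: (s'.filter (fun z => decide (¬ z ≤ x)) ++ suf))) :=
        Relation.EqvGen.trans _ _ _ e1 e2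
      simpa [List.append_assoc] using e3
lemma linearizes_glue {L R : List (Finset ℕ)} {B : Finset ℕ} {μL s μR : List ℕ}
    (h1 : Linearizes μL L) (hs : s.Nodup) (hsB : ∀ z : ℕ, z ∈ s ↔ z ∈ B)
    (h2 : Linearizes μR R) : Linearizes (μL ++ (s ++ μR)) (L ++ B :: R) := by
  obtain ⟨ls1, rfl, hF1⟩ := h1
  obtain ⟨ls2, rfl, hF2⟩ := h2
  exact ⟨ls1 ++ s :: ls2, by simp [List.flatten_append], List.rel_append hF1
    (List.Forall₂.cons ⟨hs, hsB⟩ hF2)⟩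

lemma linearizes_cons_build {R : List (Finset ℕ)} {B : Finset ℕ} {s μR : List ℕ}
    (hs : s.Nodup) (hsB : ∀ z : ℕ, z ∈ s ↔ z ∈ B) (h2 : Linearizes μR R) :
    Linearizes (s ++ μR) (B :: R) := by
  obtain ⟨ls2, rfl, hF2⟩ := h2
  exact ⟨s :: ls2, by simp, List.Forall₂.cons ⟨hs, hsB⟩ hF2⟩

lemma not_stable_of_fence {n : ℕ} {𝓕 : Set Fence} (hdown : IsFenceDownset n 𝓕)
    {L R : List (Finset ℕ)} {B : Finset ℕ}
    (hP : IsOSP (Finset.Icc 1 n) (L ++ B :: R))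
    {x y : ℕ} (hx : x ∈ B) (hy : y ∈ B) (hxy : x < y)
    (hcons : ∀ z ∈ B, ¬(x < z ∧ z < y))
    (hmem : (⟨x, y, Finset.Ioo x y ∩ blocksUnion L⟩ : Fence) ∈ 𝓕) :
    ¬ StableOSP 𝓕 (Finset.Icc 1 n) (L ++ B :: R) := by
  intro hst
  have hxIcc : x ∈ Finset.Icc 1 n := (hP.2.2 x).2 ⟨B, by simp, hx⟩
  have hyIcc : y ∈ Finset.Icc 1 n := (hP.2.2 y).2 ⟨B, by simp, hy⟩
  have hx1 : 1 ≤ x := (Finset.mem_Icc.1 hxIcc).1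
  have hyn : y ≤ n := (Finset.mem_Icc.1 hyIcc).2
  have hM₀ : Finset.Ioo x y ∩ blocksUnion L ⊆ Finset.Ioo x y := Finset.inter_subset_left
  have hBIcc : ∀ z ∈ B, 1 ≤ z ∧ z ≤ n := by
    intro z hz
    have := (hP.2.2 z).2 ⟨B, by simp, hz⟩
    exact Finset.mem_Icc.1 this
  have hBsplit : ∀ z ∈ B, z ≤ x ∨ y ≤ z := by
    intro z hz
    by_cases h : z ≤ x
    · exact Or.inl h
    · refine Or.inr ?_
      by_contra h2
      exact hcons z hz ⟨by omega, by omega⟩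
  set A₁ : Finset ℕ := B.filter (fun z => z ≤ x) with hA₁
  set A₂ : Finset ℕ := B.filter (fun z => ¬ z ≤ x) with hA₂
  have hmemA₁ : ∀ z : ℕ, z ∈ A₁ ↔ z ∈ B ∧ z ≤ x := by
    intro z; simp [hA₁]
  have hmemA₂ : ∀ z : ℕ, z ∈ A₂ ↔ z ∈ B ∧ ¬ z ≤ x := by
    intro z; simp [hA₂]
  have hxA₁ : x ∈ A₁ := (hmemA₁ x).2 ⟨hx, le_rfl⟩
  have hyA₂ : y ∈ A₂ := (hmemA₂ y).2 ⟨hy, by omega⟩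
  set Q : List (Finset ℕ) := L ++ A₁ :: A₂ :: R with hQdef
  have hA₁B : A₁ ⊆ B := Finset.filter_subset _ _
  have hA₂B : A₂ ⊆ B := Finset.filter_subset _ _
  -- Q is an OSP
  have hQosp : IsOSP (Finset.Icc 1 n) Q := by
    refine ⟨?_, ?_, ?_⟩
    · intro C hC
      rcases List.mem_append.1 hC with h | h
      · exact hP.1 C (List.mem_append_left _ h)
      · rcases List.mem_cons.1 h with rfl | h
        · exact ⟨x, hxA₁⟩
        · rcases List.mem_cons.1 h with rfl | h
          · exact ⟨y, hyA₂⟩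
          · exact hP.1 C (List.mem_append_right _ (List.mem_cons_of_mem _ h))
    · have hpw := hP.2.1
      rw [List.pairwise_append] at hpw ⊢
      obtain ⟨hL, hBR, hcross⟩ := hpw
      rcases List.pairwise_cons.1 hBR with ⟨hBdisj, hRpw⟩
      refine ⟨hL, ?_, ?_⟩
      · refine List.Pairwise.cons ?_ (List.Pairwise.cons ?_ hRpw)
        · intro C hC
          rcases List.mem_cons.1 hC with rfl | hC
          · exact Finset.disjoint_filter_filter_not B B _
          · exact Finset.disjoint_of_subset_left hA₁B (hBdisj C hC)
        · intro C hC
          exact Finset.disjoint_of_subset_left hA₂B (hBdisj C hC)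
      · intro a ha b hb
        rcases List.mem_cons.1 hb with rfl | hb
        · exact Finset.disjoint_of_subset_right hA₁B
            (hcross a ha B (List.mem_cons_self))
        · rcases List.mem_cons.1 hb with rfl | hb
          · exact Finset.disjoint_of_subset_right hA₂B
              (hcross a ha B (List.mem_cons_self))
          · exact hcross a ha b (List.mem_cons_of_mem _ hb)
    · intro z
      rw [hP.2.2 z]
      constructor
      · rintro ⟨C, hC, hzC⟩
        rcases List.mem_append.1 hC with h | h
        · exact ⟨C, List.mem_append_left _ h, hzC⟩
        · rcases List.mem_cons.1 h with rfl | h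
          · by_cases hzx : z ≤ x
            · exact ⟨A₁, by simp [hQdef], (hmemA₁ z).2 ⟨hzC, hzx⟩⟩
            · exact ⟨A₂, by simp [hQdef], (hmemA₂ z).2 ⟨hzC, hzx⟩⟩
          · exact ⟨C, List.mem_append_right _ (List.mem_cons_of_mem _
              (List.mem_cons_of_mem _ h)), hzC⟩
      · rintro ⟨C, hC, hzC⟩
        rcases List.mem_append.1 hC with h | h
        · exact ⟨C, List.mem_append_left _ h, hzC⟩
        · rcases List.mem_cons.1 h with rfl | h
          · exact ⟨B, by simp, hA₁B hzC⟩
          · rcases List.mem_cons.1 h with rfl | h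
            · exact ⟨B, by simp, hA₂B hzC⟩
            · exact ⟨C, List.mem_append_right _ (List.mem_cons_of_mem _ h), hzC⟩
  -- P and Q are equivalent
  have hospeq : OSPEquiv 𝓕 (L ++ B :: R) Q := by
    constructor
    · -- every linearization of P is equivalent to one of Q
      intro l hl
      obtain ⟨μL, μrest, rfl, hlinL, hlinrest⟩ := linearizes_append hl
      obtain ⟨ls, rfl, hF⟩ := hlinrest
      rcases List.forall₂_cons_right_iff.1 hF with ⟨s, ls', hrel, hF', rfl⟩
      have hflat : (s :: ls').flatten = s ++ ls'.flatten := by simp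
      have hlinR : Linearizes ls'.flatten R := ⟨ls', rfl, hF'⟩
      have hsB : ∀ z : ℕ, z ∈ s ↔ z ∈ B := hrel.2
      have hsmall : ∀ z ∈ s, 1 ≤ z ∧ z ≤ n ∧ (z ≤ x ∨ y ≤ z) := by
        intro z hz
        have hzB := (hsB z).1 hz
        obtain ⟨h1, h2⟩ := hBIcc z hzB
        exact ⟨h1, h2, hBsplit z hzB⟩
      have hpre : ∀ z ∈ Finset.Ioo x y, (z ∈ μL ↔ z ∈ Finset.Ioo x y ∩ blocksUnion L) := by
        intro z hz
        rw [linearizes_mem hlinL, Finset.mem_inter]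
        constructor
        · rintro ⟨C, hC, hzC⟩
          exact ⟨hz, mem_blocksUnion.2 ⟨C, hC, hzC⟩⟩
        · rintro ⟨_, h⟩
          exact mem_blocksUnion.1 h
      have hfull : ∀ z : ℕ, z ∈ Finset.Icc 1 n →
          (z ∈ μL ∨ z ∈ s ∨ z ∈ ls'.flatten) := by
        intro z hz
        obtain ⟨C, hC, hzC⟩ := (hP.2.2 z).1 hz
        rcases List.mem_append.1 hC with h | h
        · exact Or.inl ((linearizes_mem hlinL).2 ⟨C, h, hzC⟩)
        · rcases List.mem_cons.1 h with rfl | h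
          · exact Or.inr (Or.inl ((hsB z).2 hzC))
          · exact Or.inr (Or.inr ((linearizes_mem hlinR).2 ⟨C, h, hzC⟩))
      have hperm := bubble hdown hM₀ hxy hyn hmem s μL ls'.flatten hsmall hpre hfull
      set s₁ := s.filter (fun z => decide (z ≤ x)) with hs₁
      set s₂ := s.filter (fun z => decide (¬ z ≤ x)) with hs₂
      have hs₁rel : s₁.Nodup ∧ ∀ z : ℕ, z ∈ s₁ ↔ z ∈ A₁ := by
        refine ⟨hrel.1.filter _, fun z => ?_⟩
        rw [hmemA₁]
        simp [hs₁, List.mem_filter, hsB z]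
      have hs₂rel : s₂.Nodup ∧ ∀ z : ℕ, z ∈ s₂ ↔ z ∈ A₂ := by
        refine ⟨hrel.1.filter _, fun z => ?_⟩
        rw [hmemA₂]
        simp [hs₂, List.mem_filter, hsB z]
      refine ⟨μL ++ (s₁ ++ (s₂ ++ ls'.flatten)), ?_, ?_⟩
      · exact linearizes_glue hlinL hs₁rel.1 hs₁rel.2
          (linearizes_cons_build hs₂rel.1 hs₂rel.2 hlinR)
      · simpa [hflat] using hperm
    · -- every linearization of Q is (equal to) one of P
      intro m hm
      obtain ⟨μL, μrest, rfl, hlinL, hlinrest⟩ := linearizes_append hm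
      obtain ⟨ls, rfl, hF⟩ := hlinrest
      rcases List.forall₂_cons_right_iff.1 hF with ⟨s₁, ls₂, hrel₁, hF₂, rfl⟩
      rcases List.forall₂_cons_right_iff.1 hF₂ with ⟨s₂, ls₃, hrel₂, hF₃, rfl⟩
      have hlinR : Linearizes ls₃.flatten R := ⟨ls₃, rfl, hF₃⟩
      have hs12 : (s₁ ++ s₂).Nodup := by
        rw [List.nodup_append]
        refine ⟨hrel₁.1, hrel₂.1, ?_⟩
        intro z hz1 z' hz2 hzz; subst hzz
        have h1 := (hmemA₁ z).1 ((hrel₁.2 z).1 hz1)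
        have h2 := (hmemA₂ z).1 ((hrel₂.2 z).1 hz2)
        exact h2.2 h1.2
      have hs12B : ∀ z : ℕ, z ∈ s₁ ++ s₂ ↔ z ∈ B := by
        intro z
        rw [List.mem_append, hrel₁.2 z, hrel₂.2 z, hmemA₁, hmemA₂]
        constructor
        · rintro (⟨h, _⟩ | ⟨h, _⟩) <;> exact h
        · intro h
          by_cases hzx : z ≤ x
          · exact Or.inl ⟨h, hzx⟩
          · exact Or.inr ⟨h, hzx⟩
      refine ⟨μL ++ ((s₁ ++ s₂) ++ ls₃.flatten), ?_, ?_⟩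
      · exact linearizes_glue hlinL hs12 hs12B hlinR
      · have : μL ++ ((s₁ ++ s₂) ++ ls₃.flatten) = μL ++ (s₁ :: s₂ :: ls₃).flatten := by
          simp
        rw [this]
        exact Relation.EqvGen.refl _
  have hlen := hst Q hQosp hospeq
  rw [hQdef] at hlen
  simp only [List.length_append, List.length_cons] at hlen
  omega

/-- An ordered set partition `F` of `[n]` is stable if and only if for every block `B`
(with prefix `L` of earlier blocks) and every pair of consecutive elements `x < y` of
`B`, the fence `f(x, y, ]x,y[ ∩ ⋃L)` does not belong to `𝓕`. -/
theorem stable_iff_no_consecutive_fence (n : ℕ) (𝓕 : Set Fence)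
    (hdown : IsFenceDownset n 𝓕)
    (P : List (Finset ℕ)) (hP : IsOSP (Finset.Icc 1 n) P) :
    StableOSP 𝓕 (Finset.Icc 1 n) P ↔
      ∀ (L : List (Finset ℕ)) (B : Finset ℕ) (R : List (Finset ℕ)),
        P = L ++ B :: R →
        ∀ x y : ℕ, x ∈ B → y ∈ B → x < y → (∀ z ∈ B, ¬ (x < z ∧ z < y)) →
          (⟨x, y, Finset.Ioo x y ∩ blocksUnion L⟩ : Fence) ∉ 𝓕 := by
  constructor
  · intro hst L B R hPeq x y hx hy hxy hcons hmem
    exact not_stable_of_fence hdown (hPeq ▸ hP) hx hy hxy hcons hmem (hPeq ▸ hst)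
  · intro hgood Q hQ hequiv
    refine osp_length_le hP hQ ?_
    intro A hA x y hx hy
    obtain ⟨L, R, hPeq⟩ := List.append_of_mem hA
    refine coBlock_all hQ.2.1 ?_ ?_ x y hx hy
    · intro a b ha hb hab hconsab
      exact coBlock_of_consecutive hdown (hPeq ▸ hP) ha hb hab hconsab
        (hgood L A R hPeq a b ha hb hab hconsab) hQ (hPeq ▸ hequiv)
    · intro a ha
      exact (hQ.2.2 a).1 ((hP.2.2 a).2 ⟨A, hA, ha⟩)
end

section
/- Let F = A₁|…|A_k be a stable ordered set partition of [n] and let j ∈ [k−1]. If the ordered set partition F′ = A₁|…|A_{j−1}|A_{j+1}|A_j|A_{j+2}|…|A_k (obtained from F by transposing the adjacent blocks A_j and A_{j+1}) is stable and F is not equivalent to F′, then the ordered set partition F″ = A₁|…|A_{j−1}|(A_j ∪ A_{j+1})|A_{j+2}|…|A_k (obtained from F by merging the blocks A_j and A_{j+1}) is stable. -/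
namespace MergeStable

/-- `x` occurs strictly before `y` in `l`. -/
def Bef (l : List ℕ) (x y : ℕ) : Prop :=
  x ∈ l ∧ y ∈ l ∧ l.idxOf x < l.idxOf y

lemma Bef.asymm {l : List ℕ} {x y : ℕ} (h1 : Bef l x y) (h2 : Bef l y x) : False := by
  have := h1.2.2; have := h2.2.2; omega

lemma bef_total {l : List ℕ} {x y : ℕ} (hx : x ∈ l) (hy : y ∈ l) (hne : x ≠ y) :
    Bef l x y ∨ Bef l y x := by
  have h : l.idxOf x ≠ l.idxOf y := by
    intro h; exact hne ((List.idxOf_inj hx).1 h)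
  rcases Nat.lt_or_ge (l.idxOf x) (l.idxOf y) with h' | h'
  · exact Or.inl ⟨hx, hy, h'⟩
  · exact Or.inr ⟨hy, hx, by omega⟩

lemma shape_facts {u w : List ℕ} {x y : ℕ} (h : (u ++ x :: y :: w).Nodup) :
    x ∉ u ∧ y ∉ u ∧ x ≠ y ∧ x ∉ w ∧ y ∉ w ∧ u.Nodup ∧ w.Nodup := by
  rw [List.nodup_append] at h
  obtain ⟨hu, hc, hd⟩ := h
  rw [List.nodup_cons] at hc
  obtain ⟨hx, hc⟩ := hc
  rw [List.nodup_cons] at hc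
  obtain ⟨hy, hw⟩ := hc
  have hxu : x ∉ u := fun h => hd x h x (by simp) rfl
  have hyu : y ∉ u := fun h => hd y h y (by simp) rfl
  simp only [List.mem_cons, not_or] at hx
  exact ⟨hxu, hyu, hx.1, hx.2, hy, hu, hw⟩

lemma idx_shape_x {u w : List ℕ} {x y : ℕ} (hxu : x ∉ u) :
    (u ++ x :: y :: w).idxOf x = u.length := by
  rw [List.idxOf_append_of_notMem hxu, List.idxOf_cons_self]; omega

lemma idx_shape_y {u w : List ℕ} {x y : ℕ} (hyu : y ∉ u) (hxy : x ≠ y) :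
    (u ++ x :: y :: w).idxOf y = u.length + 1 := by
  rw [List.idxOf_append_of_notMem hyu, List.idxOf_cons_ne _ hxy, List.idxOf_cons_self]

lemma idx_shape_w {u w : List ℕ} {x y e : ℕ} (heu : e ∉ u) (hex : x ≠ e) (hey : y ≠ e) :
    (u ++ x :: y :: w).idxOf e = u.length + 2 + w.idxOf e := by
  rw [List.idxOf_append_of_notMem heu, List.idxOf_cons_ne _ hex, List.idxOf_cons_ne _ hey]
  omega

lemma idx_shape_u {u w : List ℕ} {x y e : ℕ} (heu : e ∈ u) :
    (u ++ x :: y :: w).idxOf e = u.idxOf e ∧ u.idxOf e < u.length :=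
  ⟨List.idxOf_append_of_mem heu, List.idxOf_lt_length_iff.2 heu⟩

lemma bef_append {u v : List ℕ} {x y : ℕ} (hn : (u ++ v).Nodup) (hx : x ∈ u) (hy : y ∈ v) :
    Bef (u ++ v) x y := by
  have hyu : y ∉ u := by
    rw [List.nodup_append] at hn
    exact fun hh => hn.2.2 y hh y hy rfl
  refine ⟨by simp [hx], by simp [hy], ?_⟩
  rw [List.idxOf_append_of_mem hx, List.idxOf_append_of_notMem hyu]
  have := List.idxOf_lt_length_iff.2 hx
  omega

/-- `x` is immediately before `y`. -/
lemma bef_shape {u w : List ℕ} {x y : ℕ} (hn : (u ++ x :: y :: w).Nodup) :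
    Bef (u ++ x :: y :: w) x y := by
  obtain ⟨hxu, hyu, hxy, _⟩ := shape_facts hn
  exact ⟨by simp, by simp, by rw [idx_shape_x hxu, idx_shape_y hyu hxy]; omega⟩

/-- The swapped list is also Nodup. -/
lemma nodup_swap {u w : List ℕ} {x y : ℕ} (hn : (u ++ x :: y :: w).Nodup) :
    (u ++ y :: x :: w).Nodup := by
  have hp : (u ++ x :: y :: w).Perm (u ++ y :: x :: w) :=
    List.Perm.append_left u (List.Perm.swap y x w)
  exact hp.nodup hn

/-- Key order-preservation lemma: swapping an adjacent pair does not change the relative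
order of any other pair. -/
lemma bef_swap_iff {u w : List ℕ} {x y p q : ℕ} (hn : (u ++ x :: y :: w).Nodup)
    (h1 : ¬(p = x ∧ q = y)) (h2 : ¬(p = y ∧ q = x)) :
    Bef (u ++ x :: y :: w) p q ↔ Bef (u ++ y :: x :: w) p q := by
  obtain ⟨hxu, hyu, hxy, hxw, hyw, hun, hwn⟩ := shape_facts hn
  have hmem : ∀ e : ℕ, e ∈ u ++ x :: y :: w ↔ e ∈ u ++ y :: x :: w := by
    intro e; simp only [List.mem_append, List.mem_cons]; tauto
  have key : ∀ e : ℕ, e ∈ u ++ x :: y :: w →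
      ((u ++ x :: y :: w).idxOf e < u.length ∧
        (u ++ y :: x :: w).idxOf e = (u ++ x :: y :: w).idxOf e) ∨
      (e = x ∧ (u ++ x :: y :: w).idxOf e = u.length ∧
        (u ++ y :: x :: w).idxOf e = u.length + 1) ∨
      (e = y ∧ (u ++ x :: y :: w).idxOf e = u.length + 1 ∧
        (u ++ y :: x :: w).idxOf e = u.length) ∨
      ((u ++ x :: y :: w).idxOf e ≥ u.length + 2 ∧
        (u ++ y :: x :: w).idxOf e = (u ++ x :: y :: w).idxOf e) := by
    intro e he
    by_cases heu : e ∈ u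
    · left
      obtain ⟨e1, e2⟩ := idx_shape_u (w := w) (x := x) (y := y) heu
      obtain ⟨e3, _⟩ := idx_shape_u (w := w) (x := y) (y := x) heu
      rw [e1, e3]; omega
    · by_cases hex : e = x
      · subst hex
        right; left
        exact ⟨rfl, idx_shape_x hxu, idx_shape_y hxu (Ne.symm hxy)⟩
      · by_cases hey : e = y
        · subst hey
          right; right; left
          exact ⟨rfl, idx_shape_y hyu hxy, idx_shape_x hyu⟩
        · right; right; right
          have hew : e ∈ w := by
            simp only [List.mem_append, List.mem_cons] at he
            tauto
          rw [idx_shape_w heu (fun h => hex h.symm) (fun h => hey h.symm),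
            idx_shape_w heu (fun h => hey h.symm) (fun h => hex h.symm)]
          omega
  constructor
  · rintro ⟨hp, hq, hlt⟩
    refine ⟨(hmem p).1 hp, (hmem q).1 hq, ?_⟩
    rcases key p hp with ⟨a1, a2⟩ | ⟨a0, a1, a2⟩ | ⟨a0, a1, a2⟩ | ⟨a1, a2⟩ <;>
      rcases key q hq with ⟨b1, b2⟩ | ⟨b0, b1, b2⟩ | ⟨b0, b1, b2⟩ | ⟨b1, b2⟩ <;>
      first
        | omega
        | (exact absurd ⟨a0, b0⟩ h1)
        | (exact absurd ⟨a0, b0⟩ h2)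
  · rintro ⟨hp, hq, hlt⟩
    have hp' := (hmem p).2 hp
    have hq' := (hmem q).2 hq
    refine ⟨hp', hq', ?_⟩
    rcases key p hp' with ⟨a1, a2⟩ | ⟨a0, a1, a2⟩ | ⟨a0, a1, a2⟩ | ⟨a1, a2⟩ <;>
      rcases key q hq' with ⟨b1, b2⟩ | ⟨b0, b1, b2⟩ | ⟨b0, b1, b2⟩ | ⟨b1, b2⟩ <;>
      first
        | omega
        | (exact absurd ⟨a0, b0⟩ h1)
        | (exact absurd ⟨a0, b0⟩ h2)

lemma fenceRel_perm {f : Fence} {l₁ l₂ : List ℕ} (h : FenceRel f l₁ l₂) : l₁.Perm l₂ := by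
  obtain ⟨u, w, hor, -, -⟩ := h
  rcases hor with ⟨h1, h2⟩ | ⟨h1, h2⟩ <;> subst h1 <;> subst h2 <;>
    exact List.Perm.append_left u (List.Perm.swap _ _ w)

lemma permEquiv_perm {𝓕 : Set Fence} {l₁ l₂ : List ℕ} (h : PermEquiv 𝓕 l₁ l₂) :
    l₁.Perm l₂ := by
  induction h with
  | rel a b hab => obtain ⟨f, -, hf⟩ := hab; exact fenceRel_perm hf
  | refl a => exact List.Perm.refl a
  | symm a b _ ih => exact ih.symm
  | trans a b c _ _ ih₁ ih₂ => exact ih₁.trans ih₂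

lemma permEquiv_refl (𝓕 : Set Fence) (l : List ℕ) : PermEquiv 𝓕 l l := Relation.EqvGen.refl l

lemma permEquiv_symm {𝓕 : Set Fence} {l₁ l₂ : List ℕ} (h : PermEquiv 𝓕 l₁ l₂) :
    PermEquiv 𝓕 l₂ l₁ := Relation.EqvGen.symm _ _ h

lemma permEquiv_trans {𝓕 : Set Fence} {l₁ l₂ l₃ : List ℕ} (h : PermEquiv 𝓕 l₁ l₂)
    (h' : PermEquiv 𝓕 l₂ l₃) : PermEquiv 𝓕 l₁ l₃ := Relation.EqvGen.trans _ _ _ h h'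

lemma ospEquiv_symm {𝓕 : Set Fence} {P Q : List (Finset ℕ)} (h : OSPEquiv 𝓕 P Q) :
    OSPEquiv 𝓕 Q P := by
  obtain ⟨h1, h2⟩ := h
  constructor
  · intro l hl; obtain ⟨m, hm, he⟩ := h2 l hl; exact ⟨m, hm, permEquiv_symm he⟩
  · intro m hm; obtain ⟨l, hl, he⟩ := h1 m hm; exact ⟨l, hl, permEquiv_symm he⟩

lemma ospEquiv_trans {𝓕 : Set Fence} {P Q S : List (Finset ℕ)} (h : OSPEquiv 𝓕 P Q)
    (h' : OSPEquiv 𝓕 Q S) : OSPEquiv 𝓕 P S := by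
  obtain ⟨h1, h2⟩ := h
  obtain ⟨h1', h2'⟩ := h'
  constructor
  · intro l hl
    obtain ⟨m, hm, he⟩ := h1 l hl
    obtain ⟨r, hr, he'⟩ := h1' m hm
    exact ⟨r, hr, permEquiv_trans he he'⟩
  · intro r hr
    obtain ⟨m, hm, he⟩ := h2' r hr
    obtain ⟨l, hl, he'⟩ := h2 m hm
    exact ⟨l, hl, permEquiv_trans he' (permEquiv_symm (permEquiv_trans (permEquiv_symm he) (permEquiv_refl _ _)))⟩


lemma bef_pair_w {u w : List ℕ} {s t d : ℕ} (hn : (u ++ s :: t :: w).Nodup) (hd : d ∈ w) :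
    Bef (u ++ s :: t :: w) s d ∧ Bef (u ++ s :: t :: w) t d := by
  obtain ⟨hsu, htu, hst, hsw, htw, hun, hwn⟩ := shape_facts hn
  have hdu : d ∉ u := by
    rw [List.nodup_append] at hn
    exact fun hh => hn.2.2 d hh d (by simp [hd]) rfl
  have hds : s ≠ d := fun h => hsw (h ▸ hd)
  have hdt : t ≠ d := fun h => htw (h ▸ hd)
  have hidx := idx_shape_w (u := u) (w := w) (x := s) (y := t) hdu hds hdt
  have hs := idx_shape_x (u := u) (w := w) (y := t) hsu
  have ht := idx_shape_y (u := u) (w := w) (x := s) htu hst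
  have hdm : d ∈ u ++ s :: t :: w := by simp [hd]
  exact ⟨⟨by simp, hdm, by omega⟩, ⟨by simp, hdm, by omega⟩⟩

/-- Any element of `u` comes before both elements of the adjacent pair. -/
lemma bef_u_pair {u w : List ℕ} {s t d : ℕ} (hn : (u ++ s :: t :: w).Nodup) (hd : d ∈ u) :
    Bef (u ++ s :: t :: w) d s ∧ Bef (u ++ s :: t :: w) d t := by
  have h1 : Bef (u ++ s :: t :: w) d s := bef_append hn hd (by simp)
  have h2 : Bef (u ++ s :: t :: w) d t := bef_append hn hd (by simp)
  exact ⟨h1, h2⟩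

/-- The "shard" interior condition for a fence `g`. -/
def Shard (g : Fence) (l : List ℕ) : Prop :=
  (∀ c ∈ g.L, Bef l c g.a ∧ Bef l c g.b) ∧
  (∀ c ∈ Finset.Ioo g.a g.b, c ∉ g.L → Bef l g.a c ∧ Bef l g.b c)

/-- The invariant separating the two sides of a non-contracted fence `g`. -/
def SInv (g : Fence) (x y : ℕ) (l : List ℕ) : Prop := Bef l x y ∧ Shard g l

lemma move_inv_core {n : ℕ} {𝓕 : Set Fence} (hdown : IsFenceDownset n 𝓕)
    {f : Fence} (hf : f ∈ 𝓕) {u w : List ℕ} {s t : ℕ}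
    (hst : (s = f.a ∧ t = f.b) ∨ (s = f.b ∧ t = f.a))
    (hML : ∀ c ∈ f.L, c ∈ u)
    (hMR : ∀ c ∈ Finset.Ioo f.a f.b, c ∉ f.L → c ∈ w)
    (hn : (u ++ s :: t :: w).Nodup)
    {g : Fence} (hgv : g.Valid n) (hg : g ∉ 𝓕)
    {x y : ℕ} (hxy : (x = g.a ∧ y = g.b) ∨ (x = g.b ∧ y = g.a)) :
    (SInv g x y (u ++ s :: t :: w) ↔ SInv g x y (u ++ t :: s :: w)) := by
  have hfv : f.Valid n := hdown.1 f hf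
  have hfab : f.a < f.b := hfv.2.1
  have hgab : g.a < g.b := hgv.2.1
  have hgL : g.L ⊆ Finset.Ioo g.a g.b := hgv.2.2.2
  have hfL : f.L ⊆ Finset.Ioo f.a f.b := hfv.2.2.2
  have hn' : (u ++ t :: s :: w).Nodup := nodup_swap hn
  by_cases hh : g.a ≤ f.a ∧ f.b ≤ g.b ∧ (f.a = g.a ∨ f.b = g.b)
  · -- "killing" case: the shard condition fails on both sides
    have hforce : ¬ Fence.Forces g f := fun hfor => hg (hdown.2 f hf g hgv hfor)
    have hne : g.L ∩ Finset.Ioo f.a f.b ≠ f.L := by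
      intro hL; exact hforce ⟨hh.1, hh.2.1, hL⟩
    have hdex : ∃ d, (d ∈ g.L ∧ d ∈ Finset.Ioo f.a f.b ∧ d ∉ f.L) ∨
        (d ∉ g.L ∧ d ∈ f.L) := by
      by_contra hcon
      push_neg at hcon
      apply hne
      ext d
      simp only [Finset.mem_inter]
      constructor
      · rintro ⟨h1, h2⟩
        by_contra h3
        exact h3 ((hcon d).1 h1 h2)
      · intro h1
        have h2 : d ∈ Finset.Ioo f.a f.b := hfL h1
        refine ⟨?_, h2⟩
        by_contra h3
        exact ((hcon d).2 h3) h1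
    obtain ⟨d, hd⟩ := hdex
    have kill : ∀ (s' t' : ℕ), (s' = f.a ∧ t' = f.b) ∨ (s' = f.b ∧ t' = f.a) →
        (u ++ s' :: t' :: w).Nodup → ¬ Shard g (u ++ s' :: t' :: w) := by
      rintro s' t' hst' hn' ⟨hS1, hS2⟩
      have htouch : (g.a = s' ∨ g.a = t') ∨ (g.b = s' ∨ g.b = t') := by
        rcases hh.2.2 with h | h <;> rcases hst' with ⟨h1, h2⟩ | ⟨h1, h2⟩ <;> omega
      rcases hd with ⟨hd1, hd2, hd3⟩ | ⟨hd1, hd2⟩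
      · -- d ∈ g.L, d ∉ f.L: d is in w, but shard needs d before g.a and g.b
        have hdw : d ∈ w := hMR d hd2 hd3
        obtain ⟨hba, hbb⟩ := hS1 d hd1
        obtain ⟨hws, hwt⟩ := bef_pair_w hn' hdw
        rcases htouch with (h | h) | (h | h)
        · exact Bef.asymm hba (h ▸ hws)
        · exact Bef.asymm hba (h ▸ hwt)
        · exact Bef.asymm hbb (h ▸ hws)
        · exact Bef.asymm hbb (h ▸ hwt)
      · -- d ∈ f.L, d ∉ g.L: d is in u, but shard needs d after g.a and g.b
        have hdu : d ∈ u := hML d hd2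
        have hdIoo : d ∈ Finset.Ioo g.a g.b := by
          have := Finset.mem_Ioo.1 (hfL hd2)
          exact Finset.mem_Ioo.2 (by omega)
        obtain ⟨hba, hbb⟩ := hS2 d hdIoo hd1
        obtain ⟨hus, hut⟩ := bef_u_pair hn' hdu
        rcases htouch with (h | h) | (h | h)
        · exact Bef.asymm hba (h ▸ hus)
        · exact Bef.asymm hba (h ▸ hut)
        · exact Bef.asymm hbb (h ▸ hus)
        · exact Bef.asymm hbb (h ▸ hut)
    have hst2 : (t = f.a ∧ s = f.b) ∨ (t = f.b ∧ s = f.a) := by tauto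
    exact iff_of_false (fun hS => kill s t hst hn hS.2) (fun hS => kill t s hst2 hn' hS.2)
  · -- "order-preserving" case: no relevant pair coincides with the moved pair
    have hswap : ∀ p q : ℕ, ¬(p = s ∧ q = t) → ¬(p = t ∧ q = s) →
        (Bef (u ++ s :: t :: w) p q ↔ Bef (u ++ t :: s :: w) p q) := by
      intro p q h1 h2
      exact bef_swap_iff hn h1 h2
    have hLb : ∀ c ∈ g.L, g.a < c ∧ c < g.b := fun c hc => Finset.mem_Ioo.1 (hgL hc)
    unfold SInv Shard
    refine and_congr ?_ (and_congr ?_ ?_)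
    · refine hswap x y ?_ ?_ <;> rintro ⟨rfl, rfl⟩ <;>
        rcases hst with ⟨h1, h2⟩ | ⟨h1, h2⟩ <;> rcases hxy with ⟨h3, h4⟩ | ⟨h3, h4⟩ <;>
        exact hh (by omega)
    · refine forall_congr' fun c => ?_
      refine imp_congr_right fun hc => ?_
      have hcb := hLb c hc
      refine and_congr (hswap c g.a ?_ ?_) (hswap c g.b ?_ ?_) <;> rintro ⟨rfl, rfl⟩ <;>
        rcases hst with ⟨h1, h2⟩ | ⟨h1, h2⟩ <;> exact hh (by omega)
    · refine forall_congr' fun c => ?_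
      refine imp_congr_right fun hc => ?_
      refine imp_congr_right fun hcL => ?_
      have hcb := Finset.mem_Ioo.1 hc
      refine and_congr (hswap g.a c ?_ ?_) (hswap g.b c ?_ ?_) <;> rintro ⟨rfl, rfl⟩ <;>
        rcases hst with ⟨h1, h2⟩ | ⟨h1, h2⟩ <;> exact hh (by omega)

lemma move_inv {n : ℕ} {𝓕 : Set Fence} (hdown : IsFenceDownset n 𝓕)
    {f : Fence} (hf : f ∈ 𝓕) {l₁ l₂ : List ℕ} (hrel : FenceRel f l₁ l₂)
    (hn : l₁.Nodup) {g : Fence} (hgv : g.Valid n) (hg : g ∉ 𝓕)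
    {x y : ℕ} (hxy : (x = g.a ∧ y = g.b) ∨ (x = g.b ∧ y = g.a)) :
    (SInv g x y l₁ ↔ SInv g x y l₂) := by
  obtain ⟨u, w, hor, hML, hMR⟩ := hrel
  rcases hor with ⟨h1, h2⟩ | ⟨h1, h2⟩ <;> subst h1 <;> subst h2
  · exact move_inv_core hdown hf (Or.inl ⟨rfl, rfl⟩) hML hMR hn hgv hg hxy
  · exact move_inv_core hdown hf (Or.inr ⟨rfl, rfl⟩) hML hMR hn hgv hg hxy

lemma sinv_chain {n : ℕ} {𝓕 : Set Fence} (hdown : IsFenceDownset n 𝓕)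
    {g : Fence} (hgv : g.Valid n) (hg : g ∉ 𝓕)
    {x y : ℕ} (hxy : (x = g.a ∧ y = g.b) ∨ (x = g.b ∧ y = g.a))
    {l z : List ℕ} (h : PermEquiv 𝓕 l z) :
    l.Nodup → (SInv g x y l ↔ SInv g x y z) := by
  induction h with
  | rel a b hab =>
    intro hn
    obtain ⟨f, hf, hrel⟩ := hab
    exact move_inv hdown hf hrel hn hgv hg hxy
  | refl a => intro _; rfl
  | symm a b hab ih =>
    intro hbn
    have han : a.Nodup := (permEquiv_perm hab).nodup_iff.2 hbn
    exact (ih han).symm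
  | trans a b c hab hbc ih₁ ih₂ =>
    intro han
    have hbn : b.Nodup := (permEquiv_perm hab).nodup_iff.1 han
    exact (ih₁ han).trans (ih₂ hbn)

/-- CLAIM-P: if somewhere in the `≡`-class of `π = u ++ x :: y :: w` the pair `{x,y}`
appears in the opposite order, then the swap of `x,y` is available in `𝓕`. -/
lemma claimP {n : ℕ} {𝓕 : Set Fence} (hdown : IsFenceDownset n 𝓕)
    {u w : List ℕ} {x y : ℕ} {z : List ℕ}
    (hn : (u ++ x :: y :: w).Nodup)
    (hsupp : ∀ c : ℕ, c ∈ u ++ x :: y :: w ↔ c ∈ Finset.Icc 1 n)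
    (hequiv : PermEquiv 𝓕 (u ++ x :: y :: w) z)
    (hz : Bef z y x) :
    PermEquiv 𝓕 (u ++ x :: y :: w) (u ++ y :: x :: w) := by
  classical
  obtain ⟨hxu, hyu, hxy, hxw, hyw, hun, hwn⟩ := shape_facts hn
  have hxI : 1 ≤ x ∧ x ≤ n := by
    have := (hsupp x).1 (by simp)
    exact Finset.mem_Icc.1 this
  have hyI : 1 ≤ y ∧ y ≤ n := by
    have := (hsupp y).1 (by simp)
    exact Finset.mem_Icc.1 this
  have hxyne : x ≠ y := hxy
  set a := min x y with ha
  set b := max x y with hb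
  have hab : a < b := by omega
  have hor : (x = a ∧ y = b) ∨ (x = b ∧ y = a) := by omega
  set L : Finset ℕ := (Finset.Ioo a b).filter (· ∈ u) with hL
  have hcw : ∀ c ∈ Finset.Ioo a b, c ∉ L → c ∈ w := by
    intro c hc hcL
    have hcu : c ∉ u := by
      intro hcu; exact hcL (Finset.mem_filter.2 ⟨hc, hcu⟩)
    have hcI := Finset.mem_Ioo.1 hc
    have hcm : c ∈ u ++ x :: y :: w := (hsupp c).2 (Finset.mem_Icc.2 (by omega))
    have hcx : c ≠ x := by omega
    have hcy : c ≠ y := by omega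
    simp only [List.mem_append, List.mem_cons] at hcm
    tauto
  have hgv : Fence.Valid n ⟨a, b, L⟩ := ⟨by simp only; omega, by simpa using hab,
    by simp only; omega, by simp only [hL]; exact Finset.filter_subset _ _⟩
  by_cases hg : (⟨a, b, L⟩ : Fence) ∈ 𝓕
  · refine Relation.EqvGen.rel _ _ ⟨⟨a, b, L⟩, hg, u, w, ?_, ?_, ?_⟩
    · rcases hor with ⟨h1, h2⟩ | ⟨h1, h2⟩
      · exact Or.inl ⟨by rw [← h1, ← h2], by rw [← h1, ← h2]⟩
      · exact Or.inr ⟨by rw [← h1, ← h2], by rw [← h1, ← h2]⟩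
    · intro c hc
      exact (Finset.mem_filter.1 hc).2
    · exact hcw
  · exfalso
    have hxyo : (x = Fence.a ⟨a, b, L⟩ ∧ y = Fence.b ⟨a, b, L⟩) ∨
        (x = Fence.b ⟨a, b, L⟩ ∧ y = Fence.a ⟨a, b, L⟩) := by
      simp only
      omega
    have hInv : SInv ⟨a, b, L⟩ x y (u ++ x :: y :: w) := by
      refine ⟨bef_shape hn, ?_, ?_⟩
      · intro c hc
        have hcu : c ∈ u := (Finset.mem_filter.1 hc).2
        have h1 := bef_u_pair hn hcu
        simp only
        rcases hor with ⟨h2, h3⟩ | ⟨h2, h3⟩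
        · exact ⟨h2 ▸ h1.1, h3 ▸ h1.2⟩
        · exact ⟨h3 ▸ h1.2, h2 ▸ h1.1⟩
      · intro c hc hcL
        have hcwm : c ∈ w := hcw c hc hcL
        have h1 := bef_pair_w hn hcwm
        simp only
        rcases hor with ⟨h2, h3⟩ | ⟨h2, h3⟩
        · exact ⟨h2 ▸ h1.1, h3 ▸ h1.2⟩
        · exact ⟨h3 ▸ h1.2, h2 ▸ h1.1⟩
    have hfin := (sinv_chain hdown hgv hg hxyo hequiv hn).1 hInv
    exact Bef.asymm hfin.1 hz



/-! ### Linearization toolkit -/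

/-- `xs` enumerates the finset `B`. -/
def Enum (xs : List ℕ) (B : Finset ℕ) : Prop := xs.Nodup ∧ ∀ x : ℕ, x ∈ xs ↔ x ∈ B

lemma linearizes_iff {l : List ℕ} {P : List (Finset ℕ)} :
    Linearizes l P ↔ ∃ ls : List (List ℕ), l = ls.flatten ∧ List.Forall₂ Enum ls P :=
  Iff.rfl

lemma forall₂_enum_append {ls₁ ls₂ : List (List ℕ)} {P₁ P₂ : List (Finset ℕ)}
    (h₁ : List.Forall₂ Enum ls₁ P₁) (h₂ : List.Forall₂ Enum ls₂ P₂) :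
    List.Forall₂ Enum (ls₁ ++ ls₂) (P₁ ++ P₂) := by
  induction h₁ with
  | nil => exact h₂
  | cons h t ih => exact List.Forall₂.cons h ih

lemma lin_append {l₁ l₂ : List ℕ} {P₁ P₂ : List (Finset ℕ)}
    (h₁ : Linearizes l₁ P₁) (h₂ : Linearizes l₂ P₂) :
    Linearizes (l₁ ++ l₂) (P₁ ++ P₂) := by
  obtain ⟨ls₁, rfl, hf₁⟩ := h₁
  obtain ⟨ls₂, rfl, hf₂⟩ := h₂
  exact ⟨ls₁ ++ ls₂, List.flatten_append.symm, forall₂_enum_append hf₁ hf₂⟩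

lemma lin_split {l : List ℕ} {P₁ P₂ : List (Finset ℕ)} (h : Linearizes l (P₁ ++ P₂)) :
    ∃ l₁ l₂, l = l₁ ++ l₂ ∧ Linearizes l₁ P₁ ∧ Linearizes l₂ P₂ := by
  obtain ⟨ls, rfl, hf⟩ := h
  have h1 := List.forall₂_take_append ls P₁ P₂ hf
  have h2 := List.forall₂_drop_append ls P₁ P₂ hf
  refine ⟨(List.take P₁.length ls).flatten, (List.drop P₁.length ls).flatten, ?_,
    ⟨_, rfl, h1⟩, ⟨_, rfl, h2⟩⟩
  rw [← List.flatten_append, List.take_append_drop]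

lemma lin_cons {l : List ℕ} {B : Finset ℕ} {P : List (Finset ℕ)}
    (h : Linearizes l (B :: P)) :
    ∃ xs l', l = xs ++ l' ∧ Enum xs B ∧ Linearizes l' P := by
  obtain ⟨ls, rfl, hf⟩ := h
  rw [List.forall₂_cons_right_iff] at hf
  obtain ⟨xs, ls', hE, hf', rfl⟩ := hf
  exact ⟨xs, ls'.flatten, by simp, hE, ⟨ls', rfl, hf'⟩⟩

lemma lin_cons' {xs l' : List ℕ} {B : Finset ℕ} {P : List (Finset ℕ)}
    (hE : Enum xs B) (h : Linearizes l' P) : Linearizes (xs ++ l') (B :: P) := by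
  obtain ⟨ls, rfl, hf⟩ := h
  exact ⟨xs :: ls, by simp, List.Forall₂.cons hE hf⟩

lemma lin_nil : Linearizes [] [] := ⟨[], rfl, List.Forall₂.nil⟩

lemma lin_mem {l : List ℕ} {P : List (Finset ℕ)} (h : Linearizes l P) (x : ℕ) :
    x ∈ l ↔ ∃ B ∈ P, x ∈ B := by
  induction P generalizing l with
  | nil =>
    obtain ⟨ls, rfl, hf⟩ := h
    rw [List.forall₂_nil_right_iff] at hf
    subst hf; simp
  | cons B P ih =>
    obtain ⟨xs, l', rfl, hE, hl'⟩ := lin_cons h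
    simp only [List.mem_append, hE.2, ih hl', List.mem_cons]
    constructor
    · rintro (h | ⟨C, hC, hxC⟩)
      · exact ⟨B, Or.inl rfl, h⟩
      · exact ⟨C, Or.inr hC, hxC⟩
    · rintro ⟨C, (rfl | hC), hxC⟩
      · exact Or.inl hxC
      · exact Or.inr ⟨C, hC, hxC⟩

lemma lin_nodup {l : List ℕ} {P : List (Finset ℕ)} (h : Linearizes l P)
    (hP : P.Pairwise Disjoint) : l.Nodup := by
  induction P generalizing l with
  | nil =>
    obtain ⟨ls, rfl, hf⟩ := h
    rw [List.forall₂_nil_right_iff] at hf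
    subst hf; simp
  | cons B P ih =>
    obtain ⟨xs, l', rfl, hE, hl'⟩ := lin_cons h
    rw [List.pairwise_cons] at hP
    refine List.Nodup.append hE.1 (ih hl' hP.2) ?_
    intro a ha ha'
    have haB : a ∈ B := (hE.2 a).1 ha
    obtain ⟨C, hC, haC⟩ := (lin_mem hl' a).1 ha'
    exact (Finset.disjoint_left.1 (hP.1 C hC)) haB haC

lemma lin_nodup_supp {S : Finset ℕ} {l : List ℕ} {P : List (Finset ℕ)}
    (hP : IsOSP S P) (h : Linearizes l P) :
    l.Nodup ∧ ∀ x : ℕ, x ∈ l ↔ x ∈ S := by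
  refine ⟨lin_nodup h hP.2.1, fun x => ?_⟩
  rw [lin_mem h, ← hP.2.2]

/-- Elements in an earlier block come earlier in any linearization. -/
lemma bef_blocks {l : List ℕ} {P₁ P₂ P₃ : List (Finset ℕ)} {B B' : Finset ℕ} {x y : ℕ}
    (hl : Linearizes l (P₁ ++ (B :: (P₂ ++ B' :: P₃)))) (hn : l.Nodup)
    (hx : x ∈ B) (hy : y ∈ B') : Bef l x y := by
  obtain ⟨l₁, l₂, rfl, h₁, h₂⟩ := lin_split (P₁ := P₁) (P₂ := B :: (P₂ ++ B' :: P₃)) hl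
  obtain ⟨xs, l₃, rfl, hE, h₃⟩ := lin_cons h₂
  obtain ⟨l₄, l₅, rfl, h₄, h₅⟩ := lin_split (P₁ := P₂) (P₂ := B' :: P₃) h₃
  obtain ⟨ys, l₆, rfl, hE', h₆⟩ := lin_cons h₅
  have hxm : x ∈ l₁ ++ xs := by simp [(hE.2 x).2 hx]
  have hym : y ∈ l₄ ++ (ys ++ l₆) := by simp [(hE'.2 y).2 hy]
  have := bef_append (u := l₁ ++ xs) (v := l₄ ++ (ys ++ l₆)) (by simpa using hn) hxm hym
  simpa using this

/-- Two elements lie in a common block, or one's block strictly precedes the other's. -/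
lemma block_cases {P : List (Finset ℕ)} {x y : ℕ} {Bx By : Finset ℕ}
    (hBx : Bx ∈ P) (hBy : By ∈ P) (hx : x ∈ Bx) (hy : y ∈ By) :
    (∃ B ∈ P, x ∈ B ∧ y ∈ B) ∨
    (∃ P₁ B P₂ B' P₃, P = P₁ ++ B :: P₂ ++ B' :: P₃ ∧ x ∈ B ∧ y ∈ B') ∨
    (∃ P₁ B P₂ B' P₃, P = P₁ ++ B :: P₂ ++ B' :: P₃ ∧ y ∈ B ∧ x ∈ B') := by
  induction P with
  | nil => simp at hBx
  | cons C P ih =>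
    by_cases hxC : x ∈ C
    · by_cases hyC : y ∈ C
      · exact Or.inl ⟨C, by simp, hxC, hyC⟩
      · have hByP : By ∈ P := by
          rcases List.mem_cons.1 hBy with rfl | h
          · exact absurd hy hyC
          · exact h
        obtain ⟨Q₁, Q₂, rfl⟩ := List.append_of_mem hByP
        exact Or.inr (Or.inl ⟨[], C, Q₁, By, Q₂, by simp, hxC, hy⟩)
    · by_cases hyC : y ∈ C
      · have hBxP : Bx ∈ P := by
          rcases List.mem_cons.1 hBx with rfl | h
          · exact absurd hx hxC
          · exact h
        obtain ⟨Q₁, Q₂, rfl⟩ := List.append_of_mem hBxP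
        exact Or.inr (Or.inr ⟨[], C, Q₁, Bx, Q₂, by simp, hyC, hx⟩)
      · have hBxP : Bx ∈ P := by
          rcases List.mem_cons.1 hBx with rfl | h
          · exact absurd hx hxC
          · exact h
        have hByP : By ∈ P := by
          rcases List.mem_cons.1 hBy with rfl | h
          · exact absurd hy hyC
          · exact h
        rcases ih hBxP hByP with h | ⟨P₁, B, P₂, B', P₃, rfl, h1, h2⟩ |
            ⟨P₁, B, P₂, B', P₃, rfl, h1, h2⟩
        · obtain ⟨B, hB, h⟩ := h
          exact Or.inl ⟨B, by simp [hB], h⟩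
        · exact Or.inr (Or.inl ⟨C :: P₁, B, P₂, B', P₃, by simp, h1, h2⟩)
        · exact Or.inr (Or.inr ⟨C :: P₁, B, P₂, B', P₃, by simp, h1, h2⟩)

/-- Either a list splits as (not-p)-part ++ p-part, or it has an adjacent pair (p, ¬p). -/
lemma sort_or_adj (p : ℕ → Prop) [DecidablePred p] (xs : List ℕ) :
    (∃ as bs, xs = as ++ bs ∧ (∀ a ∈ as, ¬ p a) ∧ (∀ b ∈ bs, p b)) ∨
    (∃ α x y β, xs = α ++ x :: y :: β ∧ p x ∧ ¬ p y) := by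
  induction xs with
  | nil => exact Or.inl ⟨[], [], rfl, by simp, by simp⟩
  | cons c t ih =>
    rcases ih with ⟨as, bs, rfl, h1, h2⟩ | ⟨α, x, y, β, rfl, h1, h2⟩
    · by_cases hc : p c
      · cases as with
        | nil => exact Or.inl ⟨[], c :: bs, by simp, by simp, by
            intro b hb; rcases List.mem_cons.1 hb with rfl | hb
            · exact hc
            · exact h2 b hb⟩
        | cons a as' =>
          exact Or.inr ⟨[], c, a, as' ++ bs, by simp, hc, h1 a (by simp)⟩
      · refine Or.inl ⟨c :: as, bs, by simp, ?_, h2⟩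
        intro a ha; rcases List.mem_cons.1 ha with rfl | ha
        · exact hc
        · exact h1 a ha
    · exact Or.inr ⟨c :: α, x, y, β, by simp, h1, h2⟩

lemma enum_split {xs as bs : List ℕ} {C D : Finset ℕ} (h : Enum xs C)
    (hxs : xs = as ++ bs) (h1 : ∀ a ∈ as, a ∉ D) (h2 : ∀ b ∈ bs, b ∈ D) :
    Enum as (C \ D) ∧ Enum bs (C ∩ D) := by
  subst hxs
  have hnd := h.1
  rw [List.nodup_append] at hnd
  constructor
  · refine ⟨hnd.1, fun v => ?_⟩
    simp only [Finset.mem_sdiff]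
    constructor
    · intro hv
      exact ⟨(h.2 v).1 (by simp [hv]), h1 v hv⟩
    · rintro ⟨hvC, hvD⟩
      have := (h.2 v).2 hvC
      rcases List.mem_append.1 this with hv | hv
      · exact hv
      · exact absurd (h2 v hv) hvD
  · refine ⟨hnd.2.1, fun v => ?_⟩
    simp only [Finset.mem_inter]
    constructor
    · intro hv
      exact ⟨(h.2 v).1 (by simp [hv]), h2 v hv⟩
    · rintro ⟨hvC, hvD⟩
      have := (h.2 v).2 hvC
      rcases List.mem_append.1 this with hv | hv
      · exact absurd hvD (h1 v hv)
      · exact hv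

lemma enum_swap {xs : List ℕ} {C : Finset ℕ} {α β : List ℕ} {x y : ℕ}
    (h : Enum xs C) (hxs : xs = α ++ x :: y :: β) : Enum (α ++ y :: x :: β) C := by
  subst hxs
  have hperm : (α ++ x :: y :: β).Perm (α ++ y :: x :: β) :=
    List.Perm.append_left α (List.Perm.swap y x β)
  exact ⟨hperm.nodup h.1, fun v => by rw [← hperm.mem_iff]; exact h.2 v⟩

/-- Merging two adjacent blocks of an ordered set partition. -/
lemma lin_merge {l : List ℕ} {P₁ P₂ : List (Finset ℕ)} {E D' : Finset ℕ}
    (hd : Disjoint E D') (h : Linearizes l (P₁ ++ E :: D' :: P₂)) :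
    Linearizes l (P₁ ++ (E ∪ D') :: P₂) := by
  obtain ⟨l₁, l₂, rfl, h₁, h₂⟩ := lin_split (P₁ := P₁) (P₂ := E :: D' :: P₂) h
  obtain ⟨xs, l₃, rfl, hE, h₃⟩ := lin_cons h₂
  obtain ⟨ys, l₄, rfl, hE', h₄⟩ := lin_cons h₃
  have hEnew : Enum (xs ++ ys) (E ∪ D') := by
    constructor
    · refine List.Nodup.append hE.1 hE'.1 ?_
      intro a ha ha'
      exact (Finset.disjoint_left.1 hd) ((hE.2 a).1 ha) ((hE'.2 a).1 ha')
    · intro v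
      simp [List.mem_append, hE.2 v, hE'.2 v]
  have := lin_append h₁ (lin_cons' hEnew h₄)
  simpa using this

/-! ### The block-splitting operator `Φ_D` -/

/-- The blocks obtained from block `C` by splitting along `D` (non-`D` part first). -/
def blocksD (D C : Finset ℕ) : List (Finset ℕ) :=
  if C ∩ D = ∅ then [C] else if C \ D = ∅ then [C] else [C \ D, C ∩ D]

/-- Split every block of `Q` along `D`. -/
def PhiD (D : Finset ℕ) (Q : List (Finset ℕ)) : List (Finset ℕ) :=
  Q.flatMap (blocksD D)

lemma phiD_nil (D : Finset ℕ) : PhiD D [] = [] := rfl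

lemma phiD_cons (D C : Finset ℕ) (Q : List (Finset ℕ)) :
    PhiD D (C :: Q) = blocksD D C ++ PhiD D Q := rfl

lemma phiD_append (D : Finset ℕ) (Q₁ Q₂ : List (Finset ℕ)) :
    PhiD D (Q₁ ++ Q₂) = PhiD D Q₁ ++ PhiD D Q₂ := List.flatMap_append

lemma blocksD_sub {D C X : Finset ℕ} (h : X ∈ blocksD D C) : X ⊆ C := by
  unfold blocksD at h
  split_ifs at h with h1 h2 <;> simp only [List.mem_cons, List.mem_singleton] at h
  · rcases h with rfl | h; · exact subset_rfl
    · simp at h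
  · rcases h with rfl | h; · exact subset_rfl
    · simp at h
  · rcases h with rfl | rfl | h
    · exact Finset.sdiff_subset
    · exact Finset.inter_subset_left
    · simp at h

lemma blocksD_cover {D C : Finset ℕ} {x : ℕ} (hx : x ∈ C) : ∃ X ∈ blocksD D C, x ∈ X := by
  unfold blocksD
  split_ifs with h1 h2
  · exact ⟨C, by simp, hx⟩
  · exact ⟨C, by simp, hx⟩
  · by_cases hxD : x ∈ D
    · exact ⟨C ∩ D, by simp, Finset.mem_inter.2 ⟨hx, hxD⟩⟩
    · exact ⟨C \ D, by simp, Finset.mem_sdiff.2 ⟨hx, hxD⟩⟩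

lemma blocksD_nonempty {D C X : Finset ℕ} (hC : C.Nonempty) (h : X ∈ blocksD D C) :
    X.Nonempty := by
  unfold blocksD at h
  split_ifs at h with h1 h2 <;> simp only [List.mem_cons, List.mem_singleton] at h
  · rcases h with rfl | h; · exact hC
    · simp at h
  · rcases h with rfl | h; · exact hC
    · simp at h
  · rcases h with rfl | rfl | h
    · exact Finset.nonempty_iff_ne_empty.2 h2
    · exact Finset.nonempty_iff_ne_empty.2 h1
    · simp at h

lemma blocksD_pairwise {D C : Finset ℕ} : (blocksD D C).Pairwise Disjoint := by
  unfold blocksD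
  split_ifs with h1 h2
  · simp
  · simp
  · refine List.pairwise_cons.2 ⟨?_, by simp⟩
    intro X hX
    rcases List.mem_singleton.1 hX with rfl
    exact Finset.disjoint_sdiff_inter C D

lemma blocksD_mixed {D C : Finset ℕ} (h1 : C ∩ D ≠ ∅) (h2 : C \ D ≠ ∅) :
    blocksD D C = [C \ D, C ∩ D] := by
  unfold blocksD; rw [if_neg h1, if_neg h2]

lemma isOSP_phiD {S D : Finset ℕ} {Q : List (Finset ℕ)} (h : IsOSP S Q) :
    IsOSP S (PhiD D Q) := by
  obtain ⟨h1, h2, h3⟩ := h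
  refine ⟨?_, ?_, ?_⟩
  · intro X hX
    obtain ⟨C, hC, hXC⟩ := List.mem_flatMap.1 hX
    exact blocksD_nonempty (h1 C hC) hXC
  · -- pairwise disjoint
    clear h3
    induction Q with
    | nil => exact List.Pairwise.nil
    | cons C Q ih =>
      rw [List.pairwise_cons] at h2
      rw [phiD_cons, List.pairwise_append]
      refine ⟨blocksD_pairwise, ih (fun B hB => h1 B (by simp [hB])) h2.2, ?_⟩
      intro X hX Y hY
      obtain ⟨C', hC', hYC'⟩ := List.mem_flatMap.1 hY
      exact Finset.disjoint_of_subset_left (blocksD_sub hX)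
        (Finset.disjoint_of_subset_right (blocksD_sub hYC') (h2.1 C' hC'))
  · intro x
    rw [h3 x]
    constructor
    · rintro ⟨C, hC, hxC⟩
      obtain ⟨X, hX, hxX⟩ := blocksD_cover (D := D) hxC
      exact ⟨X, List.mem_flatMap.2 ⟨C, hC, hX⟩, hxX⟩
    · rintro ⟨X, hX, hxX⟩
      obtain ⟨C, hC, hXC⟩ := List.mem_flatMap.1 hX
      exact ⟨C, hC, blocksD_sub hXC hxX⟩

lemma phiD_length {D : Finset ℕ} {Q : List (Finset ℕ)} : Q.length ≤ (PhiD D Q).length := by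
  induction Q with
  | nil => simp [phiD_nil]
  | cons C Q ih =>
    rw [phiD_cons, List.length_append]
    have : 1 ≤ (blocksD D C).length := by
      unfold blocksD; split_ifs <;> simp
    simp only [List.length_cons]
    omega

lemma phiD_length_mixed {D C : Finset ℕ} {Q : List (Finset ℕ)} (hC : C ∈ Q)
    (h1 : C ∩ D ≠ ∅) (h2 : C \ D ≠ ∅) : Q.length + 1 ≤ (PhiD D Q).length := by
  induction Q with
  | nil => simp at hC
  | cons C' Q ih =>
    rw [phiD_cons, List.length_append, List.length_cons]
    rcases List.mem_cons.1 hC with rfl | hC'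
    · have : (blocksD D C).length = 2 := by
        rw [blocksD_mixed h1 h2]; rfl
      have := phiD_length (D := D) (Q := Q)
      omega
    · have h3 : 1 ≤ (blocksD D C').length := by
        unfold blocksD; split_ifs <;> simp
      have := ih hC'
      omega

lemma phiD_pure {D : Finset ℕ} {Q : List (Finset ℕ)}
    (h : ∀ C ∈ Q, C ∩ D = ∅ ∨ C \ D = ∅) : PhiD D Q = Q := by
  induction Q with
  | nil => rfl
  | cons C Q ih =>
    rw [phiD_cons, ih (fun B hB => h B (by simp [hB]))]
    have : blocksD D C = [C] := by
      unfold blocksD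
      rcases h C (by simp) with h1 | h1
      · rw [if_pos h1]
      · split_ifs <;> rfl
    rw [this]
    rfl


/-- A linearization of `Φ_D Q` is a linearization of `Q`. -/
lemma lin_of_lin_phiD {D : Finset ℕ} {Q : List (Finset ℕ)} {m : List ℕ}
    (h : Linearizes m (PhiD D Q)) : Linearizes m Q := by
  induction Q generalizing m with
  | nil => exact h
  | cons C Q ih =>
    rw [phiD_cons] at h
    unfold blocksD at h
    split_ifs at h with h1 h2
    · obtain ⟨xs, l', rfl, hE, hl'⟩ := lin_cons h
      exact lin_cons' hE (ih hl')
    · obtain ⟨xs, l', rfl, hE, hl'⟩ := lin_cons h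
      exact lin_cons' hE (ih hl')
    · obtain ⟨xs, l', rfl, hE, hl'⟩ := lin_cons h
      obtain ⟨ys, l'', rfl, hE', hl''⟩ := lin_cons hl'
      have hEnew : Enum (xs ++ ys) C := by
        constructor
        · refine List.Nodup.append hE.1 hE'.1 ?_
          intro a ha ha'
          have h3 := (hE.2 a).1 ha
          have h4 := (hE'.2 a).1 ha'
          rw [Finset.mem_sdiff] at h3
          rw [Finset.mem_inter] at h4
          exact h3.2 h4.2
        · intro v
          rw [List.mem_append, hE.2 v, hE'.2 v, Finset.mem_sdiff, Finset.mem_inter]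
          constructor
          · rintro (⟨h, -⟩ | ⟨h, -⟩) <;> exact h
          · intro hv
            by_cases hvD : v ∈ D
            · exact Or.inr ⟨hv, hvD⟩
            · exact Or.inl ⟨hv, hvD⟩
      have := lin_cons' hEnew (ih hl'')
      simpa using this

/-! ### Finding adjacent unsorted pairs -/

/-- Either a linearization of `Q` is already a linearization of `Φ_D Q`, or it has an
adjacent pair `x ∈ D` before `y ∉ D` inside a common block, which can be swapped. -/
lemma lin_adj_case {D : Finset ℕ} {Q : List (Finset ℕ)} {m : List ℕ}
    (hm : Linearizes m Q) :
    Linearizes m (PhiD D Q) ∨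
    ∃ u x y w C, m = u ++ x :: y :: w ∧ C ∈ Q ∧ x ∈ C ∧ y ∈ C ∧ x ∈ D ∧ y ∉ D ∧
      Linearizes (u ++ y :: x :: w) Q := by
  induction Q generalizing m with
  | nil => exact Or.inl hm
  | cons C Q ih =>
    obtain ⟨xs, m', rfl, hE, hm'⟩ := lin_cons hm
    rcases sort_or_adj (fun v => v ∈ D) xs with ⟨as, bs, hxs, h1, h2⟩ | ⟨α, x, y, β, hxs, h1, h2⟩
    · rcases ih hm' with hL | ⟨u, x, y, w, C', hmeq, hC', hxC', hyC', hxD, hyD, hsw⟩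
      · left
        rw [phiD_cons]
        unfold blocksD
        split_ifs with e1 e2
        · exact lin_cons' hE hL
        · exact lin_cons' hE hL
        · obtain ⟨hEa, hEb⟩ := enum_split hE hxs h1 h2
          subst hxs
          have := lin_cons' hEa (lin_cons' hEb hL)
          simpa [List.append_assoc] using this
      · right
        refine ⟨xs ++ u, x, y, w, C', by rw [hmeq]; simp [List.append_assoc], by simp [hC'],
          hxC', hyC', hxD, hyD, ?_⟩
        have := lin_cons' hE hsw
        simpa [List.append_assoc] using this
    · right
      have hxC : x ∈ C := (hE.2 x).1 (by simp [hxs])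
      have hyC : y ∈ C := (hE.2 y).1 (by simp [hxs])
      refine ⟨α, x, y, β ++ m', C, by rw [hxs]; simp [List.append_assoc], by simp,
        hxC, hyC, h1, h2, ?_⟩
      have := lin_cons' (enum_swap hE hxs) hm'
      simpa [List.append_assoc] using this

/-- Either a linearization of `P₁ ++ W :: P₂` is a linearization of the split partition,
or its `W`-segment has an adjacent pair `x ∈ D` before `y ∈ W \ D`. -/
lemma lin_adj_caseW {P₁ P₂ : List (Finset ℕ)} {W D : Finset ℕ} (hD : D ⊆ W) {l : List ℕ}
    (hl : Linearizes l (P₁ ++ W :: P₂)) :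
    Linearizes l (P₁ ++ (W \ D) :: D :: P₂) ∨
    ∃ u x y w, l = u ++ x :: y :: w ∧ x ∈ D ∧ y ∈ W ∧ y ∉ D ∧
      Linearizes (u ++ y :: x :: w) (P₁ ++ W :: P₂) := by
  obtain ⟨l₁, l₂, rfl, h₁, h₂⟩ := lin_split (P₁ := P₁) (P₂ := W :: P₂) hl
  obtain ⟨xs, l₃, rfl, hE, h₃⟩ := lin_cons h₂
  rcases sort_or_adj (fun v => v ∈ D) xs with ⟨as, bs, hxs, hs1, hs2⟩ |
      ⟨α, x, y, β, hxs, hp1, hp2⟩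
  · left
    obtain ⟨hEa, hEb⟩ := enum_split hE hxs hs1 hs2
    rw [Finset.inter_eq_right.2 hD] at hEb
    subst hxs
    have := lin_append h₁ (lin_cons' hEa (lin_cons' hEb h₃))
    simpa [List.append_assoc] using this
  · right
    have hyW : y ∈ W := (hE.2 y).1 (by simp [hxs])
    refine ⟨l₁ ++ α, x, y, β ++ l₃, by rw [hxs]; simp [List.append_assoc], hp1, hyW, hp2, ?_⟩
    have := lin_append h₁ (lin_cons' (enum_swap hE hxs) h₃)
    simpa [List.append_assoc] using this

/-- In a linearization of `Φ_D Q`, within a mixed block the non-`D` part comes first. -/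
lemma bef_phiD_same {D : Finset ℕ} {Q : List (Finset ℕ)} {C : Finset ℕ} (hC : C ∈ Q)
    {m : List ℕ} (hm : Linearizes m (PhiD D Q)) (hnd : m.Nodup) {x y : ℕ}
    (hx : x ∈ C ∩ D) (hy : y ∈ C \ D) : Bef m y x := by
  obtain ⟨Q₁, Q₂, rfl⟩ := List.append_of_mem hC
  have h1 : C ∩ D ≠ ∅ := by
    intro h; rw [h] at hx; simp at hx
  have h2 : C \ D ≠ ∅ := by
    intro h; rw [h] at hy; simp at hy
  have hdec : PhiD D (Q₁ ++ C :: Q₂) =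
      PhiD D Q₁ ++ ((C \ D) :: ([] ++ (C ∩ D) :: PhiD D Q₂)) := by
    rw [phiD_append, phiD_cons, blocksD_mixed h1 h2]
    simp
  rw [hdec] at hm
  exact bef_blocks hm hnd hy hx

/-- Order across distinct blocks transfers to linearizations of `Φ_D Q`. -/
lemma bef_phiD_cross {D : Finset ℕ} {Q P₁ P₂ P₃ : List (Finset ℕ)} {Cy Cx : Finset ℕ}
    (hQ : Q = P₁ ++ Cy :: (P₂ ++ Cx :: P₃)) {m : List ℕ}
    (hm : Linearizes m (PhiD D Q)) (hnd : m.Nodup) {x y : ℕ}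
    (hy : y ∈ Cy) (hx : x ∈ Cx) : Bef m y x := by
  subst hQ
  obtain ⟨By, hBy, hyBy⟩ := blocksD_cover (D := D) hy
  obtain ⟨Bx, hBx, hxBx⟩ := blocksD_cover (D := D) hx
  obtain ⟨κ₁, κ₂, hκ⟩ := List.append_of_mem hBy
  obtain ⟨κ₃, κ₄, hκ'⟩ := List.append_of_mem hBx
  have hdec : PhiD D (P₁ ++ Cy :: (P₂ ++ Cx :: P₃)) =
      (PhiD D P₁ ++ κ₁) ++ (By :: ((κ₂ ++ PhiD D P₂ ++ κ₃) ++ Bx :: (κ₄ ++ PhiD D P₃))) := by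
    rw [phiD_append, phiD_cons, phiD_append, phiD_cons, hκ, hκ']
    simp [List.append_assoc]
  rw [hdec] at hm
  exact bef_blocks hm hnd hyBy hxBx

/-! ### The termination measure -/

open Classical in
/-- Number of "inverted" pairs, relative to a predicate `pred`. -/
noncomputable def mes (n : ℕ) (pred : ℕ → ℕ → Prop) (l : List ℕ) : ℕ :=
  (((Finset.Icc 1 n) ×ˢ (Finset.Icc 1 n)).filter
    (fun p : ℕ × ℕ => pred p.1 p.2 ∧ Bef l p.1 p.2)).card

lemma mes_swap {n : ℕ} {pred : ℕ → ℕ → Prop} {u w : List ℕ} {x y : ℕ}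
    (hn : (u ++ x :: y :: w).Nodup)
    (hxI : x ∈ Finset.Icc 1 n) (hyI : y ∈ Finset.Icc 1 n)
    (hp : pred x y) (hnp : ¬ pred y x) :
    mes n pred (u ++ y :: x :: w) < mes n pred (u ++ x :: y :: w) := by
  classical
  unfold mes
  have hmem : ((x, y) : ℕ × ℕ) ∈ ((Finset.Icc 1 n) ×ˢ (Finset.Icc 1 n)).filter
      (fun p : ℕ × ℕ => pred p.1 p.2 ∧ Bef (u ++ x :: y :: w) p.1 p.2) := by
    rw [Finset.mem_filter]
    exact ⟨Finset.mem_product.2 ⟨hxI, hyI⟩, hp, bef_shape hn⟩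
  have hset : ((Finset.Icc 1 n) ×ˢ (Finset.Icc 1 n)).filter
      (fun p : ℕ × ℕ => pred p.1 p.2 ∧ Bef (u ++ y :: x :: w) p.1 p.2) =
      (((Finset.Icc 1 n) ×ˢ (Finset.Icc 1 n)).filter
      (fun p : ℕ × ℕ => pred p.1 p.2 ∧ Bef (u ++ x :: y :: w) p.1 p.2)).erase (x, y) := by
    ext ⟨p, q⟩
    rw [Finset.mem_erase, Finset.mem_filter, Finset.mem_filter]
    by_cases hpq : (p, q) = (x, y)
    · rw [hpq]
      apply iff_of_false
      · rintro ⟨-, -, hb⟩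
        exact Bef.asymm hb (bef_shape (nodup_swap hn))
      · rintro ⟨hne, -⟩
        exact hne rfl
    · by_cases hqp : (p, q) = (y, x)
      · rw [hqp]
        simp only
        constructor
        · rintro ⟨-, h, -⟩; exact absurd h hnp
        · rintro ⟨-, -, h, -⟩; exact absurd h hnp
      · have h1 : ¬(p = x ∧ q = y) := by
          rintro ⟨rfl, rfl⟩; exact hpq rfl
        have h2 : ¬(p = y ∧ q = x) := by
          rintro ⟨rfl, rfl⟩; exact hqp rfl
        rw [← bef_swap_iff hn h1 h2]
        constructor
        · rintro ⟨h3, h4⟩; exact ⟨hpq, h3, h4⟩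
        · rintro ⟨-, h3, h4⟩; exact ⟨h3, h4⟩
  rw [hset, Finset.card_erase_of_mem hmem]
  have := Finset.card_pos.2 ⟨_, hmem⟩
  omega

/-! ### The key lemma, direction I -/

lemma dirI {n : ℕ} {𝓕 : Set Fence} (hdown : IsFenceDownset n 𝓕)
    {LL RR Q : List (Finset ℕ)} {W D : Finset ℕ}
    (hF : IsOSP (Finset.Icc 1 n) (LL ++ W :: RR))
    (hQ : IsOSP (Finset.Icc 1 n) Q)
    (heq : OSPEquiv 𝓕 (LL ++ W :: RR) Q) (hD : D ⊆ W) :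
    ∀ l, Linearizes l (LL ++ (W \ D) :: D :: RR) →
      ∃ m, Linearizes m (PhiD D Q) ∧ PermEquiv 𝓕 l m := by
  intro l hl
  have hlW : Linearizes l (LL ++ W :: RR) := by
    have := lin_merge (Finset.sdiff_disjoint) hl
    rwa [Finset.sdiff_union_of_subset hD] at this
  obtain ⟨hlnd, hlsupp⟩ := lin_nodup_supp hF hlW
  obtain ⟨m₀, hm₀, he₀⟩ := heq.1 l hlW
  set pred : ℕ → ℕ → Prop := fun x y => x ∈ D ∧ y ∉ D ∧ ∃ C ∈ Q, x ∈ C ∧ y ∈ C with hpred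
  suffices H : ∀ k m, mes n pred m ≤ k → Linearizes m Q → PermEquiv 𝓕 l m →
      ∃ m', Linearizes m' (PhiD D Q) ∧ PermEquiv 𝓕 l m' by
    exact H (mes n pred m₀) m₀ le_rfl hm₀ he₀
  intro k
  induction k using Nat.strong_induction_on with
  | _ k ih =>
    intro m hmes hm he
    rcases lin_adj_case (D := D) hm with hL | ⟨u, x, y, w, C, rfl, hC, hxC, hyC, hxD, hyD, hsw⟩
    · exact ⟨m, hL, he⟩
    · obtain ⟨hmnd, hmsupp⟩ := lin_nodup_supp hQ hm
      have hxI : x ∈ Finset.Icc 1 n := (hmsupp x).1 (by simp)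
      have hyI : y ∈ Finset.Icc 1 n := (hmsupp y).1 (by simp)
      have hxyne : x ≠ y := (shape_facts hmnd).2.2.1
      have hxl : x ∈ l := (hlsupp x).2 hxI
      have hyl : y ∈ l := (hlsupp y).2 hyI
      -- the swap is ≡-available
      have hswapEquiv : PermEquiv 𝓕 (u ++ x :: y :: w) (u ++ y :: x :: w) := by
        rcases bef_total hxl hyl hxyne with hbl | hbl
        · -- Bef l x y: then y must lie in an `RR`-block
          obtain ⟨B, hB, hyB⟩ := (hF.2.2 y).1 hyI
          rw [List.mem_append, List.mem_cons] at hB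
          rcases hB with hB | hBW | hB
          · -- y in an LL-block: contradiction
            exfalso
            obtain ⟨L₁, L₂, rfl⟩ := List.append_of_mem hB
            have hdec : (L₁ ++ B :: L₂) ++ (W \ D) :: D :: RR =
                L₁ ++ (B :: ((L₂ ++ [W \ D]) ++ D :: RR)) := by simp
            rw [hdec] at hl
            exact (bef_blocks hl hlnd hyB hxD).asymm hbl
          · -- y in W: y ∈ W \ D: contradiction
            exfalso
            have hyW : y ∈ W := hBW ▸ hyB
            have hdec : LL ++ (W \ D) :: D :: RR = LL ++ ((W \ D) :: ([] ++ D :: RR)) := by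
              simp
            rw [hdec] at hl
            exact (bef_blocks hl hlnd (Finset.mem_sdiff.2 ⟨hyW, hyD⟩) hxD).asymm hbl
          · -- y in an RR-block: use the swapped linearization of Q and CLAIM-P
            obtain ⟨R₁, R₂, rfl⟩ := List.append_of_mem hB
            obtain ⟨l', hl', he''⟩ := heq.2 (u ++ y :: x :: w) hsw
            obtain ⟨hl'nd, _⟩ := lin_nodup_supp hF hl'
            have hxW : x ∈ W := hD hxD
            have hdec : LL ++ W :: (R₁ ++ B :: R₂) = LL ++ (W :: (R₁ ++ B :: R₂)) := by simp
            have hbef : Bef l' x y := by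
              rw [hdec] at hl'
              exact bef_blocks hl' hl'nd hxW hyB
            have hsupp' : ∀ c : ℕ, c ∈ u ++ y :: x :: w ↔ c ∈ Finset.Icc 1 n := by
              intro c
              rw [← hmsupp c]
              simp only [List.mem_append, List.mem_cons]
              tauto
            have := claimP hdown (nodup_swap hmnd) hsupp' (permEquiv_symm he'') hbef
            exact permEquiv_symm this
        · -- Bef l y x: use l itself as the witness and CLAIM-P
          exact claimP hdown hmnd hmsupp (permEquiv_symm he) hbl
      have hm' : Linearizes (u ++ y :: x :: w) Q := hsw
      have he' : PermEquiv 𝓕 l (u ++ y :: x :: w) := permEquiv_trans he hswapEquiv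
      have hpxy : pred x y := ⟨hxD, hyD, C, hC, hxC, hyC⟩
      have hnpyx : ¬ pred y x := fun h => hyD h.1
      have hless : mes n pred (u ++ y :: x :: w) < mes n pred (u ++ x :: y :: w) :=
        mes_swap hmnd hxI hyI hpxy hnpyx
      exact ih (mes n pred (u ++ y :: x :: w)) (by omega) _ le_rfl hm' he'

/-! ### The key lemma, direction II -/

lemma dirII {n : ℕ} {𝓕 : Set Fence} (hdown : IsFenceDownset n 𝓕)
    {LL RR Q : List (Finset ℕ)} {W D : Finset ℕ}
    (hF : IsOSP (Finset.Icc 1 n) (LL ++ W :: RR))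
    (hQ : IsOSP (Finset.Icc 1 n) Q)
    (heq : OSPEquiv 𝓕 (LL ++ W :: RR) Q) (hD : D ⊆ W) :
    ∀ m, Linearizes m (PhiD D Q) →
      ∃ l', Linearizes l' (LL ++ (W \ D) :: D :: RR) ∧ PermEquiv 𝓕 l' m := by
  intro m hm
  have hmQ : Linearizes m Q := lin_of_lin_phiD hm
  obtain ⟨hmnd, hmsupp⟩ := lin_nodup_supp hQ hmQ
  obtain ⟨l₀, hl₀, he₀⟩ := heq.2 m hmQ
  set pred : ℕ → ℕ → Prop := fun x y => x ∈ D ∧ y ∈ W ∧ y ∉ D with hpred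
  suffices H : ∀ k l, mes n pred l ≤ k → Linearizes l (LL ++ W :: RR) → PermEquiv 𝓕 l m →
      ∃ l', Linearizes l' (LL ++ (W \ D) :: D :: RR) ∧ PermEquiv 𝓕 l' m by
    exact H (mes n pred l₀) l₀ le_rfl hl₀ he₀
  intro k
  induction k using Nat.strong_induction_on with
  | _ k ih =>
    intro l hmes hl he
    rcases lin_adj_caseW hD hl with hL | ⟨u, x, y, w, rfl, hxD, hyW, hyD, hsw⟩
    · exact ⟨l, hL, he⟩
    · obtain ⟨hlnd, hlsupp⟩ := lin_nodup_supp hF hl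
      have hxI : x ∈ Finset.Icc 1 n := (hlsupp x).1 (by simp)
      have hyI : y ∈ Finset.Icc 1 n := (hlsupp y).1 (by simp)
      have hxyne : x ≠ y := (shape_facts hlnd).2.2.1
      have hxm : x ∈ m := (hmsupp x).2 hxI
      have hym : y ∈ m := (hmsupp y).2 hyI
      -- the swap is ≡-available
      have hswapEquiv : PermEquiv 𝓕 (u ++ x :: y :: w) (u ++ y :: x :: w) := by
        rcases bef_total hxm hym hxyne with hbm | hbm
        · -- Bef m x y: analyse the blocks of Q containing x and y
          obtain ⟨Cx, hCx, hxCx⟩ := (hQ.2.2 x).1 hxI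
          obtain ⟨Cy, hCy, hyCy⟩ := (hQ.2.2 y).1 hyI
          obtain ⟨hmnd', _⟩ := lin_nodup_supp (isOSP_phiD (D := D) hQ) hm
          rcases block_cases hCx hCy hxCx hyCy with ⟨C, hC, hxC, hyC⟩ |
              ⟨P₁, B, P₂, B', P₃, hQeq, hxB, hyB⟩ | ⟨P₁, B, P₂, B', P₃, hQeq, hyB, hxB⟩
          · -- same block: within Φ_D Q, y (∉ D) comes before x (∈ D): contradiction
            exfalso
            exact (bef_phiD_same hC hm hmnd' (Finset.mem_inter.2 ⟨hxC, hxD⟩)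
              (Finset.mem_sdiff.2 ⟨hyC, hyD⟩)).asymm hbm
          · -- x's block before y's block: use the swapped list and CLAIM-P
            obtain ⟨m'', hm'', he''⟩ := heq.1 (u ++ y :: x :: w) hsw
            obtain ⟨hm''nd, _⟩ := lin_nodup_supp hQ hm''
            have hbef : Bef m'' x y := by
              have hdec : P₁ ++ B :: P₂ ++ B' :: P₃ = P₁ ++ (B :: (P₂ ++ B' :: P₃)) := by
                simp
              rw [hQeq, hdec] at hm''
              exact bef_blocks hm'' hm''nd hxB hyB
            have hsupp' : ∀ c : ℕ, c ∈ u ++ y :: x :: w ↔ c ∈ Finset.Icc 1 n := by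
              intro c
              rw [← hlsupp c]
              simp only [List.mem_append, List.mem_cons]
              tauto
            have := claimP hdown (nodup_swap hlnd) hsupp' he'' hbef
            exact permEquiv_symm this
          · -- y's block before x's block: contradiction via Φ_D Q
            exfalso
            have hdec : P₁ ++ B :: P₂ ++ B' :: P₃ = P₁ ++ B :: (P₂ ++ B' :: P₃) := by simp
            exact (bef_phiD_cross (hQeq.trans hdec) hm hmnd' hyB hxB).asymm hbm
        · -- Bef m y x: use m itself as witness and CLAIM-P
          exact claimP hdown hlnd hlsupp he hbm
      have hl' : Linearizes (u ++ y :: x :: w) (LL ++ W :: RR) := hsw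
      have he' : PermEquiv 𝓕 (u ++ y :: x :: w) m :=
        permEquiv_trans (permEquiv_symm hswapEquiv) he
      have hpxy : pred x y := ⟨hxD, hyW, hyD⟩
      have hnpyx : ¬ pred y x := fun h => hyD h.1
      have hless : mes n pred (u ++ y :: x :: w) < mes n pred (u ++ x :: y :: w) :=
        mes_swap hlnd hxI hyI hpxy hnpyx
      exact ih (mes n pred (u ++ y :: x :: w)) (by omega) _ le_rfl hl' he'

/-- The key lemma: splitting every block of `Q` along `D` yields an ordered set partition
equivalent to `L | W∖D | D | R`, whenever `Q ≡ L | W | R`. -/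
lemma keyLemma {n : ℕ} {𝓕 : Set Fence} (hdown : IsFenceDownset n 𝓕)
    {LL RR Q : List (Finset ℕ)} {W D : Finset ℕ}
    (hF : IsOSP (Finset.Icc 1 n) (LL ++ W :: RR))
    (hQ : IsOSP (Finset.Icc 1 n) Q)
    (heq : OSPEquiv 𝓕 (LL ++ W :: RR) Q) (hD : D ⊆ W) :
    OSPEquiv 𝓕 (LL ++ (W \ D) :: D :: RR) (PhiD D Q) :=
  ⟨dirI hdown hF hQ heq hD, dirII hdown hF hQ heq hD⟩

/-! ### Merging two adjacent blocks preserves being an OSP -/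

lemma isOSP_merge {S : Finset ℕ} {P₁ P₂ : List (Finset ℕ)} {A B : Finset ℕ}
    (h : IsOSP S (P₁ ++ A :: B :: P₂)) : IsOSP S (P₁ ++ (A ∪ B) :: P₂) := by
  obtain ⟨h1, h2, h3⟩ := h
  have hA : A.Nonempty := h1 A (by simp)
  refine ⟨?_, ?_, ?_⟩
  · intro X hX
    rw [List.mem_append, List.mem_cons] at hX
    rcases hX with hX | rfl | hX
    · exact h1 X (by simp [hX])
    · exact hA.mono Finset.subset_union_left
    · exact h1 X (by simp [hX])
  · rw [List.pairwise_append] at h2 ⊢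
    obtain ⟨hP₁, hc, hcross⟩ := h2
    rw [List.pairwise_cons] at hc
    obtain ⟨hAd, hc⟩ := hc
    rw [List.pairwise_cons] at hc
    obtain ⟨hBd, hP₂⟩ := hc
    refine ⟨hP₁, ?_, ?_⟩
    · rw [List.pairwise_cons]
      refine ⟨?_, hP₂⟩
      intro C hC
      exact Finset.disjoint_union_left.2 ⟨hAd C (by simp [hC]), hBd C hC⟩
    · intro X hX Y hY
      rcases List.mem_cons.1 hY with rfl | hY
      · exact Finset.disjoint_union_right.2
          ⟨hcross X hX A (by simp), hcross X hX B (by simp)⟩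
      · exact hcross X hX Y (by simp [hY])
  · intro x
    rw [h3 x]
    constructor
    · rintro ⟨C, hC, hxC⟩
      rw [List.mem_append, List.mem_cons, List.mem_cons] at hC
      rcases hC with hC | hCA | hCB | hC
      · exact ⟨C, by simp [hC], hxC⟩
      · exact ⟨A ∪ B, by simp, Finset.mem_union_left _ (hCA ▸ hxC)⟩
      · exact ⟨A ∪ B, by simp, Finset.mem_union_right _ (hCB ▸ hxC)⟩
      · exact ⟨C, by simp [hC], hxC⟩
    · rintro ⟨C, hC, hxC⟩
      rw [List.mem_append, List.mem_cons] at hC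
      rcases hC with hC | rfl | hC
      · exact ⟨C, by simp [hC], hxC⟩
      · rcases Finset.mem_union.1 hxC with h | h
        · exact ⟨A, by simp, h⟩
        · exact ⟨B, by simp, h⟩
      · exact ⟨C, by simp [hC], hxC⟩

end MergeStable

open MergeStable in
theorem aux_merge_stable (n : ℕ) (𝓕 : Set Fence)
    (hdown : IsFenceDownset n 𝓕)
    (L R : List (Finset ℕ)) (A B : Finset ℕ)
    (hOSP : IsOSP (Finset.Icc 1 n) (L ++ A :: B :: R))
    (hstab : StableOSP 𝓕 (Finset.Icc 1 n) (L ++ A :: B :: R))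
    (hstab' : StableOSP 𝓕 (Finset.Icc 1 n) (L ++ B :: A :: R))
    (hnequiv : ¬ OSPEquiv 𝓕 (L ++ A :: B :: R) (L ++ B :: A :: R)) :
    StableOSP 𝓕 (Finset.Icc 1 n) (L ++ (A ∪ B) :: R) := by
  intro Q hQ hequiv
  by_contra hlen
  push_neg at hlen
  have hAB : Disjoint A B := by
    have h2 := hOSP.2.1
    rw [List.pairwise_append, List.pairwise_cons] at h2
    exact h2.2.1.1 B (by simp)
  have hF'' : IsOSP (Finset.Icc 1 n) (L ++ (A ∪ B) :: R) := isOSP_merge hOSP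
  have hsdB : (A ∪ B) \ B = A := Finset.union_sdiff_cancel_right hAB
  have hsdA : (A ∪ B) \ A = B := Finset.union_sdiff_cancel_left hAB
  have hkeyB := keyLemma hdown hF'' hQ hequiv (Finset.subset_union_right : B ⊆ A ∪ B)
  rw [hsdB] at hkeyB
  have hkeyA := keyLemma hdown hF'' hQ hequiv (Finset.subset_union_left : A ⊆ A ∪ B)
  rw [hsdA] at hkeyA
  have hlenB := hstab _ (isOSP_phiD hQ) hkeyB
  have hlenA := hstab' _ (isOSP_phiD hQ) hkeyA
  simp only [List.length_append, List.length_cons] at hlen hlenB hlenA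
  by_cases hmixB : ∃ C ∈ Q, C ∩ B ≠ ∅ ∧ C \ B ≠ ∅
  · obtain ⟨C, hC, h1, h2⟩ := hmixB
    have := phiD_length_mixed hC h1 h2
    omega
  · by_cases hmixA : ∃ C ∈ Q, C ∩ A ≠ ∅ ∧ C \ A ≠ ∅
    · obtain ⟨C, hC, h1, h2⟩ := hmixA
      have := phiD_length_mixed hC h1 h2
      omega
    · push_neg at hmixB hmixA
      have hpB : PhiD B Q = Q := phiD_pure (fun C hC => by
        by_cases h : C ∩ B = ∅
        · exact Or.inl h
        · exact Or.inr (hmixB C hC (Finset.nonempty_iff_ne_empty.2 h)))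
      have hpA : PhiD A Q = Q := phiD_pure (fun C hC => by
        by_cases h : C ∩ A = ∅
        · exact Or.inl h
        · exact Or.inr (hmixA C hC (Finset.nonempty_iff_ne_empty.2 h)))
      rw [hpB] at hkeyB
      rw [hpA] at hkeyA
      exact hnequiv (ospEquiv_trans hkeyB (ospEquiv_symm hkeyA))


/-- If `F = L ++ A :: B :: R` is a stable ordered set partition of `[n]`, the transposed
partition `F′ = L ++ B :: A :: R` is stable, and `F` is not equivalent to `F′`, then the
merged partition `F″ = L ++ (A ∪ B) :: R` is stable. -/
theorem merge_stable_of_swap_not_equiv (n : ℕ) (𝓕 : Set Fence)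
    (hdown : IsFenceDownset n 𝓕)
    (L R : List (Finset ℕ)) (A B : Finset ℕ)
    (hOSP : IsOSP (Finset.Icc 1 n) (L ++ A :: B :: R))
    (hstab : StableOSP 𝓕 (Finset.Icc 1 n) (L ++ A :: B :: R))
    (hstab' : StableOSP 𝓕 (Finset.Icc 1 n) (L ++ B :: A :: R))
    (hnequiv : ¬ OSPEquiv 𝓕 (L ++ A :: B :: R) (L ++ B :: A :: R)) :
    StableOSP 𝓕 (Finset.Icc 1 n) (L ++ (A ∪ B) :: R) :=
  aux_merge_stable n 𝓕 hdown L R A B hOSP hstab hstab' hnequiv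
end

section
/- For every n ≥ 2, writing P_n = (x₁,…,x_N), the sequence P_n contains every ordered set partition of [n] exactly once; any two consecutive entries of P_n differ in merging two consecutive blocks into one or splitting one block into two consecutive blocks; the first and last entries of P_n are ordered set partitions into n singleton blocks; and for all i ∈ [N], if x_i = A₁|A₂|…|A_k then x_{N+1−i} = A_k|…|A₂|A₁, i.e., x_{N+1−i} is obtained from x_i by reversing the order of its blocks. -/
/-- `Q` is obtained from `P` by merging two consecutive blocks into one (equivalently,
`P` is obtained from `Q` by splitting one block into two consecutive blocks). -/
def MergeStep (P Q : List (Finset ℕ)) : Prop :=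
  ∃ (L : List (Finset ℕ)) (A B : Finset ℕ) (R : List (Finset ℕ)),
    P = L ++ A :: B :: R ∧ Q = L ++ (A ∪ B) :: R

/-- The sequence `c⃗(x) = (č₀(x), ĉ₁(x), č₁(x), ĉ₂(x), č₂(x), …, ĉ_k(x), č_k(x))`
of ordered set partitions obtained from `x` by inserting the new element `nv` as a
singleton block between two blocks or joining it with an existing block, alternatingly
from left to right. -/
def cvec (nv : ℕ) : List (Finset ℕ) → List (List (Finset ℕ))
  | [] => [[({nv} : Finset ℕ)]]
  | B :: r =>
      (({nv} : Finset ℕ) :: B :: r) :: (insert nv B :: r) ::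
        (cvec nv r).map (fun P => B :: P)

/-- The zigzag sequence `P_n` of ordered set partitions of `[n]`:
`P₂ = (1|2, 12, 2|1)` and
`P_{n+1} = (c⃖(x₁), c⃗(x₂), c⃖(x₃), c⃗(x₄), …, c⃖(x_N))` where `P_n = (x₁, …, x_N)`
and `c⃖(x)` denotes the reversal of `c⃗(x)`. -/
def Pseq : ℕ → List (List (Finset ℕ))
  | 0 => []
  | 1 => []
  | 2 => [[{1}, {2}], [({1, 2} : Finset ℕ)], [{2}, {1}]]
  | m + 3 =>
      (((Pseq (m + 2)).mapIdx fun i x =>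
          if i % 2 = 0 then (cvec (m + 3) x).reverse else cvec (m + 3) x)).flatten

/-- Blocks of `x` are nonempty and avoid `nv`. -/
def Good (nv : ℕ) (x : List (Finset ℕ)) : Prop := ∀ B ∈ x, B.Nonempty ∧ nv ∉ B

/-- Delete `nv` from an ordered set partition. -/
def del (nv : ℕ) (Q : List (Finset ℕ)) : List (Finset ℕ) :=
  (Q.map (fun B => B.erase nv)).filter (fun B => B ≠ ∅)

lemma cvec_ne_nil (nv : ℕ) (x : List (Finset ℕ)) : cvec nv x ≠ [] := by
  cases x <;> simp [cvec]

lemma cvec_head? (nv : ℕ) (x : List (Finset ℕ)) :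
    (cvec nv x).head? = some (({nv} : Finset ℕ) :: x) := by
  cases x <;> rfl

lemma del_cons (nv : ℕ) (B : Finset ℕ) (Q : List (Finset ℕ)) :
    del nv (B :: Q) = if B.erase nv = ∅ then del nv Q else B.erase nv :: del nv Q := by
  simp only [del, List.map_cons, List.filter_cons]
  split_ifs with h <;> simp_all

lemma cvec_getLast? (nv : ℕ) (x : List (Finset ℕ)) :
    (cvec nv x).getLast? = some (x ++ [({nv} : Finset ℕ)]) := by
  induction x with
  | nil => rfl
  | cons B r ih =>
    obtain ⟨c, cs, hc⟩ : ∃ c cs, cvec nv r = c :: cs := by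
      cases r <;> exact ⟨_, _, rfl⟩
    rw [cvec, hc, List.map_cons, List.getLast?_cons_cons, List.getLast?_cons_cons,
      ← List.map_cons, ← hc, List.getLast?_map, ih]
    rfl

lemma del_id (nv : ℕ) (x : List (Finset ℕ)) (hx : Good nv x) : del nv x = x := by
  induction x with
  | nil => rfl
  | cons B r ih =>
    obtain ⟨h1, h2⟩ := hx B (by simp)
    rw [del_cons, if_neg, Finset.erase_eq_of_notMem h2, ih (fun C hC => hx C (by simp [hC]))]
    rw [Finset.erase_eq_of_notMem h2]
    exact fun h => by simp [h] at h1

lemma del_cons_avoid (nv : ℕ) (B : Finset ℕ) (Q : List (Finset ℕ))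
    (h1 : B.Nonempty) (h2 : nv ∉ B) : del nv (B :: Q) = B :: del nv Q := by
  rw [del_cons, Finset.erase_eq_of_notMem h2, if_neg (fun h => by simp [h] at h1)]

lemma del_of_mem_cvec (nv : ℕ) (x : List (Finset ℕ)) (hx : Good nv x) :
    ∀ Q ∈ cvec nv x, del nv Q = x := by
  induction x with
  | nil =>
    intro Q hQ
    simp only [cvec, List.mem_singleton] at hQ
    subst hQ
    simp [del_cons, del]
  | cons B r ih =>
    intro Q hQ
    obtain ⟨hBne, hBnv⟩ := hx B (by simp)
    have hr : Good nv r := fun C hC => hx C (by simp [hC])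
    rw [cvec] at hQ
    simp only [List.mem_cons, List.mem_map] at hQ
    rcases hQ with rfl | rfl | ⟨P, hP, rfl⟩
    · rw [del_cons, if_pos (by simp)]
      exact del_id nv (B :: r) hx
    · rw [del_cons, Finset.erase_insert hBnv, if_neg (fun h => by simp [h] at hBne),
        del_id nv r hr]
    · rw [del_cons_avoid nv B P hBne hBnv, ih hr P hP]

lemma mem_cvec_del (nv : ℕ) :
    ∀ Q : List (Finset ℕ), (∀ B ∈ Q, B.Nonempty) → Q.Pairwise Disjoint →
      (∃ B ∈ Q, nv ∈ B) → Q ∈ cvec nv (del nv Q) := by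
  intro Q
  induction Q with
  | nil => rintro _ _ ⟨B, hB, _⟩; simp at hB
  | cons B r ih =>
    intro hne hpw hmem
    by_cases hB : nv ∈ B
    · by_cases hBs : B = {nv}
      · subst hBs
        have hrnv : ∀ C ∈ r, nv ∉ C := fun C hC h =>
          Finset.disjoint_left.1 ((List.pairwise_cons.1 hpw).1 C hC)
            (Finset.mem_singleton_self nv) h
        rw [del_cons, if_pos (by simp), del_id nv r
          (fun C hC => ⟨hne C (by simp [hC]), hrnv C hC⟩)]
        cases r with
        | nil => simp [cvec]
        | cons C s => rw [cvec]; exact List.mem_cons_self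
      · -- B = insert nv (B.erase nv), B.erase nv nonempty
        have hBe : B.erase nv ≠ ∅ := by
          intro h
          apply hBs
          ext a
          simp only [Finset.mem_singleton]
          constructor
          · intro ha
            by_contra hne2
            have : a ∈ B.erase nv := Finset.mem_erase.2 ⟨hne2, ha⟩
            simp [h] at this
          · rintro rfl; exact hB
        rw [del_cons, if_neg hBe]
        have hrnv : ∀ C ∈ r, nv ∉ C := by
          intro C hC h
          exact Finset.disjoint_left.1 ((List.pairwise_cons.1 hpw).1 C hC) hB h
        rw [del_id nv r (fun C hC => ⟨hne C (by simp [hC]), hrnv C hC⟩)]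
        rw [cvec]
        have : insert nv (B.erase nv) = B := Finset.insert_erase hB
        simp [this]
    · have hmem' : ∃ C ∈ r, nv ∈ C := by
        rcases hmem with ⟨C, hC, hnvC⟩
        rcases List.mem_cons.1 hC with rfl | hC'
        · exact absurd hnvC hB
        · exact ⟨C, hC', hnvC⟩
      rw [del_cons_avoid nv B r (hne B (by simp)) hB, cvec]
      have := ih (fun C hC => hne C (by simp [hC])) (List.pairwise_cons.1 hpw).2 hmem'
      simp only [List.mem_cons, List.mem_map]
      exact Or.inr (Or.inr ⟨r, this, rfl⟩)

lemma cvec_nodup (nv : ℕ) (x : List (Finset ℕ)) (hx : Good nv x) :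
    (cvec nv x).Nodup := by
  induction x with
  | nil => simp [cvec]
  | cons B r ih =>
    obtain ⟨hBne, hBnv⟩ := hx B (by simp)
    have hr : Good nv r := fun C hC => hx C (by simp [hC])
    rw [cvec]
    refine List.nodup_cons.2 ⟨?_, List.nodup_cons.2 ⟨?_, ?_⟩⟩
    · simp only [List.mem_cons, List.mem_map, not_or]
      refine ⟨?_, ?_⟩
      · intro h
        have := congrArg List.length h
        simp at this
      · rintro ⟨P, _, hP⟩
        rw [List.cons.injEq] at hP
        exact hBnv (by rw [hP.1]; simp)
    · simp only [List.mem_map, not_exists]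
      rintro P ⟨_, hP⟩
      rw [List.cons.injEq] at hP
      exact hBnv (by rw [hP.1]; simp)
    · exact (List.nodup_map_iff (fun P Q h => by simpa using congrArg List.tail h)).2 (ih hr)

lemma isOSP_empty_iff (P : List (Finset ℕ)) : IsOSP ∅ P ↔ P = [] := by
  constructor
  · rintro ⟨h1, _, h3⟩
    cases P with
    | nil => rfl
    | cons B r =>
      obtain ⟨a, ha⟩ := h1 B (by simp)
      exact absurd ((h3 a).2 ⟨B, by simp, ha⟩) (by simp)
  · rintro rfl
    exact ⟨by simp, by simp, by simp⟩

lemma isOSP_tail {S : Finset ℕ} {B : Finset ℕ} {r : List (Finset ℕ)}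
    (h : IsOSP S (B :: r)) : IsOSP (S \ B) r := by
  obtain ⟨h1, h2, h3⟩ := h
  refine ⟨fun C hC => h1 C (by simp [hC]), (List.pairwise_cons.1 h2).2, fun a => ?_⟩
  simp only [Finset.mem_sdiff, h3 a]
  constructor
  · rintro ⟨⟨C, hC, haC⟩, haB⟩
    rcases List.mem_cons.1 hC with rfl | hC'
    · exact absurd haC haB
    · exact ⟨C, hC', haC⟩
  · rintro ⟨C, hC, haC⟩
    refine ⟨⟨C, by simp [hC], haC⟩, fun haB =>
      Finset.disjoint_left.1 ((List.pairwise_cons.1 h2).1 C hC) haB haC⟩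

lemma isOSP_subset {S : Finset ℕ} {P : List (Finset ℕ)} (h : IsOSP S P)
    {B : Finset ℕ} (hB : B ∈ P) : B ⊆ S :=
  fun a ha => (h.2.2 a).2 ⟨B, hB, ha⟩

lemma cvec_isOSP (nv : ℕ) :
    ∀ (x : List (Finset ℕ)) (S : Finset ℕ), IsOSP S x → nv ∉ S →
      ∀ Q ∈ cvec nv x, IsOSP (insert nv S) Q := by
  intro x
  induction x with
  | nil =>
    intro S hS hnv Q hQ
    simp only [cvec, List.mem_singleton] at hQ
    subst hQ
    have : S = ∅ := by
      by_contra h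
      obtain ⟨a, ha⟩ := Finset.nonempty_iff_ne_empty.2 h
      exact absurd ((hS.2.2 a).1 ha) (by simp)
    subst this
    exact ⟨by simp, by simp, by simp⟩
  | cons B r ih =>
    intro S hS hnv Q hQ
    have hBS : B ⊆ S := isOSP_subset hS (by simp)
    have hBnv : nv ∉ B := fun h => hnv (hBS h)
    have hrS : ∀ C ∈ r, C ⊆ S := fun C hC => isOSP_subset hS (by simp [hC])
    have hrnv : ∀ C ∈ r, nv ∉ C := fun C hC h => hnv (hrS C hC h)
    obtain ⟨h1, h2, h3⟩ := hS
    rw [cvec] at hQ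
    simp only [List.mem_cons, List.mem_map] at hQ
    rcases hQ with rfl | rfl | ⟨P, hP, rfl⟩
    · refine ⟨?_, ?_, ?_⟩
      · intro C hC
        rcases List.mem_cons.1 hC with rfl | hC'
        · exact ⟨nv, by simp⟩
        · exact h1 C hC'
      · refine List.pairwise_cons.2 ⟨?_, h2⟩
        intro C hC
        simp only [Finset.disjoint_left, Finset.mem_singleton]
        rintro a rfl
        rcases List.mem_cons.1 hC with rfl | hC'
        · exact hBnv
        · exact hrnv C hC'
      · intro a
        simp only [Finset.mem_insert, h3 a, List.mem_cons]
        constructor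
        · rintro (ha | ⟨C, hC, haC⟩)
          · exact ⟨{nv}, Or.inl rfl, by simp [ha]⟩
          · exact ⟨C, Or.inr hC, haC⟩
        · rintro ⟨C, rfl | hC, haC⟩
          · simp at haC; exact Or.inl haC
          · exact Or.inr ⟨C, hC, haC⟩
    · refine ⟨?_, ?_, ?_⟩
      · intro C hC
        rcases List.mem_cons.1 hC with rfl | hC'
        · exact ⟨nv, by simp⟩
        · exact h1 C (by simp [hC'])
      · refine List.pairwise_cons.2 ⟨?_, (List.pairwise_cons.1 h2).2⟩
        intro C hC
        simp only [Finset.disjoint_left, Finset.mem_insert]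
        rintro a (rfl | haB)
        · exact hrnv C hC
        · exact fun haC => Finset.disjoint_left.1 ((List.pairwise_cons.1 h2).1 C hC) haB haC
      · intro a
        simp only [Finset.mem_insert, h3 a, List.mem_cons]
        constructor
        · rintro (ha | ⟨C, hC | hC, haC⟩)
          · exact ⟨insert nv B, Or.inl rfl, by simp [ha]⟩
          · rw [hC] at haC
            exact ⟨insert nv B, Or.inl rfl, by simp [haC]⟩
          · exact ⟨C, Or.inr hC, haC⟩
        · rintro ⟨C, hC | hC, haC⟩
          · rw [hC] at haC
            rcases Finset.mem_insert.1 haC with rfl | haB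
            · exact Or.inl rfl
            · exact Or.inr ⟨B, Or.inl rfl, haB⟩
          · exact Or.inr ⟨C, Or.inr hC, haC⟩
    · have hP' : IsOSP (insert nv (S \ B)) P := ih (S \ B) (isOSP_tail ⟨h1, h2, h3⟩)
        (by simp [hnv]) P hP
      obtain ⟨g1, g2, g3⟩ := hP'
      refine ⟨?_, ?_, ?_⟩
      · intro C hC
        rcases List.mem_cons.1 hC with h | hC'
        · rw [h]
          exact h1 B (by simp)
        · exact g1 C hC'
      · refine List.pairwise_cons.2 ⟨?_, g2⟩
        intro C hC
        simp only [Finset.disjoint_left]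
        intro a haB haC
        have : a ∈ insert nv (S \ B) := (g3 a).2 ⟨C, hC, haC⟩
        rcases Finset.mem_insert.1 this with rfl | h
        · exact hBnv haB
        · exact (Finset.mem_sdiff.1 h).2 haB
      · intro a
        simp only [Finset.mem_insert, List.mem_cons]
        constructor
        · rintro (ha | haS)
          · rcases (g3 a).1 (by simp [ha]) with ⟨C, hC, hnvC⟩
            exact ⟨C, Or.inr hC, hnvC⟩
          · by_cases haB : a ∈ B
            · exact ⟨B, Or.inl rfl, haB⟩
            · rcases (g3 a).1 (by simp [haS, haB]) with ⟨C, hC, haC⟩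
              exact ⟨C, Or.inr hC, haC⟩
        · rintro ⟨C, hC | hC, haC⟩
          · rw [hC] at haC
            exact Or.inr (hBS haC)
          · rcases Finset.mem_insert.1 ((g3 a).2 ⟨C, hC, haC⟩) with rfl | h
            · exact Or.inl rfl
            · exact Or.inr (Finset.mem_sdiff.1 h).1

lemma del_isOSP {nv : ℕ} {S : Finset ℕ} (hnv : nv ∉ S) {Q : List (Finset ℕ)}
    (hQ : IsOSP (insert nv S) Q) : IsOSP S (del nv Q) := by
  obtain ⟨h1, h2, h3⟩ := hQ
  refine ⟨?_, ?_, ?_⟩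
  · intro B hB
    simp only [del, List.mem_filter, decide_eq_true_eq] at hB
    exact Finset.nonempty_iff_ne_empty.2 hB.2
  · apply List.Pairwise.filter
    apply List.Pairwise.map
    · intro A C hAC
      exact Finset.disjoint_of_subset_left (Finset.erase_subset nv A)
        (Finset.disjoint_of_subset_right (Finset.erase_subset nv C) hAC)
    · exact h2
  · intro a
    constructor
    · intro haS
      have hanv : a ≠ nv := fun h => hnv (h ▸ haS)
      obtain ⟨B, hB, haB⟩ := (h3 a).1 (Finset.mem_insert_of_mem haS)
      refine ⟨B.erase nv, ?_, Finset.mem_erase.2 ⟨hanv, haB⟩⟩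
      simp only [del, List.mem_filter, List.mem_map, decide_eq_true_eq]
      exact ⟨⟨B, hB, rfl⟩, fun h => by
        have : a ∈ B.erase nv := Finset.mem_erase.2 ⟨hanv, haB⟩
        simp [h] at this⟩
    · rintro ⟨C, hC, haC⟩
      simp only [del, List.mem_filter, List.mem_map, decide_eq_true_eq] at hC
      obtain ⟨⟨B, hB, rfl⟩, _⟩ := hC
      obtain ⟨hanv, haB⟩ := Finset.mem_erase.1 haC
      rcases Finset.mem_insert.1 ((h3 a).2 ⟨B, hB, haB⟩) with h | h
      · exact absurd h hanv
      · exact h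

lemma mergeStep_cons {P Q : List (Finset ℕ)} (B : Finset ℕ) (h : MergeStep P Q) :
    MergeStep (B :: P) (B :: Q) := by
  obtain ⟨L, A, C, R, hP, hQ⟩ := h
  exact ⟨B :: L, A, C, R, by simp [hP], by simp [hQ]⟩

lemma mergeStep_append {P Q : List (Finset ℕ)} (B : Finset ℕ) (h : MergeStep P Q) :
    MergeStep (P ++ [B]) (Q ++ [B]) := by
  obtain ⟨L, A, C, R, hP, hQ⟩ := h
  exact ⟨L, A, C, R ++ [B], by simp [hP], by simp [hQ]⟩

lemma cvec_chain' (nv : ℕ) (x : List (Finset ℕ)) :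
    List.Chain' (fun P Q => MergeStep P Q ∨ MergeStep Q P) (cvec nv x) := by
  induction x with
  | nil => simp [cvec, List.Chain']
  | cons B r ih =>
    rw [cvec]
    obtain ⟨c, cs, hc⟩ : ∃ c cs, cvec nv r = c :: cs := by
      cases r <;> exact ⟨_, _, rfl⟩
    have hhead : c = ({nv} : Finset ℕ) :: r := by
      have := cvec_head? nv r
      rw [hc] at this
      simpa using this
    rw [hc, hhead, List.map_cons]
    refine List.isChain_cons_cons.2 ⟨?_, List.isChain_cons_cons.2 ⟨?_, ?_⟩⟩
    · exact Or.inl ⟨[], {nv}, B, r, rfl, by simp [Finset.insert_eq, -Finset.singleton_union]⟩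
    · exact Or.inr ⟨[], B, {nv}, r, rfl, by simp [Finset.union_comm, Finset.insert_eq, -Finset.union_singleton, -Finset.singleton_union]⟩
    · have : List.Chain' (fun P Q => MergeStep P Q ∨ MergeStep Q P)
          (List.map (fun P => B :: P) (cvec nv r)) := by
        rw [List.Chain', List.isChain_map]
        exact List.IsChain.imp (fun a b h => h.imp (mergeStep_cons B) (mergeStep_cons B)) ih
      rw [hc, hhead, List.map_cons] at this
      exact this

lemma cvec_append_singleton (nv : ℕ) (y : List (Finset ℕ)) (B : Finset ℕ) :
    cvec nv (y ++ [B]) =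
      (cvec nv y).map (fun P => P ++ [B]) ++
        [y ++ [insert nv B], y ++ [B, ({nv} : Finset ℕ)]] := by
  induction y with
  | nil => simp [cvec]
  | cons C s ih =>
    rw [List.cons_append, cvec, cvec, ih]
    simp [List.map_map, Function.comp]

lemma cvec_reverse (nv : ℕ) (x : List (Finset ℕ)) :
    (cvec nv x.reverse).reverse = (cvec nv x).map (fun P => P.reverse) := by
  induction x with
  | nil => simp [cvec]
  | cons B r ih =>
    rw [List.reverse_cons, cvec_append_singleton, cvec]
    simp only [List.map_cons, List.reverse_append, List.reverse_cons, List.map_map]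
    rw [← List.map_reverse, ih]
    simp [List.map_map, Function.comp_def]

lemma isOSP_singleton {a : ℕ} {P : List (Finset ℕ)} (h : IsOSP {a} P) : P = [{a}] := by
  obtain ⟨h1, h2, h3⟩ := h
  have hall : ∀ B ∈ P, B = ({a} : Finset ℕ) := fun B hB =>
    (Finset.Nonempty.subset_singleton_iff (h1 B hB)).1 (isOSP_subset ⟨h1, h2, h3⟩ hB)
  cases P with
  | nil => simpa using (h3 a).1 (by simp)
  | cons B r =>
    cases r with
    | nil => rw [hall B (by simp)]
    | cons C s =>
      have hB := hall B (by simp)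
      have hC := hall C (by simp)
      have hd := (List.pairwise_cons.1 h2).1 C (by simp)
      rw [hB, hC] at hd
      simp [disjoint_self] at hd

lemma cvec_length (nv : ℕ) (x : List (Finset ℕ)) :
    (cvec nv x).length = 2 * x.length + 1 := by
  induction x with
  | nil => rfl
  | cons B r ih => simp [cvec, ih]; ring

lemma sum_odd_parity : ∀ l : List ℕ, (∀ a ∈ l, a % 2 = 1) → l.sum % 2 = l.length % 2 := by
  intro l
  induction l with
  | nil => simp
  | cons a t ih =>
    intro h
    have ha := h a (by simp)
    have ht := ih (fun b hb => h b (by simp [hb]))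
    simp only [List.sum_cons, List.length_cons]
    omega

/-- One zigzag pass. -/
def zig (nv : ℕ) (xs : List (List (Finset ℕ))) : List (List (Finset ℕ)) :=
  (xs.mapIdx fun i x => if i % 2 = 0 then (cvec nv x).reverse else cvec nv x).flatten

lemma mem_zig {nv : ℕ} {Q : List (Finset ℕ)} {xs : List (List (Finset ℕ))} :
    Q ∈ zig nv xs ↔ ∃ i, ∃ h : i < xs.length, Q ∈ cvec nv xs[i] := by
  unfold zig
  rw [List.mem_flatten]
  constructor
  · rintro ⟨l, hl, hQl⟩
    obtain ⟨i, hi, hil⟩ := List.getElem_of_mem hl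
    rw [List.getElem_mapIdx] at hil
    have hi' : i < xs.length := by simpa using hi
    refine ⟨i, hi', ?_⟩
    by_cases h : i % 2 = 0
    · rw [if_pos h] at hil
      rw [← hil, List.mem_reverse] at hQl
      exact hQl
    · rw [if_neg h] at hil
      exact hil ▸ hQl
  · rintro ⟨i, hi, hQ⟩
    have hi' : i < (xs.mapIdx fun i x =>
        if i % 2 = 0 then (cvec nv x).reverse else cvec nv x).length := by
      simpa using hi
    refine ⟨_, List.getElem_mem hi', ?_⟩
    rw [List.getElem_mapIdx]
    by_cases h : i % 2 = 0
    · rw [if_pos h, List.mem_reverse]; exact hQ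
    · rw [if_neg h]; exact hQ

lemma zig_isOSP {nv : ℕ} {S : Finset ℕ} {xs : List (List (Finset ℕ))}
    (hxs : ∀ x ∈ xs, IsOSP S x) (hnv : nv ∉ S) :
    ∀ Q ∈ zig nv xs, IsOSP (insert nv S) Q := by
  intro Q hQ
  obtain ⟨i, hi, hQ⟩ := mem_zig.1 hQ
  exact cvec_isOSP nv xs[i] S (hxs _ (List.getElem_mem hi)) hnv Q hQ

lemma zig_complete {nv : ℕ} {S : Finset ℕ} {xs : List (List (Finset ℕ))}
    (hnv : nv ∉ S) (hcomp : ∀ x, IsOSP S x → x ∈ xs)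
    {Q : List (Finset ℕ)} (hQ : IsOSP (insert nv S) Q) : Q ∈ zig nv xs := by
  have hdel : del nv Q ∈ xs := hcomp _ (del_isOSP hnv hQ)
  obtain ⟨i, hi, hix⟩ := List.getElem_of_mem hdel
  rw [mem_zig]
  refine ⟨i, hi, ?_⟩
  rw [hix]
  exact mem_cvec_del nv Q hQ.1 hQ.2.1 ((hQ.2.2 nv).1 (Finset.mem_insert_self nv S))

lemma zig_nodup {nv : ℕ} {xs : List (List (Finset ℕ))}
    (hGood : ∀ x ∈ xs, Good nv x) (hnd : xs.Nodup) : (zig nv xs).Nodup := by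
  unfold zig
  rw [List.nodup_flatten]
  constructor
  · intro l hl
    obtain ⟨i, hi, hil⟩ := List.getElem_of_mem hl
    rw [List.getElem_mapIdx] at hil
    have hi' : i < xs.length := by simpa using hi
    have := cvec_nodup nv xs[i] (hGood _ (List.getElem_mem hi'))
    by_cases h : i % 2 = 0
    · rw [if_pos h] at hil; rw [← hil]; exact List.nodup_reverse.2 this
    · rw [if_neg h] at hil; rw [← hil]; exact this
  · rw [List.pairwise_iff_getElem]
    intro i j hi hj hij Q hQi hQj
    have hi' : i < xs.length := by simpa using hi
    have hj' : j < xs.length := by simpa using hj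
    have hQi' : Q ∈ cvec nv xs[i] := by
      rw [List.getElem_mapIdx] at hQi
      by_cases h : i % 2 = 0
      · rw [if_pos h, List.mem_reverse] at hQi; exact hQi
      · rw [if_neg h] at hQi; exact hQi
    have hQj' : Q ∈ cvec nv xs[j] := by
      rw [List.getElem_mapIdx] at hQj
      by_cases h : j % 2 = 0
      · rw [if_pos h, List.mem_reverse] at hQj; exact hQj
      · rw [if_neg h] at hQj; exact hQj
    have e1 := del_of_mem_cvec nv xs[i] (hGood _ (List.getElem_mem hi')) Q hQi'
    have e2 := del_of_mem_cvec nv xs[j] (hGood _ (List.getElem_mem hj')) Q hQj'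
    exact (List.pairwise_iff_getElem.1 hnd i j hi' hj' hij) (e1 ▸ e2)

lemma zig_chain' {nv : ℕ} {xs : List (List (Finset ℕ))}
    (hch : List.Chain' (fun P Q => MergeStep P Q ∨ MergeStep Q P) xs) :
    List.Chain' (fun P Q => MergeStep P Q ∨ MergeStep Q P) (zig nv xs) := by
  unfold zig
  have hnil : [] ∉ xs.mapIdx fun i x =>
      if i % 2 = 0 then (cvec nv x).reverse else cvec nv x := by
    intro h
    obtain ⟨i, hi, hil⟩ := List.getElem_of_mem h
    rw [List.getElem_mapIdx] at hil
    by_cases hp : i % 2 = 0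
    · rw [if_pos hp] at hil
      exact cvec_ne_nil nv _ (by simpa using congrArg List.reverse hil)
    · rw [if_neg hp] at hil
      exact cvec_ne_nil nv _ hil
  rw [List.Chain', List.isChain_flatten hnil]
  constructor
  · intro l hl
    obtain ⟨i, hi, hil⟩ := List.getElem_of_mem hl
    rw [List.getElem_mapIdx] at hil
    subst hil
    by_cases hp : i % 2 = 0
    · rw [if_pos hp, List.isChain_reverse]
      exact List.IsChain.imp (fun a b h => h.symm) (cvec_chain' nv _)
    · rw [if_neg hp]
      exact cvec_chain' nv _
  · rw [List.isChain_iff_getElem]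
    intro i hlen
    have hlen0 : i < xs.length - 1 := by simp at hlen; omega
    have hlen' : i + 1 < xs.length := by omega
    have hi : i < xs.length := by omega
    simp only [List.get_eq_getElem, List.getElem_mapIdx]
    have hR : MergeStep xs[i] xs[i + 1] ∨ MergeStep xs[i + 1] xs[i] := by
      have := List.isChain_iff_getElem.1 hch i hlen'
      simpa using this
    by_cases hp : i % 2 = 0
    · have hp1 : ¬ (i + 1) % 2 = 0 := by omega
      rw [if_pos hp, if_neg hp1]
      intro a ha b hb
      rw [List.getLast?_reverse, cvec_head? ] at ha
      rw [cvec_head?] at hb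
      simp only [Option.mem_def, Option.some.injEq] at ha hb
      subst ha; subst hb
      exact hR.imp (mergeStep_cons _) (mergeStep_cons _)
    · have hp1 : (i + 1) % 2 = 0 := by omega
      rw [if_neg hp, if_pos hp1]
      intro a ha b hb
      rw [cvec_getLast?] at ha
      rw [List.head?_reverse, cvec_getLast?] at hb
      simp only [Option.mem_def, Option.some.injEq] at ha hb
      subst ha; subst hb
      exact hR.imp (mergeStep_append _) (mergeStep_append _)

lemma zig_head? {nv : ℕ} {xs : List (List (Finset ℕ))} {x0 : List (Finset ℕ)}
    (h : xs.head? = some x0) :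
    (zig nv xs).head? = some (x0 ++ [({nv} : Finset ℕ)]) := by
  cases xs with
  | nil => simp at h
  | cons y t =>
    have : y = x0 := by simpa using h
    subst this
    unfold zig
    rw [List.mapIdx_cons, List.flatten_cons, if_pos (by norm_num),
      List.head?_append_of_ne_nil _ (by simp [cvec_ne_nil]),
      List.head?_reverse, cvec_getLast?]

lemma zig_length_parity {nv : ℕ} {xs : List (List (Finset ℕ))}
    (h : xs.length % 2 = 1) : (zig nv xs).length % 2 = 1 := by
  unfold zig
  rw [List.length_flatten, sum_odd_parity]
  · simpa using h
  · intro a ha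
    simp only [List.mem_map] at ha
    obtain ⟨l, hl, rfl⟩ := ha
    obtain ⟨i, hi, hil⟩ := List.getElem_of_mem hl
    rw [List.getElem_mapIdx] at hil
    subst hil
    by_cases hp : i % 2 = 0
    · rw [if_pos hp]; simp [cvec_length]
    · rw [if_neg hp]; simp [cvec_length]

lemma zig_reverse {nv : ℕ} {xs : List (List (Finset ℕ))}
    (hlen : xs.length % 2 = 1)
    (hrev : xs.reverse = xs.map (fun P => P.reverse)) :
    (zig nv xs).reverse = (zig nv xs).map (fun P => P.reverse) := by
  unfold zig
  rw [List.reverse_flatten, List.map_flatten]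
  congr 1
  apply List.ext_getElem
  · simp
  · intro i h1 h2
    have hx : i < xs.length := by simpa using h2
    have hx' : xs.length - 1 - i < xs.length := by omega
    simp only [List.getElem_reverse, List.length_map, List.length_mapIdx, List.getElem_map,
      List.getElem_mapIdx]
    have hxsrev : xs[xs.length - 1 - i] = (xs[i]).reverse := by
      have h3 : i < xs.reverse.length := by simpa using hx
      have h4 : i < (xs.map (fun P => P.reverse)).length := by simpa using hx
      have := List.getElem_of_eq hrev h3
      simpa [List.getElem_reverse] using this
    have hlen1 : 1 ≤ xs.length := by omega
    by_cases hp : i % 2 = 0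
    · rw [if_pos hp, if_pos (by omega : (xs.length - 1 - i) % 2 = 0), hxsrev,
        List.reverse_reverse, List.map_reverse, ← cvec_reverse, List.reverse_reverse]
    · rw [if_neg hp, if_neg (by omega : ¬ (xs.length - 1 - i) % 2 = 0), hxsrev, cvec_reverse]

/-- The master induction. -/
lemma Pseq_master (n : ℕ) (hn : 2 ≤ n) :
    (∀ Q ∈ Pseq n, IsOSP (Finset.Icc 1 n) Q) ∧
    (∀ Q : List (Finset ℕ), IsOSP (Finset.Icc 1 n) Q → Q ∈ Pseq n) ∧
    (Pseq n).Nodup ∧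
    List.Chain' (fun P Q => MergeStep P Q ∨ MergeStep Q P) (Pseq n) ∧
    (∃ x, (Pseq n).head? = some x ∧ ∀ B ∈ x, B.card = 1) ∧
    ((Pseq n).reverse = (Pseq n).map (fun P => P.reverse)) ∧
    (Pseq n).length % 2 = 1 := by
  induction n, hn using Nat.le_induction with
  | base =>
    have hIcc : Finset.Icc 1 2 = ({1, 2} : Finset ℕ) := by decide
    refine ⟨?_, ?_, ?_, ?_, ?_, ?_, ?_⟩
    · intro Q hQ
      simp only [Pseq, List.mem_cons, List.not_mem_nil, or_false] at hQ
      rcases hQ with rfl | rfl | rfl <;>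
        refine ⟨by decide, by decide, fun x => ?_⟩ <;>
          · simp only [hIcc, List.mem_cons, List.not_mem_nil] <;> constructor
            · intro h; fin_cases h <;> simp
            · rintro ⟨B, hB, hxB⟩
              simp only [List.not_mem_nil, or_false] at hB
              rcases hB with rfl | rfl <;> simp_all <;> omega
    · intro Q hQ
      have h2 : Finset.Icc 1 2 = insert 2 ({1} : Finset ℕ) := by decide
      have hnv : (2 : ℕ) ∉ ({1} : Finset ℕ) := by decide
      have hdel : IsOSP {1} (del 2 Q) := del_isOSP hnv (h2 ▸ hQ)
      have hmem : Q ∈ cvec 2 (del 2 Q) := by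
        apply mem_cvec_del 2 Q hQ.1 hQ.2.1
        obtain ⟨B, hB, h2B⟩ := (hQ.2.2 2).1 (by simp [hIcc])
        exact ⟨B, hB, h2B⟩
      rw [isOSP_singleton hdel] at hmem
      simp only [cvec, List.mem_cons, List.mem_map, List.not_mem_nil] at hmem
      have hins : insert 2 ({1} : Finset ℕ) = ({1, 2} : Finset ℕ) := by decide
      simp only [Pseq, List.mem_cons, List.not_mem_nil, or_false]
      rcases hmem with rfl | rfl | ⟨a, ha, rfl⟩
      · exact Or.inr (Or.inr rfl)
      · exact Or.inr (Or.inl (by rw [← hins]))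
      · simp only [or_false] at ha
        subst ha
        exact Or.inl rfl
    · refine List.nodup_cons.2 ⟨?_, List.nodup_cons.2 ⟨?_, by simp⟩⟩ <;> decide
    · refine List.isChain_cons_cons.2 ⟨?_, List.isChain_cons_cons.2 ⟨?_, List.isChain_singleton _⟩⟩
      · exact Or.inl ⟨[], {1}, {2}, [], rfl, by decide⟩
      · exact Or.inr ⟨[], {2}, {1}, [], rfl, by decide⟩
    · exact ⟨[{1}, {2}], rfl, by decide⟩
    · rfl
    · rfl
  | succ k hk ih =>
    obtain ⟨m, rfl⟩ : ∃ m, k = m + 2 := ⟨k - 2, by omega⟩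
    obtain ⟨iha, ihb, ihc, ihd, ⟨x0, hx0, hx0c⟩, ihf, ihg⟩ := ih
    have hzig : Pseq (m + 2 + 1) = zig (m + 3) (Pseq (m + 2)) := rfl
    have hIcc : Finset.Icc 1 (m + 2 + 1) = insert (m + 3) (Finset.Icc 1 (m + 2)) := by
      ext a
      simp only [Finset.mem_Icc, Finset.mem_insert]
      omega
    have hnvS : (m + 3) ∉ Finset.Icc 1 (m + 2) := by simp [Finset.mem_Icc]
    have hGood : ∀ x ∈ Pseq (m + 2), Good (m + 3) x := by
      intro x hx B hB
      have h := iha x hx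
      refine ⟨h.1 B hB, fun hm => ?_⟩
      have := isOSP_subset h hB hm
      simp [Finset.mem_Icc] at this
    rw [hzig, hIcc]
    refine ⟨zig_isOSP iha hnvS, fun Q hQ => zig_complete hnvS ihb hQ,
      zig_nodup hGood ihc, zig_chain' ihd,
      ⟨x0 ++ [{m + 3}], zig_head? hx0, ?_⟩, zig_reverse ihg ihf, zig_length_parity ihg⟩
    intro B hB
    rcases List.mem_append.1 hB with h | h
    · exact hx0c B h
    · simp only [List.mem_singleton] at h
      subst h
      simp

/-- For every `n ≥ 2`, the sequence `P_n` contains every ordered set partition of `[n]`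
exactly once; consecutive entries differ in merging two consecutive blocks or splitting
one block into two; the first and last entries are partitions into `n` singleton blocks;
and the entry at position `N+1−i` is obtained from the entry at position `i` by
reversing the order of its blocks. -/
theorem Pseq_properties (n : ℕ) (hn : 2 ≤ n) :
    (∀ Q ∈ Pseq n, IsOSP (Finset.Icc 1 n) Q) ∧
    (∀ Q : List (Finset ℕ), IsOSP (Finset.Icc 1 n) Q → Q ∈ Pseq n) ∧
    (Pseq n).Nodup ∧
    List.Chain' (fun P Q => MergeStep P Q ∨ MergeStep Q P) (Pseq n) ∧
    (∃ x, (Pseq n).head? = some x ∧ ∀ B ∈ x, B.card = 1) ∧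
    (∃ x, (Pseq n).getLast? = some x ∧ ∀ B ∈ x, B.card = 1) ∧
    (∀ i < (Pseq n).length,
      (Pseq n).getD ((Pseq n).length - 1 - i) [] = ((Pseq n).getD i []).reverse) := by
  obtain ⟨ha, hb, hc, hd, ⟨x0, hx0, hx0c⟩, hf, hg⟩ := Pseq_master n hn
  refine ⟨ha, hb, hc, hd, ⟨x0, hx0, hx0c⟩, ?_, ?_⟩
  · refine ⟨x0.reverse, ?_, fun B hB => hx0c B (List.mem_reverse.1 hB)⟩
    rw [← List.head?_reverse, hf, List.head?_map, hx0]
    rfl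
  · intro i hi
    have hi' : (Pseq n).length - 1 - i < (Pseq n).length := by omega
    rw [List.getD_eq_getElem _ _ hi', List.getD_eq_getElem _ _ hi]
    have h3 : i < (Pseq n).reverse.length := by simpa using hi
    have := List.getElem_of_eq hf h3
    simpa [List.getElem_reverse] using this
end
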